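/- arXiv:2212.01616 — 7 statements merged into one kernel-verified Lean document; each statement's English description precedes it below -/
import Mathlib

section
/- Let G be a non-abelian finite simple group in which every maximal subgroup has even order. Then the non-generating graph of G is connected with diameter at most 3; that is, any two non-identity elements of G are joined in this graph by a path with at most 3 edges. -/
/-- The non-generating graph of a group `G`: vertex set the non-identity elements,
with `x` and `y` adjacent iff `⟨x, y⟩` is a proper subgroup of `G`. -/
def nonGenGraph (G : Type*) [Group G] : SimpleGraph {g : G // g ≠ 1} :=
  SimpleGraph.fromRel (fun x y => Subgroup.closure ({(x : G), (y : G)} : Set G) ≠ ⊤)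

section Aux

variable {G : Type*} [Group G]

lemma nonGen_walk_le_one (a b : {g : G // g ≠ 1})
    (hab : Subgroup.closure ({(a : G), (b : G)} : Set G) ≠ ⊤) :
    ∃ p : (nonGenGraph G).Walk a b, p.length ≤ 1 := by
  by_cases hEq : a = b
  · subst hEq; exact ⟨SimpleGraph.Walk.nil, by simp⟩
  · have hadj : (nonGenGraph G).Adj a b := ⟨hEq, Or.inl hab⟩
    exact ⟨SimpleGraph.Walk.cons hadj SimpleGraph.Walk.nil, by simp⟩

lemma comm_of_zpowers_top (c : G) (hc : Subgroup.zpowers c = ⊤) (a b : G) :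
    a * b = b * a := by
  obtain ⟨i, hi⟩ := hc ▸ Subgroup.mem_top a
  obtain ⟨j, hj⟩ := hc ▸ Subgroup.mem_top b
  replace hi : c ^ i = a := hi
  replace hj : c ^ j = b := hj
  rw [← hi, ← hj, ← zpow_add, ← zpow_add, add_comm]

/-- Two involutions never generate a nonabelian simple group. -/
lemma involutions_not_gen [IsSimpleGroup G]
    (hna : ∃ a b : G, a * b ≠ b * a) (t s : G)
    (ht : t * t = 1) (hs : s * s = 1) :
    Subgroup.closure ({t, s} : Set G) ≠ ⊤ := by
  obtain ⟨a₀, b₀, hab₀⟩ := hna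
  intro htop
  have ht' : t⁻¹ = t := by rw [inv_eq_iff_mul_eq_one, ht]
  have hs' : s⁻¹ = s := by rw [inv_eq_iff_mul_eq_one, hs]
  set r : G := t * s with hr
  have hrinv : r⁻¹ = s * t := by rw [hr, mul_inv_rev, ht', hs']
  -- conjugation by t and s inverts r
  have hconjt : t * r * t⁻¹ = r⁻¹ := by
    rw [ht', hrinv, hr, show t * (t * s) * t = t * t * (s * t) from by group, ht, one_mul]
  have hconjs : s * r * s⁻¹ = r⁻¹ := by
    rw [hs', hrinv, hr, show s * (t * s) * s = s * t * (s * s) from by group, hs, mul_one]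
  -- every element conjugates r into zpowers r
  have key : ∀ g : G, g * r * g⁻¹ ∈ Subgroup.zpowers r ∧ g⁻¹ * r * g ∈ Subgroup.zpowers r := by
    intro g
    have hg : g ∈ Subgroup.closure ({t, s} : Set G) := htop ▸ Subgroup.mem_top g
    induction hg using Subgroup.closure_induction with
    | mem z hz =>
      rcases hz with rfl | rfl
      · constructor
        · exact ⟨-1, by show r ^ (-1 : ℤ) = _; rw [zpow_neg_one, ← hconjt]⟩
        · exact ⟨-1, by show r ^ (-1 : ℤ) = _; rw [zpow_neg_one, ← hconjt, ht']⟩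
      · constructor
        · exact ⟨-1, by show r ^ (-1 : ℤ) = _; rw [zpow_neg_one, ← hconjs]⟩
        · exact ⟨-1, by show r ^ (-1 : ℤ) = _; rw [zpow_neg_one, ← hconjs, hs']⟩
    | one => simpa using ⟨Subgroup.mem_zpowers r, Subgroup.mem_zpowers r⟩
    | mul a b _ _ iha ihb =>
      obtain ⟨⟨m, hm⟩, ⟨m', hm'⟩⟩ := iha
      obtain ⟨⟨n, hn⟩, ⟨n', hn'⟩⟩ := ihb
      replace hm : r ^ m = a * r * a⁻¹ := hm
      replace hm' : r ^ m' = a⁻¹ * r * a := hm'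
      replace hn : r ^ n = b * r * b⁻¹ := hn
      replace hn' : r ^ n' = b⁻¹ * r * b := hn'
      constructor
      · refine ⟨m * n, ?_⟩
        show r ^ (m * n) = a * b * r * (a * b)⁻¹
        rw [show a * b * r * (a * b)⁻¹ = a * (b * r * b⁻¹) * a⁻¹ from by group,
          ← hn, ← conj_zpow, ← hm, ← zpow_mul]
      · refine ⟨n' * m', ?_⟩
        show r ^ (n' * m') = (a * b)⁻¹ * r * (a * b)
        rw [show (a * b)⁻¹ * r * (a * b) = b⁻¹ * (a⁻¹ * r * a) * b from by group,
          ← hm', show b⁻¹ * r ^ m' * b = b⁻¹ * r ^ m' * (b⁻¹)⁻¹ from by group,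
          ← conj_zpow, inv_inv, ← hn', ← zpow_mul]
    | inv a _ iha =>
      refine ⟨by simpa using iha.2, by simpa using iha.1⟩
  have hnorm : (Subgroup.zpowers r).Normal := by
    constructor
    intro n hn g
    obtain ⟨k, hk⟩ := hn
    replace hk : r ^ k = n := hk
    obtain ⟨m, hm⟩ := (key g).1
    replace hm : r ^ m = g * r * g⁻¹ := hm
    exact ⟨m * k, show r ^ (m * k) = g * n * g⁻¹ from by
      rw [zpow_mul, hm, conj_zpow, hk]⟩
  rcases hnorm.eq_bot_or_eq_top with hb | htp
  · -- r = 1, so s = t and G = ⟨t⟩ is cyclic, contradiction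
    have hr1 : r = 1 := by rwa [Subgroup.zpowers_eq_bot] at hb
    have hst : s = t := by
      have : s = t⁻¹ := eq_inv_of_mul_eq_one_right hr1
      rw [this, ht']
    have : Subgroup.zpowers t = ⊤ := by
      rw [← htop, hst, Set.pair_eq_singleton, Subgroup.zpowers_eq_closure]
    exact hab₀ (comm_of_zpowers_top t this a₀ b₀)
  · exact hab₀ (comm_of_zpowers_top r htp a₀ b₀)

/-- Every coatom of even order yields an involution inside it. -/
lemma exists_involution_of_even [Finite G] (M : Subgroup G) (hev : Even (Nat.card M)) :
    ∃ t : G, t ∈ M ∧ t ≠ 1 ∧ t * t = 1 := by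
  have h2 : (2 : ℕ) ∣ Nat.card M := hev.two_dvd
  haveI : Fact (Nat.Prime 2) := ⟨Nat.prime_two⟩
  obtain ⟨t', ht'⟩ := exists_prime_orderOf_dvd_card' (G := M) 2 h2
  refine ⟨(t' : G), t'.2, ?_, ?_⟩
  · intro h1
    have : t' = 1 := Subtype.ext h1
    rw [this, orderOf_one] at ht'
    omega
  · have : t' * t' = 1 := by
      have := pow_orderOf_eq_one t'
      rwa [ht', pow_two] at this
    calc (t' : G) * (t' : G) = ((t' * t' : M) : G) := by push_cast; ring
      _ = 1 := by rw [this]; rfl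

end Aux

/-- If `G` is a non-abelian finite simple group all of whose maximal subgroups have
even order, then the non-generating graph of `G` is connected with diameter at most `3`. -/
theorem nongen_simple_even_maximals_diameter_le_three (G : Type*) [Group G] [Finite G]
    [IsSimpleGroup G] (hna : ∃ a b : G, a * b ≠ b * a)
    (hmax : ∀ M : Subgroup G, IsCoatom M → Even (Nat.card M))
    (x y : {g : G // g ≠ 1}) :
    ∃ p : (nonGenGraph G).Walk x y, p.length ≤ 3 := by
  obtain ⟨a₀, b₀, hab₀⟩ := hna
  -- every element lies in a maximal subgroup
  have hcoatom : ∀ g : G, ∃ M : Subgroup G, IsCoatom M ∧ g ∈ M := by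
    intro g
    rcases (eq_top_or_exists_le_coatom (Subgroup.zpowers g)) with h | ⟨M, hM, hle⟩
    · exact absurd (comm_of_zpowers_top g h a₀ b₀) hab₀
    · exact ⟨M, hM, hle (Subgroup.mem_zpowers g)⟩
  obtain ⟨M, hM, hxM⟩ := hcoatom x.1
  obtain ⟨N, hN, hyN⟩ := hcoatom y.1
  obtain ⟨t, htM, ht1, ht2⟩ := exists_involution_of_even M (hmax M hM)
  obtain ⟨s, hsN, hs1, hs2⟩ := exists_involution_of_even N (hmax N hN)
  -- walk x — t — s — y
  obtain ⟨p1, hp1⟩ := nonGen_walk_le_one x ⟨t, ht1⟩ (by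
    intro h
    refine hM.1 (top_unique ?_)
    rw [← h]
    exact (Subgroup.closure_le M).2 (by rintro z (rfl | rfl) <;> assumption))
  obtain ⟨p2, hp2⟩ := nonGen_walk_le_one (⟨t, ht1⟩ : {g : G // g ≠ 1}) ⟨s, hs1⟩
    (involutions_not_gen ⟨a₀, b₀, hab₀⟩ t s ht2 hs2)
  obtain ⟨p3, hp3⟩ := nonGen_walk_le_one (⟨s, hs1⟩ : {g : G // g ≠ 1}) y (by
    intro h
    refine hN.1 (top_unique ?_)
    rw [← h]
    exact (Subgroup.closure_le N).2 (by rintro z (rfl | rfl) <;> assumption))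
  refine ⟨(p1.append p2).append p3, ?_⟩
  simp only [SimpleGraph.Walk.length_append]
  omega
end

section
/- Let G be a non-abelian finite simple group, let L and M be maximal subgroups of G with L of even order, and suppose that L ∩ M is contained in Z(M) and that L ∩ M contains an involution f. Let u ∈ L with u ∉ M. Then there exists an involution f' ∈ L with f' ∉ M and uf' ≠ f'u. -/
/-- The centre `Z(H)` of a subgroup `H` of `G`, as a subset of `G`. -/
def subCenter {G : Type*} [Group G] (H : Subgroup G) : Set G :=
  {x | x ∈ H ∧ ∀ m ∈ H, x * m = m * x}

/-- Let `G` be a non-abelian finite simple group, `L` a maximal subgroup of even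
order and `M` a maximal subgroup with `L ∩ M ⊆ Z(M)`, such that `L ∩ M` contains an
involution.  Then for every `u ∈ L \ M` there is an involution `f' ∈ L \ M` not
commuting with `u`. -/
theorem involution_noncommuting_outside_M (G : Type*) [Group G] [Finite G]
    [IsSimpleGroup G] (hna : ∃ a b : G, a * b ≠ b * a)
    (L M : Subgroup G) (hL : IsCoatom L) (hLeven : Even (Nat.card L))
    (hM : IsCoatom M)
    (hLM : ∀ g : G, g ∈ L → g ∈ M → g ∈ subCenter M)
    (f : G) (hf : orderOf f = 2) (hfL : f ∈ L) (hfM : f ∈ M)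
    (u : G) (huL : u ∈ L) (huM : u ∉ M) :
    ∃ f' : G, orderOf f' = 2 ∧ f' ∈ L ∧ f' ∉ M ∧ u * f' ≠ f' * u := by
  -- the center of G is trivial
  have hcenter : Subgroup.center G = ⊥ := by
    rcases Subgroup.Normal.eq_bot_or_eq_top (H := Subgroup.center G) inferInstance with h | h
    · exact h
    · exfalso
      obtain ⟨a, b, hab⟩ := hna
      exact hab (Subgroup.mem_center_iff.mp (h ▸ Subgroup.mem_top b) a)
  -- a helper: the centralizer of a nontrivial central element of M is M
  have centr_eq : ∀ x : G, x ≠ 1 → (∀ m ∈ M, x * m = m * x) →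
      Subgroup.centralizer {x} = M := by
    intro x hx hxc
    have hle : M ≤ Subgroup.centralizer {x} := by
      intro m hm
      rw [Subgroup.mem_centralizer_singleton_iff]
      exact (hxc m hm).symm
    have hne : Subgroup.centralizer {x} ≠ ⊤ := by
      intro htop
      apply hx
      have : x ∈ Subgroup.center G := by
        rw [Subgroup.mem_center_iff]
        intro g
        have : g ∈ Subgroup.centralizer {x} := htop ▸ Subgroup.mem_top g
        exact Subgroup.mem_centralizer_singleton_iff.mp this
      rwa [hcenter, Subgroup.mem_bot] at this
    by_contra h
    exact hne (hM.2 _ (lt_of_le_of_ne hle (Ne.symm h)))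
  have hfne : f ≠ 1 := by
    intro h
    rw [h, orderOf_one] at hf
    norm_num at hf
  obtain ⟨-, hfc⟩ := hLM f hfL hfM
  have hCf : Subgroup.centralizer {f} = M := centr_eq f hfne hfc
  set f' := u * f * u⁻¹ with hf'def
  have hf'2 : orderOf f' = 2 := by
    rw [hf'def, show u * f * u⁻¹ = (MulAut.conj u).toMonoidHom f from rfl,
      orderOf_injective (MulAut.conj u).toMonoidHom (MulAut.conj u).injective, hf]
  have hf'L : f' ∈ L := L.mul_mem (L.mul_mem huL hfL) (L.inv_mem huL)
  have hf'M : f' ∉ M := by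
    intro hmem
    obtain ⟨-, hf'c⟩ := hLM f' hf'L hmem
    have hCf' : Subgroup.centralizer {f'} = M := by
      refine centr_eq f' ?_ hf'c
      intro h
      rw [h, orderOf_one] at hf'2
      norm_num at hf'2
    -- u normalizes M
    have hunorm : u ∈ Subgroup.normalizer (M : Set G) := by
      rw [Subgroup.mem_normalizer_iff]
      intro h
      constructor
      · intro hh
        rw [← hCf', Subgroup.mem_centralizer_singleton_iff]
        have hcomm : h * f = f * h :=
          Subgroup.mem_centralizer_singleton_iff.mp (hCf ▸ hh)
        have key : (u * f * u⁻¹) * (u * h * u⁻¹) = (u * h * u⁻¹) * (u * f * u⁻¹) := calc (u * f * u⁻¹) * (u * h * u⁻¹) = u * (f * h) * u⁻¹ := by group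
          _ = u * (h * f) * u⁻¹ := by rw [hcomm]
          _ = (u * h * u⁻¹) * (u * f * u⁻¹) := by group
        exact key.symm
      · intro hh
        rw [← hCf, Subgroup.mem_centralizer_singleton_iff]
        have hcomm : f' * (u * h * u⁻¹) = (u * h * u⁻¹) * f' := hf'c _ hh
        rw [hf'def] at hcomm
        have key : u * (f * h) * u⁻¹ = u * (h * f) * u⁻¹ := by
          calc u * (f * h) * u⁻¹ = (u * f * u⁻¹) * (u * h * u⁻¹) := by group
            _ = (u * h * u⁻¹) * (u * f * u⁻¹) := hcomm
            _ = u * (h * f) * u⁻¹ := by group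
        have := mul_left_cancel (mul_right_cancel key)
        exact this.symm
    -- the normalizer of M is M
    have hnormM : Subgroup.normalizer (M : Set G) = M := by
      have hle : M ≤ Subgroup.normalizer (M : Set G) := Subgroup.le_normalizer
      by_contra h
      have htop : Subgroup.normalizer (M : Set G) = ⊤ := hM.2 _ (lt_of_le_of_ne hle (Ne.symm h))
      have hnorm : M.Normal := Subgroup.normalizer_eq_top_iff.mp htop
      rcases hnorm.eq_bot_or_eq_top with hb | ht
      · exact hfne (Subgroup.mem_bot.mp (hb ▸ hfM))
      · exact hM.1 ht
    exact huM (hnormM ▸ hunorm)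
  refine ⟨f', hf'2, hf'L, hf'M, ?_⟩
  intro hcomm
  apply hf'M
  have heq : f' = f := by
    have h2 : f' = u⁻¹ * (u * f') := by group
    rw [hcomm] at h2
    rw [hf'def] at h2
    rw [hf'def]
    calc u * f * u⁻¹ = u⁻¹ * (u * f * u⁻¹ * u) := h2
      _ = f := by group
  rw [heq]
  exact hfM
end

section
/- Let n ≥ 5 and let x, y be non-identity elements of the alternating group A_n. Then, in the non-commuting, non-generating graph nc(A_n): (a) d(x,y) ≤ 4; (b) if neither x nor y is a derangement, then d(x,y) ≤ 2; (c) if at least one of x and y is not a derangement, then d(x,y) ≤ 3. -/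
open Equiv Equiv.Perm

variable {n : ℕ}

/-- fresh point -/
lemma exists_fresh (s : Finset (Fin n)) (h : s.card < n) : ∃ a, a ∉ s := by
  by_contra hc
  push_neg at hc
  have : (Finset.univ : Finset (Fin n)) ⊆ s := fun a _ => hc a
  have := Finset.card_le_card this
  simp [Finset.card_univ] at this
  omega

/-- the 3-cycle a ↦ b ↦ c ↦ a -/
def tc (a b c : Fin n) : Perm (Fin n) := Equiv.swap a c * Equiv.swap a b

section tc
variable {a b c : Fin n}

lemma tc_a (hab : a ≠ b) (hbc : b ≠ c) : tc a b c a = b := by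
  simp [tc, Equiv.swap_apply_of_ne_of_ne hab.symm hbc]

lemma tc_b (hab : a ≠ b) (hbc : b ≠ c) : tc a b c b = c := by
  have : Equiv.swap a b b = a := Equiv.swap_apply_right a b
  simp [tc, this]

lemma tc_c (hac : a ≠ c) (hbc : b ≠ c) : tc a b c c = a := by
  have h1 : Equiv.swap a b c = c := Equiv.swap_apply_of_ne_of_ne hac.symm hbc.symm
  simp [tc, h1]

lemma tc_other {d : Fin n} (hda : d ≠ a) (hdb : d ≠ b) (hdc : d ≠ c) : tc a b c d = d := by
  simp [tc, Equiv.swap_apply_of_ne_of_ne hda hdb, Equiv.swap_apply_of_ne_of_ne hda hdc]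

lemma tc_sign (hab : a ≠ b) (hac : a ≠ c) : sign (tc a b c) = 1 := by
  simp [tc, sign_swap hac, sign_swap hab]

lemma tc_mem (hab : a ≠ b) (hac : a ≠ c) : tc a b c ∈ alternatingGroup (Fin n) :=
  mem_alternatingGroup.2 (tc_sign hab hac)

end tc

/-- non-commuting criterion -/
lemma noncomm_crit {α : Type*} (z x : Perm α) (p : α) (h1 : z p ≠ p) (h2 : z (x p) = x p) :
    z * x ≠ x * z := by
  intro h
  have := congrArg (fun f => f p) h
  simp only [Perm.mul_apply] at this
  rw [h2] at this
  exact h1 (x.injective this.symm)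

/-- The non-commuting, non-generating graph of a group `G`. -/
def ncGraph (G : Type*) [Group G] : SimpleGraph G :=
  SimpleGraph.fromRel (fun x y => x * y ≠ y * x ∧ Subgroup.closure ({x, y} : Set G) ≠ ⊤)

variable {n : ℕ}

/-- pointwise fixer of i -/
def fixSub (i : Fin n) : Subgroup (alternatingGroup (Fin n)) where
  carrier := {g | (g : Perm (Fin n)) i = i}
  one_mem' := rfl
  mul_mem' := by
    intro a b ha hb
    simp only [Set.mem_setOf_eq] at *
    simp [Subgroup.coe_mul, Perm.mul_apply, hb, ha]
  inv_mem' := by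
    intro a ha
    simp only [Set.mem_setOf_eq] at *
    show ((a : Perm (Fin n)))⁻¹ i = i
    nth_rewrite 1 [← ha]
    exact Equiv.symm_apply_apply _ _

lemma mem_fixSub {i : Fin n} {g : alternatingGroup (Fin n)} :
    g ∈ fixSub i ↔ (g : Perm (Fin n)) i = i := Iff.rfl

/-- coercion of commuting -/
lemma coe_noncomm {x z : alternatingGroup (Fin n)}
    (h : (z : Perm (Fin n)) * x ≠ (x : Perm (Fin n)) * z) : z * x ≠ x * z := by
  intro e; apply h
  exact_mod_cast congrArg (Subtype.val) e

/-- generic adjacency builder -/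
lemma mkAdj {x y : alternatingGroup (Fin n)} (hnc : x * y ≠ y * x)
    (H : Subgroup (alternatingGroup (Fin n))) (hxH : x ∈ H) (hyH : y ∈ H) (hH : H ≠ ⊤) :
    (ncGraph (alternatingGroup (Fin n))).Adj x y := by
  rw [ncGraph, SimpleGraph.fromRel_adj]
  refine ⟨fun e => hnc (by rw [e]), Or.inl ⟨hnc, fun htop => hH ?_⟩⟩
  have hcl : Subgroup.closure ({x, y} : Set (alternatingGroup (Fin n))) ≤ H := by
    rw [Subgroup.closure_le]
    intro g hg
    rcases hg with rfl | hg
    · exact hxH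
    · rcases hg with rfl; exact hyH
  rw [htop] at hcl
  exact top_le_iff.mp hcl

/-- fixSub is proper -/
lemma fixSub_ne_top (hn : 5 ≤ n) (i : Fin n) : fixSub i ≠ ⊤ := by
  obtain ⟨u, hu⟩ := exists_fresh {i} (by simp; omega)
  obtain ⟨v, hv⟩ := exists_fresh {i, u} (by
    refine lt_of_le_of_lt (Finset.card_insert_le _ _) ?_
    simp; omega)
  simp only [Finset.mem_insert, Finset.mem_singleton, not_or] at hu hv
  have hiu : i ≠ u := fun e => hu (by simp [e])
  have hiv : i ≠ v := fun e => hv.1 e.symm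
  have huv : u ≠ v := fun e => hv.2 e.symm
  intro htop
  have hmem : (⟨tc i u v, tc_mem hiu hiv⟩ : alternatingGroup (Fin n)) ∈ fixSub i := by
    rw [htop]; trivial
  rw [mem_fixSub] at hmem
  simp only at hmem
  rw [tc_a hiu huv] at hmem
  exact hiu hmem.symm
lemma fresh2 (hn : 5 ≤ n) (a b : Fin n) : ∃ c, c ≠ a ∧ c ≠ b := by
  obtain ⟨c, hc⟩ := exists_fresh {a, b} (by
    have : ({a, b} : Finset (Fin n)).card ≤ 2 := by
      apply le_trans (Finset.card_insert_le _ _); simp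
    omega)
  simp only [Finset.mem_insert, Finset.mem_singleton, not_or] at hc
  exact ⟨c, hc.1, hc.2⟩

lemma fresh3 (hn : 5 ≤ n) (a b c : Fin n) : ∃ d, d ≠ a ∧ d ≠ b ∧ d ≠ c := by
  obtain ⟨d, hd⟩ := exists_fresh {a, b, c} (by
    have : ({a, b, c} : Finset (Fin n)).card ≤ 3 := by
      apply le_trans (Finset.card_insert_le _ _)
      apply Nat.succ_le_succ
      apply le_trans (Finset.card_insert_le _ _); simp
    omega)
  simp only [Finset.mem_insert, Finset.mem_singleton, not_or] at hd
  exact ⟨d, hd.1, hd.2.1, hd.2.2⟩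

lemma fresh4 (hn : 5 ≤ n) (a b c d : Fin n) : ∃ e, e ≠ a ∧ e ≠ b ∧ e ≠ c ∧ e ≠ d := by
  obtain ⟨e, he⟩ := exists_fresh {a, b, c, d} (by
    have : ({a, b, c, d} : Finset (Fin n)).card ≤ 4 := by
      apply le_trans (Finset.card_insert_le _ _)
      apply Nat.succ_le_succ
      apply le_trans (Finset.card_insert_le _ _)
      apply Nat.succ_le_succ
      apply le_trans (Finset.card_insert_le _ _); simp
    omega)
  simp only [Finset.mem_insert, Finset.mem_singleton, not_or] at he
  exact ⟨e, he.1, he.2.1, he.2.2.1, he.2.2.2⟩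

lemma fresh5 (hn : 6 ≤ n) (a b c d e : Fin n) :
    ∃ f, f ≠ a ∧ f ≠ b ∧ f ≠ c ∧ f ≠ d ∧ f ≠ e := by
  obtain ⟨f, hf⟩ := exists_fresh {a, b, c, d, e} (by
    have : ({a, b, c, d, e} : Finset (Fin n)).card ≤ 5 := by
      apply le_trans (Finset.card_insert_le _ _)
      apply Nat.succ_le_succ
      apply le_trans (Finset.card_insert_le _ _)
      apply Nat.succ_le_succ
      apply le_trans (Finset.card_insert_le _ _)
      apply Nat.succ_le_succ
      apply le_trans (Finset.card_insert_le _ _); simp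
    omega)
  simp only [Finset.mem_insert, Finset.mem_singleton, not_or] at hf
  exact ⟨f, hf.1, hf.2.1, hf.2.2.1, hf.2.2.2.1, hf.2.2.2.2⟩
lemma card_lt_helper {k : ℕ} (hk : k < 5) (hn : 5 ≤ n) (s : Finset (Fin n))
    (h : s.card ≤ k) : s.card < n := by omega

/-- If `x` fixes `i` and commutes with every even permutation fixing `i` and `j`,
then `x` fixes `j`. -/
lemma cent_fix (hn : 5 ≤ n) {x : Perm (Fin n)} {i j : Fin n} (hxi : x i = i)
    (hcomm : ∀ z : Perm (Fin n), z ∈ alternatingGroup (Fin n) → z i = i → z j = j →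
      z * x = x * z) : x j = j := by
  by_cases hij : i = j
  · rw [← hij]; exact hxi
  have key : ∀ z : Perm (Fin n), z ∈ alternatingGroup (Fin n) → z i = i → z j = j →
      ∀ s, z (x s) = x (z s) := by
    intro z hz hzi hzj s
    have := congrArg (fun f => f s) (hcomm z hz hzi hzj)
    simpa [Perm.mul_apply] using this
  by_cases h6 : 6 ≤ n
  · -- big case: every point outside {i,j} is fixed
    have hfix : ∀ t, t ≠ i → t ≠ j → x t = t := by
      intro t hti htj
      obtain ⟨u, hui, huj, hut⟩ := fresh3 hn i j t
      obtain ⟨v, hvi, hvj, hvt, hvu⟩ := fresh4 hn i j t u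
      obtain ⟨w, hwi, hwj, hwt, hwu, hwv⟩ := fresh5 h6 i j t u v
      have h1 := key (tc t u v) (tc_mem hut.symm hvt.symm)
        (tc_other hti.symm hui.symm hvi.symm) (tc_other htj.symm huj.symm hvj.symm) t
      have h2 := key (tc t u w) (tc_mem hut.symm hwt.symm)
        (tc_other hti.symm hui.symm hwi.symm) (tc_other htj.symm huj.symm hwj.symm) t
      rw [tc_a hut.symm hvu.symm] at h1
      rw [tc_a hut.symm hwu.symm] at h2
      by_cases hrt : x t = t
      · exact hrt
      by_cases hru : x t = u
      · rw [hru, tc_b hut.symm hvu.symm] at h1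
        rw [hru, tc_b hut.symm hwu.symm] at h2
        exact absurd (h2.trans h1.symm) hwv
      by_cases hrv : x t = v
      · rw [hrv, tc_c hvt.symm hvu.symm] at h1
        rw [hrv, tc_other hvt hvu hwv.symm] at h2
        exact absurd (h2.trans h1.symm) hvt
      by_cases hrw : x t = w
      · rw [hrw, tc_other hwt hwu hwv] at h1
        rw [hrw, tc_c hwt.symm hwu.symm] at h2
        exact absurd (h1.trans h2.symm) hwt
      · rw [tc_other hrt hru hrv] at h1
        exact (hut (x.injective h1).symm).elim
    by_cases hsj : x j = j
    · exact hsj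
    have hsi : x j ≠ i := by
      intro e
      exact hij (x.injective (hxi.trans e.symm))
    have := hfix (x j) hsi hsj
    exact (hsj (x.injective this)).elim
  · -- n = 5 case
    have hn5 : n = 5 := by omega
    obtain ⟨t, hti, htj⟩ := fresh2 hn i j
    obtain ⟨u, hui, huj, hut⟩ := fresh3 hn i j t
    obtain ⟨v, hvi, hvj, hvt, hvu⟩ := fresh4 hn i j t u
    have huniv : ∀ s : Fin n, s = i ∨ s = j ∨ s = t ∨ s = u ∨ s = v := by
      have hcard : ({i, j, t, u, v} : Finset (Fin n)).card = 5 := by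
        rw [Finset.card_insert_of_notMem (by simp [hij, hti.symm, hui.symm, hvi.symm]),
            Finset.card_insert_of_notMem (by simp [htj.symm, huj.symm, hvj.symm]),
            Finset.card_insert_of_notMem (by simp [hut.symm, hvt.symm]),
            Finset.card_insert_of_notMem (by simp [hvu.symm]),
            Finset.card_singleton]
      have huniv' : ({i, j, t, u, v} : Finset (Fin n)) = Finset.univ := by
        apply Finset.eq_univ_of_card
        rw [hcard]; simp [hn5]
      intro s
      have : s ∈ ({i, j, t, u, v} : Finset (Fin n)) := by rw [huniv']; simp
      simpa using this
    have hz0 := key (tc t u v) (tc_mem hut.symm hvt.symm)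
      (tc_other hti.symm hui.symm hvi.symm) (tc_other htj.symm huj.symm hvj.symm)
    -- x maps {t,u,v} into {t,u,v}
    have hmaps : ∀ p q r : Fin n, tc p q r = tc t u v → x p = t ∨ x p = u ∨ x p = v → True := fun _ _ _ _ _ => trivial
    have hxt : x t = t ∨ x t = u ∨ x t = v := by
      have h1 := hz0 t
      rw [tc_a hut.symm hvu.symm] at h1
      rcases huniv (x t) with hr | hr | hr | hr | hr
      · rw [hr, tc_other hti.symm hui.symm hvi.symm] at h1
        exact absurd (x.injective (h1.symm.trans hxi.symm)) hui
      · rw [hr, tc_other htj.symm huj.symm hvj.symm] at h1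
        have h2 := hz0 u
        rw [tc_b hut.symm hvu.symm] at h2
        rw [← h1, tc_other htj.symm huj.symm hvj.symm] at h2
        exact (hvu (x.injective (h1.symm.trans h2)).symm).elim
      · exact Or.inl hr
      · exact Or.inr (Or.inl hr)
      · exact Or.inr (Or.inr hr)
    have hxu : x u = t ∨ x u = u ∨ x u = v := by
      have h1 := hz0 u
      rw [tc_b hut.symm hvu.symm] at h1
      rcases huniv (x u) with hr | hr | hr | hr | hr
      · rw [hr, tc_other hti.symm hui.symm hvi.symm] at h1
        exact absurd (x.injective (h1.symm.trans hxi.symm)) hvi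
      · rw [hr, tc_other htj.symm huj.symm hvj.symm] at h1
        have h2 := hz0 v
        rw [tc_c hvt.symm hvu.symm] at h2
        rw [← h1, tc_other htj.symm huj.symm hvj.symm] at h2
        exact (hvt (x.injective (h1.symm.trans h2))).elim
      · exact Or.inl hr
      · exact Or.inr (Or.inl hr)
      · exact Or.inr (Or.inr hr)
    have hxv : x v = t ∨ x v = u ∨ x v = v := by
      have h1 := hz0 v
      rw [tc_c hvt.symm hvu.symm] at h1
      rcases huniv (x v) with hr | hr | hr | hr | hr
      · rw [hr, tc_other hti.symm hui.symm hvi.symm] at h1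
        exact absurd (x.injective (h1.symm.trans hxi.symm)) hti
      · rw [hr, tc_other htj.symm huj.symm hvj.symm] at h1
        have h2 := hz0 t
        rw [tc_a hut.symm hvu.symm] at h2
        rw [← h1, tc_other htj.symm huj.symm hvj.symm] at h2
        exact (hut (x.injective (h1.symm.trans h2)).symm).elim
      · exact Or.inl hr
      · exact Or.inr (Or.inl hr)
      · exact Or.inr (Or.inr hr)
    have himg : ({x t, x u, x v} : Finset (Fin n)) = {t, u, v} := by
      apply Finset.eq_of_subset_of_card_le
      · intro s hs
        simp only [Finset.mem_insert, Finset.mem_singleton] at hs ⊢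
        rcases hs with rfl | rfl | rfl
        · exact hxt
        · exact hxu
        · exact hxv
      · rw [Finset.card_insert_of_notMem (by
            simp only [Finset.mem_insert, Finset.mem_singleton, not_or]
            exact ⟨fun e => hut e.symm, fun e => hvt e.symm⟩),
          Finset.card_insert_of_notMem (by
            simp only [Finset.mem_singleton]
            exact fun e => hvu e.symm),
          Finset.card_singleton,
          Finset.card_insert_of_notMem (by simp [hut.symm, hvt.symm]),
          Finset.card_insert_of_notMem (by simp [hvu.symm]),
          Finset.card_singleton]
    have hback : ∀ s, s = t ∨ s = u ∨ s = v → x j ≠ s := by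
      intro s hs he
      have : s ∈ ({x t, x u, x v} : Finset (Fin n)) := by
        rw [himg]
        simp only [Finset.mem_insert, Finset.mem_singleton]
        exact hs
      simp only [Finset.mem_insert, Finset.mem_singleton] at this
      rcases this with h' | h' | h'
      · exact htj ((x.injective (he.trans h')).symm)
      · exact huj ((x.injective (he.trans h')).symm)
      · exact hvj ((x.injective (he.trans h')).symm)
    rcases huniv (x j) with hr | hr | hr | hr | hr
    · exact absurd (x.injective (hr.trans hxi.symm)).symm hij
    · exact hr
    · exact absurd hr (hback t (Or.inl rfl))
    · exact absurd hr (hback u (Or.inr (Or.inl rfl)))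
    · exact absurd hr (hback v (Or.inr (Or.inr rfl)))
section middle
variable {n : ℕ}

abbrev AG (n : ℕ) := alternatingGroup (Fin n)

lemma G_comm_to_perm {x z : AG n} (h : z * x = x * z) :
    (z : Perm (Fin n)) * (x : Perm (Fin n)) = (x : Perm (Fin n)) * (z : Perm (Fin n)) := by
  exact_mod_cast congrArg Subtype.val h

lemma pick_noncomm {G : Type*} [Group G] (H : Subgroup G) {x y a b : G}
    (haH : a ∈ H) (hbH : b ∈ H) (hax : a * x ≠ x * a) (hby : b * y ≠ y * b) :
    ∃ z ∈ H, z * x ≠ x * z ∧ z * y ≠ y * z := by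
  by_cases hay : a * y ≠ y * a
  · exact ⟨a, haH, hax, hay⟩
  by_cases hbx : b * x ≠ x * b
  · exact ⟨b, hbH, hbx, hby⟩
  push_neg at hay hbx
  refine ⟨a * b, H.mul_mem haH hbH, ?_, ?_⟩
  · intro h
    apply hax
    have key : (a * x) * b = (x * a) * b := by
      calc (a * x) * b = a * (x * b) := mul_assoc _ _ _
        _ = a * (b * x) := by rw [hbx]
        _ = (a * b) * x := (mul_assoc _ _ _).symm
        _ = x * (a * b) := h
        _ = (x * a) * b := (mul_assoc _ _ _).symm
    exact mul_right_cancel key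
  · intro h
    apply hby
    have key : a * (b * y) = a * (y * b) := by
      calc a * (b * y) = (a * b) * y := (mul_assoc _ _ _).symm
        _ = y * (a * b) := h
        _ = (y * a) * b := (mul_assoc _ _ _).symm
        _ = (a * y) * b := by rw [hay]
        _ = a * (y * b) := mul_assoc _ _ _
    exact mul_left_cancel key

/-- non-centralizing over a single fixed point, from nontriviality -/
lemma noncent_self (hn : 5 ≤ n) {x : AG n} (hx1 : x ≠ 1) {p : Fin n}
    (hxp : (x : Perm (Fin n)) p = p) :
    ∃ a : AG n, a ∈ fixSub p ∧ a * x ≠ x * a := by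
  by_contra h
  push_neg at h
  have hall : ∀ t, (x : Perm (Fin n)) t = t := by
    intro t
    refine cent_fix hn hxp ?_
    intro z hz hzp _
    have := h ⟨z, hz⟩ (by rwa [mem_fixSub])
    exact G_comm_to_perm this
  apply hx1
  apply Subtype.ext
  exact Equiv.ext hall

end middle
lemma exists_middle (hn : 5 ≤ n) {x y : AG n} (hx1 : x ≠ 1) (hy1 : y ≠ 1)
    {i j : Fin n} (hxi : (x : Perm (Fin n)) i = i) (hyj : (y : Perm (Fin n)) j = j) :
    ∃ (p q : Fin n) (z : AG n), (x : Perm (Fin n)) p = p ∧ (y : Perm (Fin n)) q = q ∧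
      (z : Perm (Fin n)) p = p ∧ (z : Perm (Fin n)) q = q ∧ z * x ≠ x * z ∧ z * y ≠ y * z := by
  by_cases hcx : ∀ w : AG n, (w : Perm (Fin n)) i = i → (w : Perm (Fin n)) j = j →
      w * x = x * w
  · have hxj : (x : Perm (Fin n)) j = j :=
      cent_fix hn hxi (fun z hz hzi hzj => G_comm_to_perm (hcx ⟨z, hz⟩ hzi hzj))
    obtain ⟨a, ha, hax⟩ := noncent_self hn hx1 hxj
    obtain ⟨b, hb, hby⟩ := noncent_self hn hy1 hyj
    obtain ⟨z, hzH, hzx, hzy⟩ := pick_noncomm (fixSub j) ha hb hax hby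
    exact ⟨j, j, z, hxj, hyj, hzH, hzH, hzx, hzy⟩
  · by_cases hcy : ∀ w : AG n, (w : Perm (Fin n)) i = i → (w : Perm (Fin n)) j = j →
        w * y = y * w
    · have hyi : (y : Perm (Fin n)) i = i :=
        cent_fix hn hyj (fun z hz hzj hzi => G_comm_to_perm (hcy ⟨z, hz⟩ hzi hzj))
      obtain ⟨a, ha, hax⟩ := noncent_self hn hx1 hxi
      obtain ⟨b, hb, hby⟩ := noncent_self hn hy1 hyi
      obtain ⟨z, hzH, hzx, hzy⟩ := pick_noncomm (fixSub i) ha hb hax hby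
      exact ⟨i, i, z, hxi, hyi, hzH, hzH, hzx, hzy⟩
    · push_neg at hcx hcy
      obtain ⟨a, hai, haj, hax⟩ := hcx
      obtain ⟨b, hbi, hbj, hby⟩ := hcy
      obtain ⟨z, hzH, hzx, hzy⟩ := pick_noncomm (fixSub i ⊓ fixSub j)
        (Subgroup.mem_inf.2 ⟨hai, haj⟩) (Subgroup.mem_inf.2 ⟨hbi, hbj⟩) hax hby
      rw [Subgroup.mem_inf] at hzH
      exact ⟨i, j, z, hxi, hyj, hzH.1, hzH.2, hzx, hzy⟩

lemma walk2 (hn : 5 ≤ n) (x y : AG n) (hx1 : x ≠ 1) (hy1 : y ≠ 1)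
    (hex : ∃ i, (x : Perm (Fin n)) i = i) (hey : ∃ j, (y : Perm (Fin n)) j = j) :
    ∃ p : (ncGraph (AG n)).Walk x y, p.length ≤ 2 := by
  obtain ⟨i, hxi⟩ := hex
  obtain ⟨j, hyj⟩ := hey
  obtain ⟨p, q, z, hxp, hyq, hzp, hzq, hzx, hzy⟩ := exists_middle hn hx1 hy1 hxi hyj
  have adj1 : (ncGraph (AG n)).Adj x z :=
    mkAdj (fun e => hzx e.symm) (fixSub p) hxp hzp (fixSub_ne_top hn p)
  have adj2 : (ncGraph (AG n)).Adj z y :=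
    mkAdj hzy (fixSub q) hzq hyq (fixSub_ne_top hn q)
  exact ⟨.cons adj1 (.cons adj2 .nil), by simp⟩
/-- double transposition -/
def dt (a b c d : Fin n) : Perm (Fin n) := Equiv.swap a b * Equiv.swap c d

section dt
variable {a b c d : Fin n}

lemma dt_a (hac : a ≠ c) (had : a ≠ d) : dt a b c d a = b := by
  simp [dt, Equiv.swap_apply_of_ne_of_ne hac had]

lemma dt_b (hbc : b ≠ c) (hbd : b ≠ d) : dt a b c d b = a := by
  simp [dt, Equiv.swap_apply_of_ne_of_ne hbc hbd]

lemma dt_c (hda : d ≠ a) (hdb : d ≠ b) : dt a b c d c = d := by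
  have h1 : Equiv.swap c d c = d := Equiv.swap_apply_left c d
  simp [dt, h1, Equiv.swap_apply_of_ne_of_ne hda hdb]

lemma dt_d (hca : c ≠ a) (hcb : c ≠ b) : dt a b c d d = c := by
  have h1 : Equiv.swap c d d = c := Equiv.swap_apply_right c d
  simp [dt, h1, Equiv.swap_apply_of_ne_of_ne hca hcb]

lemma dt_other {e : Fin n} (hea : e ≠ a) (heb : e ≠ b) (hec : e ≠ c) (hed : e ≠ d) :
    dt a b c d e = e := by
  simp [dt, Equiv.swap_apply_of_ne_of_ne hec hed, Equiv.swap_apply_of_ne_of_ne hea heb]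

lemma dt_sign (hab : a ≠ b) (hcd : c ≠ d) : sign (dt a b c d) = 1 := by
  simp [dt, sign_swap hab, sign_swap hcd]

lemma dt_mem (hab : a ≠ b) (hcd : c ≠ d) : dt a b c d ∈ alternatingGroup (Fin n) :=
  mem_alternatingGroup.2 (dt_sign hab hcd)

end dt
/-- setwise stabilizer -/
def setStab (O : Set (Fin n)) : Subgroup (AG n) where
  carrier := {g | ∀ t, t ∈ O ↔ (g : Perm (Fin n)) t ∈ O}
  one_mem' := fun t => by simp
  mul_mem' := by
    intro a b ha hb
    intro t
    refine (hb t).trans ?_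
    have := ha ((b : Perm (Fin n)) t)
    simpa [Perm.mul_apply] using this
  inv_mem' := by
    intro a ha t
    have := ha (((a : Perm (Fin n)))⁻¹ t)
    rw [show (a : Perm (Fin n)) ((a : Perm (Fin n))⁻¹ t) = t from Equiv.apply_symm_apply _ _] at this
    exact this.symm

lemma mem_setStab {O : Set (Fin n)} {g : AG n} :
    g ∈ setStab O ↔ ∀ t, t ∈ O ↔ (g : Perm (Fin n)) t ∈ O := Iff.rfl

lemma setStab_ne_top (hn : 5 ≤ n) {O : Set (Fin n)} {a b : Fin n}
    (ha : a ∈ O) (hb : b ∉ O) : setStab O ≠ ⊤ := by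
  have hab : a ≠ b := fun e => hb (e ▸ ha)
  obtain ⟨c, hca, hcb⟩ := fresh2 hn a b
  intro htop
  have hmem : (⟨tc a b c, tc_mem hab hca.symm⟩ : AG n) ∈ setStab O := by
    rw [htop]; trivial
  rw [mem_setStab] at hmem
  have := (hmem a).1 ha
  simp only at this
  rw [tc_a hab hcb.symm] at this
  exact hb this
lemma spouse_ncycle (hn : 5 ≤ n) (y : alternatingGroup (Fin n)) (hy1 : y ≠ 1)
    (hfy : ∀ j, (y : Perm (Fin n)) j ≠ j) {a0 : Fin n}
    (hcyc : ∀ t, (y : Perm (Fin n)).SameCycle a0 t) :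
    ∃ y' : AG n, y' ≠ 1 ∧ (∃ j, (y' : Perm (Fin n)) j = j) ∧
      (y' = y ∨ (ncGraph (AG n)).Adj y y') := by
  set Y : Perm (Fin n) := (y : Perm (Fin n)) with hY
  have hsupp : Y.support = Finset.univ := Finset.eq_univ_iff_forall.2
    (fun t => mem_support.2 (hfy t))
  have hc : Y.IsCycle := ⟨a0, hfy a0, fun b _ => hcyc b⟩
  have hord : orderOf Y = n := by
    rw [hc.orderOf, hsupp, Finset.card_univ, Fintype.card_fin]
  have hsign : Equiv.Perm.sign Y = 1 := mem_alternatingGroup.1 y.2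
  have hodd : Odd n := by
    rcases Nat.even_or_odd n with he | ho
    · exfalso
      have hs := hc.sign
      rw [hsupp, Finset.card_univ, Fintype.card_fin, hsign, he.neg_one_pow] at hs
      exact absurd hs (by decide)
    · exact ho
  have hcop2 : Nat.Coprime 2 (orderOf Y) := by rw [hord]; exact hodd.coprime_two_left
  have hc2 : (Y ^ 2).IsCycle := hc.pow_iff.2 hcop2
  have hs2 : (Y ^ 2).support = Y.support := support_pow_coprime hcop2
  have hconj : IsConj Y (Y ^ 2) := isConj_iff_cycleType_eq.2
    (by rw [hc.cycleType, hc2.cycleType, hs2])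
  obtain ⟨σ, hσ⟩ := isConj_iff.1 hconj
  have hτ : (σ * σ) * Y * (σ * σ)⁻¹ = Y ^ 4 := by
    have e1 : (σ * σ) * Y * (σ * σ)⁻¹ = σ * (σ * Y * σ⁻¹) * σ⁻¹ := by group
    rw [e1, hσ]
    have e2 : σ * Y ^ 2 * σ⁻¹ = (σ * Y * σ⁻¹) ^ 2 := (conj_pow).symm
    rw [e2, hσ]
    group
  obtain ⟨k, hk⟩ := hcyc ((σ * σ)⁻¹ a0)
  set ρ : Perm (Fin n) := (σ * σ) * Y ^ k with hρ
  have hρa0 : ρ a0 = a0 := by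
    rw [hρ, Perm.mul_apply, hk]
    exact Equiv.apply_symm_apply _ _
  have hρconj : ρ * Y * ρ⁻¹ = Y ^ 4 := by
    rw [hρ, ← hτ]
    group
  have hρsign : Equiv.Perm.sign ρ = 1 := by
    rw [hρ, map_mul, map_mul, map_zpow, hsign, one_zpow, mul_one, Int.units_mul_self]
  set yG' : AG n := ⟨ρ, mem_alternatingGroup.2 hρsign⟩ with hyG'
  have hn3 : Y ^ 3 ≠ 1 := by
    intro e
    have hd := orderOf_dvd_of_pow_eq_one e
    rw [hord] at hd
    have := Nat.le_of_dvd (by norm_num) hd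
    omega
  have h4 : Y ^ 4 ≠ Y := by
    intro e
    apply hn3
    have h' : Y ^ 3 * Y = 1 * Y := by rw [← pow_succ]; simpa using e
    exact mul_right_cancel h'
  have hncρ : ρ * Y ≠ Y * ρ := by
    intro e
    apply h4
    rw [← hρconj, e]
    group
  have hρ1 : ρ ≠ 1 := by
    intro e
    apply h4
    rw [← hρconj, e]
    group
  have hconjG : yG' * y * yG'⁻¹ = y ^ 4 := by
    apply Subtype.ext
    push_cast
    exact hρconj
  have hordG : orderOf y = n := by rw [← Subgroup.orderOf_coe y]; exact hord
  have hyGn : y ^ n = 1 := by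
    have h' := pow_orderOf_eq_one y
    rwa [hordG] at h' 
  have hcop4 : Nat.Coprime 4 n := by
    have h2' := hodd.coprime_two_left
    have : Nat.Coprime (2 * 2) n := Nat.Coprime.mul h2' h2'
    simpa using this
  obtain ⟨u, v, huv⟩ : ∃ u v : ℤ, u * 4 + v * n = 1 := by
    have hic : IsCoprime (4 : ℤ) (n : ℤ) := by
      rw [Int.isCoprime_iff_gcd_eq_one]
      exact_mod_cast hcop4
    obtain ⟨a, b, hab⟩ := hic
    exact ⟨a, b, hab⟩
  have key4 : ((y : AG n) ^ (4 : ℕ)) ^ u = y := by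
    calc ((y : AG n) ^ (4 : ℕ)) ^ u = (y ^ ((4 : ℕ) : ℤ)) ^ u := by rw [zpow_natCast]
      _ = y ^ ((4 : ℤ) * u) := by rw [← zpow_mul]; norm_num
      _ = y ^ ((1 : ℤ) + (n : ℤ) * (-v)) := by congr 1; linarith
      _ = y ^ (1 : ℤ) * (y ^ ((n : ℕ) : ℤ)) ^ (-v) := by rw [zpow_add, zpow_mul]
      _ = y := by rw [zpow_natCast, hyGn, one_zpow, mul_one, zpow_one]
  have hc4 : yG'⁻¹ * y ^ (4 : ℕ) * yG' = y := by rw [← hconjG]; group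
  have hcpow : yG'⁻¹ * y * yG' = y ^ u := by
    have h' := (conj_zpow (i := u) (a := yG'⁻¹) (b := (y ^ (4 : ℕ) : AG n)))
    rw [inv_inv, hc4, key4] at h'
    exact h'.symm
  have hyN : y ∈ Subgroup.normalizer ((Subgroup.zpowers y : Subgroup (AG n)) : Set (AG n)) :=
    Subgroup.le_normalizer (Subgroup.mem_zpowers y)
  have hρN : yG' ∈ Subgroup.normalizer ((Subgroup.zpowers y : Subgroup (AG n)) : Set (AG n)) := by
    rw [Subgroup.mem_normalizer_iff]
    intro h
    constructor
    · intro hh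
      obtain ⟨m, hm⟩ := Subgroup.mem_zpowers_iff.1 hh
      rw [← hm]
      have e1 : yG' * y ^ m * yG'⁻¹ = (yG' * y * yG'⁻¹) ^ m := (conj_zpow).symm
      rw [e1, hconjG]
      refine Subgroup.mem_zpowers_iff.2 ⟨4 * m, ?_⟩
      rw [show ((y : AG n) ^ (4:ℕ)) = y ^ ((4:ℕ) : ℤ) from (zpow_natCast y 4).symm, ← zpow_mul]
      norm_num
    · intro hh
      obtain ⟨m, hm⟩ := Subgroup.mem_zpowers_iff.1 hh
      have e0 : h = yG'⁻¹ * y ^ m * yG' := by rw [hm]; group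
      rw [e0]
      have e1 : yG'⁻¹ * y ^ m * yG' = (yG'⁻¹ * y * yG') ^ m := by
        have := (conj_zpow (i := m) (a := yG'⁻¹) (b := y))
        rw [inv_inv] at this
        exact this.symm
      rw [e1, hcpow, ← zpow_mul]
      exact Subgroup.mem_zpowers_iff.2 ⟨u * m, rfl⟩
  -- properness of the normalizer
  have hpowfix : ∀ k : ℕ, 0 < k → k < n → (Y ^ k) a0 ≠ a0 := by
    intro k hk0 hkn e
    have hYk : Y ^ k = 1 := by
      refine Equiv.ext fun t => ?_
      rw [Perm.one_apply]
      obtain ⟨m, hm⟩ := hcyc t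
      have hcomm : Y ^ k * Y ^ m = Y ^ m * Y ^ k := by
        rw [← zpow_natCast Y k, ← zpow_add, ← zpow_add, add_comm]
      calc (Y ^ k) t = (Y ^ k) ((Y ^ m) a0) := by rw [hm]
        _ = ((Y ^ k) * (Y ^ m)) a0 := rfl
        _ = ((Y ^ m) * (Y ^ k)) a0 := by rw [hcomm]
        _ = (Y ^ m) a0 := by rw [Perm.mul_apply, e]
        _ = t := hm
    have hd := orderOf_dvd_of_pow_eq_one hYk
    rw [hord] at hd
    have := Nat.le_of_dvd hk0 hd
    omega
  have hdiff : ∀ i j : ℕ, i < j → j ≤ 4 → (Y ^ i) a0 ≠ (Y ^ j) a0 := by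
    intro i j hij hj4 e
    have hsplit : (Y ^ i) ((Y ^ (j - i)) a0) = (Y ^ i) a0 := by
      rw [← Perm.mul_apply, ← pow_add]
      rw [show i + (j - i) = j by omega]
      exact e.symm
    have := (Y ^ i).injective hsplit
    exact hpowfix (j - i) (by omega) (by omega) this
  set p0 : Fin n := a0 with hp0
  set p1 : Fin n := Y a0 with hp1
  set p2 : Fin n := Y p1 with hp2
  set p3 : Fin n := Y p2 with hp3
  set p4 : Fin n := Y p3 with hp4
  have hp1e : p1 = (Y ^ 1) a0 := by simp [hp1]
  have hp2e : p2 = (Y ^ 2) a0 := by rw [hp2, hp1e, ← Perm.mul_apply, ← pow_succ']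
  have hp3e : p3 = (Y ^ 3) a0 := by rw [hp3, hp2e, ← Perm.mul_apply, ← pow_succ']
  have hp4e : p4 = (Y ^ 4) a0 := by rw [hp4, hp3e, ← Perm.mul_apply, ← pow_succ']
  have hp0e : p0 = (Y ^ 0) a0 := by simp [hp0]
  have h01 : p0 ≠ p1 := by rw [hp0e, hp1e]; exact hdiff 0 1 (by omega) (by omega)
  have h02 : p0 ≠ p2 := by rw [hp0e, hp2e]; exact hdiff 0 2 (by omega) (by omega)
  have h03 : p0 ≠ p3 := by rw [hp0e, hp3e]; exact hdiff 0 3 (by omega) (by omega)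
  have h12 : p1 ≠ p2 := by rw [hp1e, hp2e]; exact hdiff 1 2 (by omega) (by omega)
  have h13 : p1 ≠ p3 := by rw [hp1e, hp3e]; exact hdiff 1 3 (by omega) (by omega)
  have h23 : p2 ≠ p3 := by rw [hp2e, hp3e]; exact hdiff 2 3 (by omega) (by omega)
  have h24 : p2 ≠ p4 := by rw [hp2e, hp4e]; exact hdiff 2 4 (by omega) (by omega)
  have hNtop : Subgroup.normalizer ((Subgroup.zpowers y : Subgroup (AG n)) : Set (AG n)) ≠ ⊤ := by
    intro etop
    have hnorm : (Subgroup.zpowers y).Normal := Subgroup.normalizer_eq_top_iff.1 etop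
    set g : Perm (Fin n) := tc p0 p1 p2 with hg
    set gG : AG n := ⟨g, tc_mem h01 h02⟩ with hgG
    have hw : gG * y * gG⁻¹ ∈ Subgroup.zpowers y :=
      hnorm.conj_mem y (Subgroup.mem_zpowers y) gG
    obtain ⟨m, hm⟩ := Subgroup.mem_zpowers_iff.1 hw
    have hcommG : (gG * y * gG⁻¹) * y = y * (gG * y * gG⁻¹) := by
      rw [← hm]
      exact ((Commute.refl y).zpow_left m).eq
    have hcommP : (g * Y * g⁻¹) * Y = Y * (g * Y * g⁻¹) := by
      have := G_comm_to_perm hcommG.symm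
      push_cast at this
      exact this.symm
    have heval := congrArg (fun f => f a0) hcommP
    simp only [Perm.mul_apply] at heval
    -- LHS : g (Y (g⁻¹ (Y a0))) ; RHS : Y (g (Y (g⁻¹ a0)))
    have hg0 : g⁻¹ p1 = p0 := by
      rw [show p1 = g p0 from (tc_a h01 h12).symm]
      exact Equiv.symm_apply_apply _ _
    have hg2 : g⁻¹ a0 = p2 := by
      rw [show (a0 : Fin n) = g p2 from (tc_c h02 h12).symm]
      exact Equiv.symm_apply_apply _ _
    rw [show Y a0 = p1 from rfl, hg0, hg2] at heval
    rw [show Y p0 = p1 from rfl] at heval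
    rw [tc_b h01 h12] at heval
    rw [show Y p2 = p3 from rfl] at heval
    rw [tc_other h03.symm h13.symm h23.symm] at heval
    exact h24 heval
  have hadjd : (ncGraph (AG n)).Adj y yG' := by
    refine mkAdj ?_ (Subgroup.normalizer ((Subgroup.zpowers y : Subgroup (AG n)) : Set (AG n))) hyN hρN hNtop
    intro e
    exact hncρ (G_comm_to_perm e).symm
  refine ⟨yG', fun e => hρ1 (congrArg Subtype.val e), ⟨a0, hρa0⟩, Or.inr hadjd⟩
lemma exists_spouse (hn : 5 ≤ n) (y : AG n) (hy1 : y ≠ 1) :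
    ∃ y' : AG n, y' ≠ 1 ∧ (∃ j, (y' : Perm (Fin n)) j = j) ∧
      (y' = y ∨ (ncGraph (AG n)).Adj y y') := by
  by_cases hfy : ∃ j, (y : Perm (Fin n)) j = j
  · exact ⟨y, hy1, hfy, Or.inl rfl⟩
  push_neg at hfy
  have ha0lt : 0 < n := by omega
  set Y : Perm (Fin n) := (y : Perm (Fin n)) with hY
  set a0 : Fin n := ⟨0, ha0lt⟩ with ha0def
  have h1 : Y a0 ≠ a0 := hfy a0
  by_cases h2 : Y (Y a0) = a0
  · -- 2-cycle case, O' = {a0, Y a0}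
    obtain ⟨b, hba, hbya⟩ := fresh2 hn a0 (Y a0)
    obtain ⟨c, hca, hcya, hcb, hcyb⟩ := fresh4 hn a0 (Y a0) b (Y b)
    set O : Set (Fin n) := {a0, Y a0} with hO
    have hmemO : ∀ t, t ∈ O ↔ (t = a0 ∨ t = Y a0) := by
      intro t; simp [hO, Set.mem_insert_iff]
    set z : Perm (Fin n) := dt a0 (Y a0) b c with hz
    have hza : z a0 = Y a0 := dt_a hba.symm hca.symm
    have hzya : z (Y a0) = a0 := dt_b hbya.symm hcya.symm
    have hzb : z b = c := dt_c hca hcya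
    have hzc : z c = b := dt_d hba hbya
    set zG : AG n := ⟨z, dt_mem (Ne.symm h1) hcb.symm⟩ with hzG
    have hyO : y ∈ setStab O := by
      intro t
      rw [hmemO, hmemO]
      constructor
      · rintro (rfl | rfl)
        · exact Or.inr rfl
        · exact Or.inl h2
      · rintro (h | h)
        · exact Or.inr (Y.injective (h.trans h2.symm))
        · exact Or.inl (Y.injective h)
    have hzO : zG ∈ setStab O := by
      intro t
      rw [hmemO, hmemO]
      show _ ↔ (z t = a0 ∨ z t = Y a0)
      by_cases ht1 : t = a0
      · subst ht1; rw [hza]; simp [h1.symm]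
      by_cases ht2 : t = Y a0
      · subst ht2; rw [hzya]; simp
      by_cases ht3 : t = b
      · subst ht3
        rw [hzb]
        simp [ht1, ht2, hca, hcya]
      by_cases ht4 : t = c
      · subst ht4
        rw [hzc]
        simp [ht1, ht2, hba, hbya]
      · rw [dt_other ht1 ht2 ht3 ht4]
    have hnc : z * Y ≠ Y * z := by
      refine noncomm_crit z Y b (by rw [hzb]; exact hcb) ?_
      have h3 : Y b ≠ a0 := fun e => hbya (Y.injective (e.trans h2.symm))
      have h4 : Y b ≠ Y a0 := fun e => hba (Y.injective e)
      exact dt_other h3 h4 (hfy b) hcyb.symm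
    obtain ⟨d, hd1, hd2, hd3, hd4⟩ := fresh4 hn a0 (Y a0) b c
    refine ⟨zG, ?_, ⟨d, dt_other hd1 hd2 hd3 hd4⟩, Or.inr ?_⟩
    · intro e
      have he : z = 1 := congrArg Subtype.val e
      have hb' : z b = b := by rw [he]; rfl
      rw [hzb] at hb'; exact hcb hb' 
    · refine mkAdj ?_ (setStab O) hyO hzO
        (setStab_ne_top hn (show a0 ∈ O by rw [hmemO]; exact Or.inl rfl)
          (show b ∉ O by rw [hmemO]; push_neg; exact ⟨hba, hbya⟩))
      intro e
      exact hnc (G_comm_to_perm e.symm)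
  · by_cases hcyc : ∀ t, Y.SameCycle a0 t
    · exact spouse_ncycle hn y hy1 hfy hcyc
    · push_neg at hcyc
      obtain ⟨b, hb⟩ := hcyc
      set O : Set (Fin n) := {t | Y.SameCycle a0 t} with hO
      have ha0 : a0 ∈ O := ⟨0, by simp⟩
      have hstep : ∀ t, t ∈ O → Y t ∈ O := by
        intro t ht
        exact ht.trans ⟨1, by simp⟩
      have hstep' : ∀ t, Y t ∈ O → t ∈ O := by
        intro t ht
        refine ht.trans ⟨-1, ?_⟩
        simp [zpow_neg, zpow_one]
      have hyO : y ∈ setStab O := fun t => ⟨hstep t, hstep' t⟩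
      have hbO : b ∉ O := hb
      have hybO : Y b ∉ O := fun h => hb (hstep' b h)
      have ha1 : Y a0 ∈ O := hstep _ ha0
      have ha2 : Y (Y a0) ∈ O := hstep _ ha1
      have hba : a0 ≠ b := fun e => hbO (e ▸ ha0)
      have hbya : Y a0 ≠ b := fun e => hbO (e ▸ ha1)
      have hyba : a0 ≠ Y b := fun e => hybO (e ▸ ha0)
      have hybya : Y a0 ≠ Y b := fun e => hybO (e ▸ ha1)
      set z : Perm (Fin n) := dt a0 (Y a0) b (Y b) with hz
      have hza : z a0 = Y a0 := dt_a hba hyba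
      have hzya : z (Y a0) = a0 := dt_b hbya hybya
      have hzb : z b = Y b := dt_c hyba.symm hybya.symm
      have hzyb : z (Y b) = b := dt_d hba.symm hbya.symm
      set zG : AG n := ⟨z, dt_mem (Ne.symm h1) (hfy b).symm⟩ with hzG
      have hzO : zG ∈ setStab O := by
        intro t
        show _ ↔ z t ∈ O
        by_cases ht1 : t = a0
        · subst ht1; rw [hza]; exact ⟨fun _ => ha1, fun _ => ha0⟩
        by_cases ht2 : t = Y a0
        · subst ht2; rw [hzya]; exact ⟨fun _ => ha0, fun _ => ha1⟩
        by_cases ht3 : t = b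
        · subst ht3; rw [hzb]; exact ⟨fun h => absurd h hbO, fun h => absurd h hybO⟩
        by_cases ht4 : t = Y b
        · subst ht4; rw [hzyb]; exact ⟨fun h => absurd h hybO, fun h => absurd h hbO⟩
        · rw [dt_other ht1 ht2 ht3 ht4]
      have hnc : z * Y ≠ Y * z := by
        refine noncomm_crit z Y (Y a0) (by rw [hzya]; exact fun e => h1 e.symm) ?_
        have hq1 : Y (Y a0) ≠ a0 := h2
        have hq2 : Y (Y a0) ≠ Y a0 := fun e => h1 (Y.injective e)
        have hq3 : Y (Y a0) ≠ b := fun e => hbO (e ▸ ha2)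
        have hq4 : Y (Y a0) ≠ Y b := fun e => hybO (e ▸ ha2)
        exact dt_other hq1 hq2 hq3 hq4
      obtain ⟨d, hd1, hd2, hd3, hd4⟩ := fresh4 hn a0 (Y a0) b (Y b)
      refine ⟨zG, ?_, ⟨d, dt_other hd1 hd2 hd3 hd4⟩, Or.inr ?_⟩
      · intro e
        have he : z = 1 := congrArg Subtype.val e
        have hb' : z a0 = a0 := by rw [he]; rfl
        rw [hza] at hb'; exact h1 hb' 
      · refine mkAdj ?_ (setStab O) hyO hzO (setStab_ne_top hn ha0 hbO)
        intro e
        exact hnc (G_comm_to_perm e.symm)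
/-- Let `n ≥ 5` and let `x, y` be non-identity elements of `Aₙ`.  Then in `nc(Aₙ)`:
`d(x,y) ≤ 4`; if neither `x` nor `y` is a derangement then `d(x,y) ≤ 2`; and if at
least one of them is not a derangement then `d(x,y) ≤ 3`. -/
theorem nc_alternating_distance_bounds (n : ℕ) (hn : 5 ≤ n)
    (x y : alternatingGroup (Fin n)) (hx : x ≠ 1) (hy : y ≠ 1) :
    (∃ p : (ncGraph (alternatingGroup (Fin n))).Walk x y, p.length ≤ 4) ∧
    ((∃ i : Fin n, (x : Equiv.Perm (Fin n)) i = i) →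
      (∃ i : Fin n, (y : Equiv.Perm (Fin n)) i = i) →
      ∃ p : (ncGraph (alternatingGroup (Fin n))).Walk x y, p.length ≤ 2) ∧
    (((∃ i : Fin n, (x : Equiv.Perm (Fin n)) i = i) ∨
      (∃ i : Fin n, (y : Equiv.Perm (Fin n)) i = i)) →
      ∃ p : (ncGraph (alternatingGroup (Fin n))).Walk x y, p.length ≤ 3) := by
  obtain ⟨x', hx'1, hx'fix, hx'rel⟩ := exists_spouse hn x hx
  obtain ⟨y', hy'1, hy'fix, hy'rel⟩ := exists_spouse hn y hy
  have wx : ∃ w : (ncGraph (alternatingGroup (Fin n))).Walk x x', w.length ≤ 1 := by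
    rcases hx'rel with e | h
    · subst e; exact ⟨.nil, by simp⟩
    · exact ⟨.cons h .nil, by simp⟩
  have wy : ∃ w : (ncGraph (alternatingGroup (Fin n))).Walk y' y, w.length ≤ 1 := by
    rcases hy'rel with e | h
    · subst e; exact ⟨.nil, by simp⟩
    · exact ⟨.cons h.symm .nil, by simp⟩
  obtain ⟨w1, hw1⟩ := wx
  obtain ⟨w3, hw3⟩ := wy
  refine ⟨?_, ?_, ?_⟩
  · obtain ⟨w2, hw2⟩ := walk2 hn x' y' hx'1 hy'1 hx'fix hy'fix
    refine ⟨w1.append (w2.append w3), ?_⟩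
    simp only [SimpleGraph.Walk.length_append]
    omega
  · intro hex hey
    exact walk2 hn x y hx hy hex hey
  · intro h
    rcases h with hex | hey
    · obtain ⟨w2, hw2⟩ := walk2 hn x y' hx hy'1 hex hy'fix
      refine ⟨w2.append w3, ?_⟩
      simp only [SimpleGraph.Walk.length_append]
      omega
    · obtain ⟨w2, hw2⟩ := walk2 hn x' y hx'1 hy hx'fix hey
      refine ⟨w1.append w2, ?_⟩
      simp only [SimpleGraph.Walk.length_append]
      omega
end

section
/- Let n ≥ 5 and let x and y be derangements of the alternating group A_n such that the cyclic subgroup ⟨x⟩ acts intransitively on {1, …, n} and the cyclic subgroup ⟨y⟩ acts intransitively on {1, …, n}. Then d(x,y) ≤ 3 in the non-commuting, non-generating graph nc(A_n). -/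
namespace NCAux
open Finset Equiv Equiv.Perm

variable {n : ℕ}

/-- `f` preserves the finset `σ`. -/
def Pre (f : Equiv.Perm (Fin n)) (σ : Finset (Fin n)) : Prop := ∀ i, f i ∈ σ ↔ i ∈ σ

lemma pre_compl {f : Perm (Fin n)} {A : Finset (Fin n)} (h : Pre f A) :
    Pre f (univ \ A) := by
  intro i
  simp only [mem_sdiff, mem_univ, true_and]
  exact not_congr (h i)

lemma pre_union {f : Perm (Fin n)} {A B : Finset (Fin n)} (hA : Pre f A) (hB : Pre f B) :
    Pre f (A ∪ B) := by
  intro i; simp only [mem_union]; exact or_congr (hA i) (hB i)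

lemma pre_pair {f : Perm (Fin n)} {a b : Fin n} (h1 : f a = b) (h2 : f b = a) :
    Pre f ({a, b} : Finset (Fin n)) := by
  intro i
  simp only [mem_insert, mem_singleton]
  constructor
  · rintro (h | h)
    · exact Or.inr (f.injective (h.trans h2.symm))
    · exact Or.inl (f.injective (h.trans h1.symm))
  · rintro (rfl | rfl)
    · exact Or.inr h1
    · exact Or.inl h2

/-- The set-stabiliser of `σ` inside the alternating group. -/
def stabSub (σ : Finset (Fin n)) : Subgroup (alternatingGroup (Fin n)) where
  carrier := {g | Pre (g : Perm (Fin n)) σ}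
  one_mem' := by intro i; simp
  mul_mem' := by
    intro g h hg hh i
    have heq : ((g * h : alternatingGroup (Fin n)) : Perm (Fin n)) i = (g : Perm (Fin n)) ((h : Perm (Fin n)) i) := rfl
    rw [heq]
    exact (hg _).trans (hh i)
  inv_mem' := by
    intro g hg
    rw [Set.mem_setOf_eq] at *
    intro j
    have := hg ((g : Perm (Fin n))⁻¹ j)
    rw [show (g : Perm (Fin n)) ((g : Perm (Fin n))⁻¹ j) = j from (Equiv.eq_symm_apply _).mp rfl] at this
    exact this.symm

lemma closure_ne_top (hn : 5 ≤ n) (σ : Finset (Fin n))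
    (z w : alternatingGroup (Fin n)) (hz : Pre (z : Perm (Fin n)) σ)
    (hw : Pre (w : Perm (Fin n)) σ) {i0 j0 : Fin n} (hi0 : i0 ∈ σ) (hj0 : j0 ∉ σ) :
    Subgroup.closure ({z, w} : Set (alternatingGroup (Fin n))) ≠ ⊤ := by
  intro htop
  have hle : Subgroup.closure ({z, w} : Set (alternatingGroup (Fin n))) ≤ stabSub σ := by
    rw [Subgroup.closure_le]
    rintro g (rfl | rfl) <;> assumption
  -- find a third point
  have hij : i0 ≠ j0 := fun h => hj0 (h ▸ hi0)
  have hk : ∃ k, k ≠ i0 ∧ k ≠ j0 := by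
    have h2 : ((univ : Finset (Fin n)) \ {i0, j0}).Nonempty := by
      rw [← Finset.card_pos]
      have h1 : ({i0, j0} : Finset (Fin n)).card ≤ 2 := card_insert_le _ _ |>.trans (by simp)
      have h3 : (univ : Finset (Fin n)).card = n := by simp
      have := Finset.card_le_card_sdiff_add_card (s := (univ : Finset (Fin n))) (t := {i0, j0})
      omega
    obtain ⟨k, hk⟩ := h2
    simp only [mem_sdiff, mem_univ, true_and, mem_insert, mem_singleton, not_or] at hk
    exact ⟨k, hk.1, hk.2⟩
  obtain ⟨k, hki, hkj⟩ := hk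
  have hsign : Equiv.Perm.sign (Equiv.swap i0 k * Equiv.swap i0 j0) = 1 := by
    rw [map_mul, sign_swap (Ne.symm hki), sign_swap hij]; decide
  set g0 : alternatingGroup (Fin n) :=
    ⟨Equiv.swap i0 k * Equiv.swap i0 j0, Equiv.Perm.mem_alternatingGroup.mpr hsign⟩ with hg0
  have hg0mem : g0 ∈ stabSub σ := hle (htop ▸ Subgroup.mem_top g0)
  have happ : (g0 : Perm (Fin n)) i0 = j0 := by
    show (Equiv.swap i0 k * Equiv.swap i0 j0) i0 = j0
    rw [Equiv.Perm.mul_apply, Equiv.swap_apply_left,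
      Equiv.swap_apply_of_ne_of_ne (Ne.symm hij) hkj.symm]
  have := (hg0mem i0)
  rw [happ] at this
  exact hj0 (this.mpr hi0)

lemma adj_of (z w : alternatingGroup (Fin n))
    (hnc : (z : Perm (Fin n)) * (w : Perm (Fin n)) ≠ (w : Perm (Fin n)) * (z : Perm (Fin n)))
    (hcl : Subgroup.closure ({z, w} : Set (alternatingGroup (Fin n))) ≠ ⊤) :
    (ncGraph (alternatingGroup (Fin n))).Adj z w := by
  rw [ncGraph, SimpleGraph.fromRel_adj]
  refine ⟨fun h => hnc (by rw [h]), Or.inl ⟨fun h => hnc ?_, hcl⟩⟩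
  exact congrArg (Subtype.val) h




/-- application lemmas for a double transposition -/
lemma dsw_app_u {u v s t : Fin n} (hus : u ≠ s) (hut : u ≠ t) :
    (Equiv.swap u v * Equiv.swap s t) u = v := by
  rw [Equiv.Perm.mul_apply, Equiv.swap_apply_of_ne_of_ne hus hut, Equiv.swap_apply_left]

lemma dsw_app_v {u v s t : Fin n} (hvs : v ≠ s) (hvt : v ≠ t) :
    (Equiv.swap u v * Equiv.swap s t) v = u := by
  rw [Equiv.Perm.mul_apply, Equiv.swap_apply_of_ne_of_ne hvs hvt, Equiv.swap_apply_right]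

lemma dsw_app_s {u v s t : Fin n} (htu : t ≠ u) (htv : t ≠ v) :
    (Equiv.swap u v * Equiv.swap s t) s = t := by
  rw [Equiv.Perm.mul_apply, Equiv.swap_apply_left, Equiv.swap_apply_of_ne_of_ne htu htv]

lemma dsw_app_t {u v s t : Fin n} (hsu : s ≠ u) (hsv : s ≠ v) :
    (Equiv.swap u v * Equiv.swap s t) t = s := by
  rw [Equiv.Perm.mul_apply, Equiv.swap_apply_right, Equiv.swap_apply_of_ne_of_ne hsu hsv]

lemma dsw_app_other {u v s t i : Fin n} (hiu : i ≠ u) (hiv : i ≠ v) (his : i ≠ s)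
    (hit : i ≠ t) : (Equiv.swap u v * Equiv.swap s t) i = i := by
  rw [Equiv.Perm.mul_apply, Equiv.swap_apply_of_ne_of_ne his hit,
    Equiv.swap_apply_of_ne_of_ne hiu hiv]

lemma sign_dswap {u v s t : Fin n} (huv : u ≠ v) (hst : s ≠ t) :
    Equiv.Perm.sign (Equiv.swap u v * Equiv.swap s t) = 1 := by
  rw [map_mul, sign_swap huv, sign_swap hst]; decide

lemma pre_dswap {σ : Finset (Fin n)} {u v s t : Fin n}
    (h1 : u ∈ σ ↔ v ∈ σ) (h2 : s ∈ σ ↔ t ∈ σ)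
    (hus : u ≠ s) (hut : u ≠ t) (hvs : v ≠ s) (hvt : v ≠ t) :
    Pre (Equiv.swap u v * Equiv.swap s t) σ := by
  intro i
  by_cases hiu : i = u
  · subst hiu; rw [dsw_app_u hus hut]; exact h1.symm
  by_cases hiv : i = v
  · subst hiv; rw [dsw_app_v hvs hvt]; exact h1
  by_cases his : i = s
  · subst his; rw [dsw_app_s (Ne.symm hut) (Ne.symm hvt)]; exact h2.symm
  by_cases hit : i = t
  · subst hit; rw [dsw_app_t (Ne.symm hus) (Ne.symm hvs)]; exact h2
  · rw [dsw_app_other hiu hiv his hit]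

/-- the core non-commutation lemma -/
lemma nc_core {X : Perm (Fin n)} (hder : ∀ i, X i ≠ i) {A : Finset (Fin n)}
    (hA : Pre X A) {u v s t : Fin n} (hu : u ∈ A) (hv : v ∈ A) (hs : s ∉ A) (ht : t ∉ A)
    (huv : u ≠ v) (hst : s ≠ t)
    (H : ¬(X u = v ∧ X v = u ∧ X s = t ∧ X t = s)) :
    Equiv.swap u v * Equiv.swap s t * X ≠ X * (Equiv.swap u v * Equiv.swap s t) := by
  set z := Equiv.swap u v * Equiv.swap s t with hzdef
  have hus : u ≠ s := fun h => hs (h ▸ hu)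
  have hut : u ≠ t := fun h => ht (h ▸ hu)
  have hvs : v ≠ s := fun h => hs (h ▸ hv)
  have hvt : v ≠ t := fun h => ht (h ▸ hv)
  intro heq
  have hpt : ∀ i, z (X i) = X (z i) := by
    intro i
    have := congrArg (fun f => f.toFun i) heq
    simpa using this
  by_cases h1 : X u = v
  · by_cases h2 : X v = u
    · by_cases h3 : X s = t
      · have h4 : X t ≠ s := fun h4 => H ⟨h1, h2, h3, h4⟩
        have e1 : z (X t) = X t := by
          have hXtA : X t ∉ A := fun h => ht ((hA t).mp h)
          exact dsw_app_other (fun h => hXtA (h ▸ hu)) (fun h => hXtA (h ▸ hv)) h4 (hder t)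
        have e2 : X (z t) = t := by rw [hzdef, dsw_app_t (Ne.symm hus) (Ne.symm hvs), h3]
        rw [hpt t, e2] at e1
        exact hder t e1.symm
      · have e1 : z (X s) = X s := by
          have hXsA : X s ∉ A := fun h => hs ((hA s).mp h)
          exact dsw_app_other (fun h => hXsA (h ▸ hu)) (fun h => hXsA (h ▸ hv)) (hder s) h3
        have e2 : X (z s) = X t := by rw [hzdef, dsw_app_s (Ne.symm hut) (Ne.symm hvt)]
        rw [hpt s, e2] at e1
        exact hst (X.injective e1.symm)
    · have e1 : z (X v) = X v := by
        have hXvA : X v ∈ A := (hA v).mpr hv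
        exact dsw_app_other h2 (hder v) (fun h => hs (h ▸ hXvA)) (fun h => ht (h ▸ hXvA))
      have e2 : X (z v) = v := by rw [hzdef, dsw_app_v hvs hvt, h1]
      rw [hpt v, e2] at e1
      exact hder v e1.symm
  · have e1 : z (X u) = X u := by
      have hXuA : X u ∈ A := (hA u).mpr hu
      exact dsw_app_other (hder u) h1 (fun h => hs (h ▸ hXuA)) (fun h => ht (h ▸ hXuA))
    have e2 : X (z u) = X v := by rw [hzdef, dsw_app_u hus hut]
    rw [hpt u, e2] at e1
    exact huv (X.injective e1.symm)

lemma dd_noncomm {u v v' s t : Fin n} (huv : u ≠ v) (huv' : u ≠ v') (hvv' : v ≠ v')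
    (hvs : v ≠ s) (hvt : v ≠ t) (hv's : v' ≠ s) (hv't : v' ≠ t)
    (hus : u ≠ s) (hut : u ≠ t) (hst : s ≠ t) :
    (Equiv.swap u v * Equiv.swap s t) * (Equiv.swap u v' * Equiv.swap s t) ≠
      (Equiv.swap u v' * Equiv.swap s t) * (Equiv.swap u v * Equiv.swap s t) := by
  intro heq
  have h1 : ((Equiv.swap u v * Equiv.swap s t) * (Equiv.swap u v' * Equiv.swap s t)) v = u := by
    rw [Equiv.Perm.mul_apply, dsw_app_other (Ne.symm huv) hvv' hvs hvt, dsw_app_v hvs hvt]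
  have h2 : ((Equiv.swap u v' * Equiv.swap s t) * (Equiv.swap u v * Equiv.swap s t)) v = v' := by
    rw [Equiv.Perm.mul_apply, dsw_app_v hvs hvt, dsw_app_u hus hut]
  rw [heq, h2] at h1
  exact huv' h1.symm



lemma two_le_card {S : Finset (Fin n)} {i j : Fin n} (hi : i ∈ S) (hj : j ∈ S)
    (hij : i ≠ j) : 2 ≤ S.card :=
  Finset.one_lt_card.mpr ⟨i, hi, j, hj, hij⟩

lemma exists_avoid1 {S : Finset (Fin n)} (h : 2 ≤ S.card) (a : Fin n) :
    ∃ v ∈ S, v ≠ a :=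
  Finset.exists_mem_ne h a

lemma exists_avoid2 {S : Finset (Fin n)} (h : 3 ≤ S.card) (a b : Fin n) :
    ∃ v ∈ S, v ≠ a ∧ v ≠ b := by
  have h2 : (S \ {a, b}).Nonempty := by
    rw [← Finset.card_pos]
    have h1 : ({a, b} : Finset (Fin n)).card ≤ 2 := card_insert_le _ _ |>.trans (by simp)
    have := Finset.card_le_card_sdiff_add_card (s := S) (t := {a, b})
    omega
  obtain ⟨v, hv⟩ := h2
  simp only [mem_sdiff, mem_insert, mem_singleton, not_or] at hv
  exact ⟨v, hv.1, hv.2.1, hv.2.2⟩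

lemma exists3 {S : Finset (Fin n)} (h : 3 ≤ S.card) :
    ∃ c1 ∈ S, ∃ c2 ∈ S, ∃ c3 ∈ S, c1 ≠ c2 ∧ c1 ≠ c3 ∧ c2 ≠ c3 := by
  obtain ⟨c1, hc1⟩ := Finset.card_pos.mp (show 0 < S.card by omega)
  obtain ⟨c2, hc2, h12⟩ := exists_avoid1 (S := S) (by omega) c1
  obtain ⟨c3, hc3, h31, h32⟩ := exists_avoid2 (S := S) h c1 c2
  exact ⟨c1, hc1, c2, hc2, c3, hc3, Ne.symm h12, Ne.symm h31, Ne.symm h32⟩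

lemma goodpair {S : Finset (Fin n)} (h3 : 3 ≤ S.card) (X Y : Perm (Fin n)) :
    ∃ s ∈ S, ∃ t ∈ S, s ≠ t ∧ ¬(X s = t ∧ X t = s) ∧ ¬(Y s = t ∧ Y t = s) := by
  obtain ⟨c1, hc1, c2, hc2, c3, hc3, h12, h13, h23⟩ := exists3 h3
  by_cases bx12 : X c1 = c2 ∧ X c2 = c1
  · -- pair (c1,c3) not X-swapped
    have nx13 : ¬(X c1 = c3 ∧ X c3 = c1) := fun ⟨e, _⟩ => h23 (bx12.1.symm.trans e)
    by_cases by13 : Y c1 = c3 ∧ Y c3 = c1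
    · have nx23 : ¬(X c2 = c3 ∧ X c3 = c2) := fun ⟨e, _⟩ => h13 (bx12.2.symm.trans e)
      have ny23 : ¬(Y c2 = c3 ∧ Y c3 = c2) := fun ⟨_, e⟩ => h12 (by13.2.symm.trans e)
      exact ⟨c2, hc2, c3, hc3, h23, nx23, ny23⟩
    · exact ⟨c1, hc1, c3, hc3, h13, nx13, by13⟩
  · by_cases by12 : Y c1 = c2 ∧ Y c2 = c1
    · have ny13 : ¬(Y c1 = c3 ∧ Y c3 = c1) := fun ⟨e, _⟩ => h23 (by12.1.symm.trans e)
      by_cases bx13 : X c1 = c3 ∧ X c3 = c1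
      · have nx23 : ¬(X c2 = c3 ∧ X c3 = c2) := fun ⟨_, e⟩ => h12 (bx13.2.symm.trans e)
        have ny23 : ¬(Y c2 = c3 ∧ Y c3 = c2) := fun ⟨e, _⟩ => h13 (by12.2.symm.trans e)
        exact ⟨c2, hc2, c3, hc3, h23, nx23, ny23⟩
      · exact ⟨c1, hc1, c3, hc3, h13, bx13, ny13⟩
    · exact ⟨c1, hc1, c2, hc2, h12, bx12, by12⟩

lemma sign5 {X : Perm (Fin n)} (hsgn : Equiv.Perm.sign X = 1) (hder : ∀ i, X i ≠ i)
    (a : Fin n) (h2 : X (X a) = a) (hn5 : n = 5) : False := by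
  set b := X a with hb
  have hab : a ≠ b := fun h => hder a h.symm
  set Y := X * Equiv.swap a b with hY
  have Ya : Y a = a := by
    show (X * Equiv.swap a b) a = a
    rw [Equiv.Perm.mul_apply, Equiv.swap_apply_left]; exact h2
  have Yb : Y b = b := by
    show (X * Equiv.swap a b) b = b
    rw [Equiv.Perm.mul_apply, Equiv.swap_apply_right]
  have Yother : ∀ i, i ≠ a → i ≠ b → Y i = X i := by
    intro i hia hib
    show (X * Equiv.swap a b) i = X i
    rw [Equiv.Perm.mul_apply, Equiv.swap_apply_of_ne_of_ne hia hib]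
  have hsupp : Y.support = univ \ {a, b} := by
    ext i
    simp only [Equiv.Perm.mem_support, mem_sdiff, mem_univ, true_and, mem_insert,
      mem_singleton, not_or]
    constructor
    · intro hYi
      refine ⟨fun h => hYi (h ▸ Ya), fun h => hYi (h ▸ Yb)⟩
    · rintro ⟨hia, hib⟩
      rw [Yother i hia hib]
      exact hder i
  have hcard : Y.support.card = 3 := by
    rw [hsupp, card_sdiff_of_subset (subset_univ _)]
    have : ({a, b} : Finset (Fin n)).card = 2 := by
      rw [card_insert_of_notMem (notMem_singleton.mpr hab), card_singleton]
    simp [this, hn5]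
  have h3 : Y.IsThreeCycle := card_support_eq_three_iff.mp hcard
  have hsY : Equiv.Perm.sign Y = 1 := h3.sign
  rw [show Y = X * Equiv.swap a b from rfl, map_mul, hsgn, sign_swap hab] at hsY
  exact absurd hsY (by decide)

lemma sign6 {X : Perm (Fin n)} (hsgn : Equiv.Perm.sign X = 1) {p q g h s t : Fin n}
    (hpq : p ≠ q) (hgh : g ≠ h) (hst : s ≠ t)
    (hpg : p ≠ g) (hph : p ≠ h) (hps : p ≠ s) (hpt : p ≠ t)
    (hqg : q ≠ g) (hqh : q ≠ h) (hqs : q ≠ s) (hqt : q ≠ t)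
    (hgs : g ≠ s) (hgt : g ≠ t) (hhs : h ≠ s) (hht : h ≠ t)
    (e1 : X p = q) (e2 : X q = p) (e3 : X g = h) (e4 : X h = g)
    (e5 : X s = t) (e6 : X t = s)
    (hcover : ∀ i : Fin n, i = p ∨ i = q ∨ i = g ∨ i = h ∨ i = s ∨ i = t) : False := by
  have hX : X = Equiv.swap p q * (Equiv.swap g h * Equiv.swap s t) := by
    ext i
    rcases hcover i with rfl | rfl | rfl | rfl | rfl | rfl
    · rw [e1, Equiv.Perm.mul_apply, Equiv.Perm.mul_apply,
        Equiv.swap_apply_of_ne_of_ne hps hpt, Equiv.swap_apply_of_ne_of_ne hpg hph,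
        Equiv.swap_apply_left]
    · rw [e2, Equiv.Perm.mul_apply, Equiv.Perm.mul_apply,
        Equiv.swap_apply_of_ne_of_ne hqs hqt, Equiv.swap_apply_of_ne_of_ne hqg hqh,
        Equiv.swap_apply_right]
    · rw [e3, Equiv.Perm.mul_apply, Equiv.Perm.mul_apply,
        Equiv.swap_apply_of_ne_of_ne hgs hgt, Equiv.swap_apply_left,
        Equiv.swap_apply_of_ne_of_ne (Ne.symm hph) (Ne.symm hqh)]
    · rw [e4, Equiv.Perm.mul_apply, Equiv.Perm.mul_apply,
        Equiv.swap_apply_of_ne_of_ne hhs hht, Equiv.swap_apply_right,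
        Equiv.swap_apply_of_ne_of_ne (Ne.symm hpg) (Ne.symm hqg)]
    · rw [e5, Equiv.Perm.mul_apply, Equiv.Perm.mul_apply, Equiv.swap_apply_left,
        Equiv.swap_apply_of_ne_of_ne (Ne.symm hgt) (Ne.symm hht),
        Equiv.swap_apply_of_ne_of_ne (Ne.symm hpt) (Ne.symm hqt)]
    · rw [e6, Equiv.Perm.mul_apply, Equiv.Perm.mul_apply, Equiv.swap_apply_right,
        Equiv.swap_apply_of_ne_of_ne (Ne.symm hgs) (Ne.symm hhs),
        Equiv.swap_apply_of_ne_of_ne (Ne.symm hps) (Ne.symm hqs)]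
  rw [hX, map_mul, map_mul, sign_swap hpq, sign_swap hgh, sign_swap hst] at hsgn
  exact absurd hsgn (by decide)


section Build
variable (x y : alternatingGroup (Fin n))

lemma buildW3 (hn : 5 ≤ n)
    (hxd : ∀ i, (x : Perm (Fin n)) i ≠ i) (hyd : ∀ i, (y : Perm (Fin n)) i ≠ i)
    (A B : Finset (Fin n)) (hA : Pre (x : Perm (Fin n)) A) (hB : Pre (y : Perm (Fin n)) B)
    (u v v' s t : Fin n)
    (huA : u ∈ A) (huB : u ∈ B) (hvA : v ∈ A) (hv'B : v' ∈ B)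
    (hsA : s ∉ A) (hsB : s ∉ B) (htA : t ∉ A) (htB : t ∉ B)
    (huv : u ≠ v) (huv' : u ≠ v') (hvv' : v ≠ v') (hst : s ≠ t)
    (Hx : ¬((x : Perm (Fin n)) u = v ∧ (x : Perm (Fin n)) v = u ∧
      (x : Perm (Fin n)) s = t ∧ (x : Perm (Fin n)) t = s))
    (Hy : ¬((y : Perm (Fin n)) u = v' ∧ (y : Perm (Fin n)) v' = u ∧
      (y : Perm (Fin n)) s = t ∧ (y : Perm (Fin n)) t = s)) :
    ∃ p : (ncGraph (alternatingGroup (Fin n))).Walk x y, p.length ≤ 3 := by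
  have hus : u ≠ s := fun h => hsA (h ▸ huA)
  have hut : u ≠ t := fun h => htA (h ▸ huA)
  have hvs : v ≠ s := fun h => hsA (h ▸ hvA)
  have hvt : v ≠ t := fun h => htA (h ▸ hvA)
  have hv's : v' ≠ s := fun h => hsB (h ▸ hv'B)
  have hv't : v' ≠ t := fun h => htB (h ▸ hv'B)
  set z : alternatingGroup (Fin n) :=
    ⟨Equiv.swap u v * Equiv.swap s t, Equiv.Perm.mem_alternatingGroup.mpr (sign_dswap huv hst)⟩
    with hz
  set w : alternatingGroup (Fin n) :=
    ⟨Equiv.swap u v' * Equiv.swap s t, Equiv.Perm.mem_alternatingGroup.mpr (sign_dswap huv' hst)⟩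
    with hw
  have hzA : Pre (z : Perm (Fin n)) A :=
    pre_dswap (iff_of_true huA hvA) (iff_of_false hsA htA) hus hut hvs hvt
  have hwB : Pre (w : Perm (Fin n)) B :=
    pre_dswap (iff_of_true huB hv'B) (iff_of_false hsB htB) hus hut hv's hv't
  have a1 : (ncGraph (alternatingGroup (Fin n))).Adj x z := by
    refine adj_of x z (fun h => ?_) (closure_ne_top hn A x z hA hzA huA hsA)
    exact nc_core hxd hA huA hvA hsA htA huv hst Hx h.symm
  have hzst : Pre (z : Perm (Fin n)) ({s, t} : Finset (Fin n)) := by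
    refine pre_dswap (iff_of_false ?_ ?_) (iff_of_true ?_ ?_) hus hut hvs hvt <;>
      simp [hus, hut, hvs, hvt]
  have hwst : Pre (w : Perm (Fin n)) ({s, t} : Finset (Fin n)) := by
    refine pre_dswap (iff_of_false ?_ ?_) (iff_of_true ?_ ?_) hus hut hv's hv't <;>
      simp [hus, hut, hv's, hv't]
  have a2 : (ncGraph (alternatingGroup (Fin n))).Adj z w := by
    refine adj_of z w ?_ (closure_ne_top hn ({s, t} : Finset (Fin n)) z w hzst hwst
      (i0 := s) (j0 := u) (by simp) (by simp [hus, hut]))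
    exact dd_noncomm huv huv' hvv' hvs hvt hv's hv't hus hut hst
  have a3 : (ncGraph (alternatingGroup (Fin n))).Adj w y := by
    refine adj_of w y ?_ (closure_ne_top hn B w y hwB hB huB hsB)
    exact nc_core hyd hB huB hv'B hsB htB huv' hst Hy
  exact ⟨SimpleGraph.Walk.cons a1 (SimpleGraph.Walk.cons a2
    (SimpleGraph.Walk.cons a3 SimpleGraph.Walk.nil)), by simp⟩

lemma buildW2 (hn : 5 ≤ n)
    (hxd : ∀ i, (x : Perm (Fin n)) i ≠ i) (hyd : ∀ i, (y : Perm (Fin n)) i ≠ i)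
    (D : Finset (Fin n)) (hDx : Pre (x : Perm (Fin n)) D) (hDy : Pre (y : Perm (Fin n)) D)
    (u v s t : Fin n)
    (huD : u ∈ D) (hvD : v ∈ D) (hsD : s ∉ D) (htD : t ∉ D)
    (huv : u ≠ v) (hst : s ≠ t)
    (Hx : ¬((x : Perm (Fin n)) u = v ∧ (x : Perm (Fin n)) v = u ∧
      (x : Perm (Fin n)) s = t ∧ (x : Perm (Fin n)) t = s))
    (Hy : ¬((y : Perm (Fin n)) u = v ∧ (y : Perm (Fin n)) v = u ∧
      (y : Perm (Fin n)) s = t ∧ (y : Perm (Fin n)) t = s)) :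
    ∃ p : (ncGraph (alternatingGroup (Fin n))).Walk x y, p.length ≤ 3 := by
  have hus : u ≠ s := fun h => hsD (h ▸ huD)
  have hut : u ≠ t := fun h => htD (h ▸ huD)
  have hvs : v ≠ s := fun h => hsD (h ▸ hvD)
  have hvt : v ≠ t := fun h => htD (h ▸ hvD)
  set z : alternatingGroup (Fin n) :=
    ⟨Equiv.swap u v * Equiv.swap s t, Equiv.Perm.mem_alternatingGroup.mpr (sign_dswap huv hst)⟩
    with hz
  have hzD : Pre (z : Perm (Fin n)) D :=
    pre_dswap (iff_of_true huD hvD) (iff_of_false hsD htD) hus hut hvs hvt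
  have a1 : (ncGraph (alternatingGroup (Fin n))).Adj x z := by
    refine adj_of x z (fun h => ?_) (closure_ne_top hn D x z hDx hzD huD hsD)
    exact nc_core hxd hDx huD hvD hsD htD huv hst Hx h.symm
  have a2 : (ncGraph (alternatingGroup (Fin n))).Adj z y := by
    refine adj_of z y ?_ (closure_ne_top hn D z y hzD hDy huD hsD)
    exact nc_core hyd hDy huD hvD hsD htD huv hst Hy
  exact ⟨SimpleGraph.Walk.cons a1 (SimpleGraph.Walk.cons a2 SimpleGraph.Walk.nil), by simp⟩


lemma step1 (hn : 5 ≤ n)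
    (hxd : ∀ i, (x : Perm (Fin n)) i ≠ i) (hyd : ∀ i, (y : Perm (Fin n)) i ≠ i)
    (A B : Finset (Fin n)) (hA : Pre (x : Perm (Fin n)) A) (hB : Pre (y : Perm (Fin n)) B)
    (hU : (A ∩ B).Nonempty) (hC : 3 ≤ ((univ \ A) ∩ (univ \ B)).card) :
    ∃ p : (ncGraph (alternatingGroup (Fin n))).Walk x y, p.length ≤ 3 := by
  obtain ⟨u, hu⟩ := hU
  have huA : u ∈ A := (mem_inter.mp hu).1
  have huB : u ∈ B := (mem_inter.mp hu).2
  obtain ⟨s, hsC, t, htC, hst, HxP, HyP⟩ := goodpair hC (x : Perm (Fin n)) (y : Perm (Fin n))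
  have hsA : s ∉ A := by simp only [mem_inter, mem_sdiff, mem_univ, true_and] at hsC; exact hsC.1
  have hsB : s ∉ B := by simp only [mem_inter, mem_sdiff, mem_univ, true_and] at hsC; exact hsC.2
  have htA : t ∉ A := by simp only [mem_inter, mem_sdiff, mem_univ, true_and] at htC; exact htC.1
  have htB : t ∉ B := by simp only [mem_inter, mem_sdiff, mem_univ, true_and] at htC; exact htC.2
  have Hx : ∀ v0 : Fin n, ¬((x : Perm (Fin n)) u = v0 ∧ (x : Perm (Fin n)) v0 = u ∧
      (x : Perm (Fin n)) s = t ∧ (x : Perm (Fin n)) t = s) :=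
    fun v0 ⟨_, _, e3, e4⟩ => HxP ⟨e3, e4⟩
  have Hy : ∀ v0 : Fin n, ¬((y : Perm (Fin n)) u = v0 ∧ (y : Perm (Fin n)) v0 = u ∧
      (y : Perm (Fin n)) s = t ∧ (y : Perm (Fin n)) t = s) :=
    fun v0 ⟨_, _, e3, e4⟩ => HyP ⟨e3, e4⟩
  have hXuA : (x : Perm (Fin n)) u ∈ A := (hA u).mpr huA
  have hYuB : (y : Perm (Fin n)) u ∈ B := (hB u).mpr huB
  have h2A : 2 ≤ A.card := two_le_card hXuA huA (hxd u)
  have h2B : 2 ≤ B.card := two_le_card hYuB huB (hyd u)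
  by_cases h3A : 3 ≤ A.card
  · obtain ⟨v', hv'B, hv'u⟩ := exists_avoid1 h2B u
    obtain ⟨v, hvA, hvu, hvv'⟩ := exists_avoid2 h3A u v'
    exact buildW3 x y hn hxd hyd A B hA hB u v v' s t huA huB hvA hv'B hsA hsB htA htB
      (Ne.symm hvu) (Ne.symm hv'u) hvv' hst (Hx v) (Hy v')
  · have hA2 : A.card = 2 := by omega
    have hpair : ({u, (x : Perm (Fin n)) u} : Finset (Fin n)).card = 2 := by
      rw [card_insert_of_notMem (notMem_singleton.mpr (Ne.symm (hxd u))), card_singleton]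
    have hAeq : A = {u, (x : Perm (Fin n)) u} := by
      refine (Finset.eq_of_subset_of_card_le ?_ (by omega)).symm
      intro i hi
      rcases mem_insert.mp hi with rfl | hi
      · exact huA
      · rw [mem_singleton.mp hi]; exact hXuA
    by_cases hBsub : B ⊆ {u, (x : Perm (Fin n)) u}
    · have hBeq : B = {u, (x : Perm (Fin n)) u} :=
        Finset.eq_of_subset_of_card_le hBsub (by omega)
      have hDy : Pre (y : Perm (Fin n)) A := by rw [hAeq, ← hBeq]; exact hB
      exact buildW2 x y hn hxd hyd A hA hDy u ((x : Perm (Fin n)) u) s t huA hXuA hsA htA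
        (Ne.symm (hxd u)) hst (Hx _) (Hy _)
    · obtain ⟨v', hv'B, hv'ne⟩ := Finset.not_subset.mp hBsub
      simp only [mem_insert, mem_singleton, not_or] at hv'ne
      exact buildW3 x y hn hxd hyd A B hA hB u ((x : Perm (Fin n)) u) v' s t huA huB hXuA hv'B
        hsA hsB htA htB (Ne.symm (hxd u)) (Ne.symm hv'ne.1) (Ne.symm hv'ne.2) hst (Hx _) (Hy v')


lemma shapeA (hn : 5 ≤ n)
    (hxd : ∀ i, (x : Perm (Fin n)) i ≠ i) (hyd : ∀ i, (y : Perm (Fin n)) i ≠ i)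
    (Sx Sy : Finset (Fin n)) (hSx : Pre (x : Perm (Fin n)) Sx) (hSy : Pre (y : Perm (Fin n)) Sy)
    (hdisj : Sx ∩ Sy = ∅) (hx2 : Sx.card = 2) (hy2 : Sy.card = 2) :
    ∃ p : (ncGraph (alternatingGroup (Fin n))).Walk x y, p.length ≤ 3 := by
  obtain ⟨e, f, hef, hSxe⟩ := Finset.card_eq_two.mp hx2
  obtain ⟨g, h, hgh, hSye⟩ := Finset.card_eq_two.mp hy2
  have heSx : e ∈ Sx := by rw [hSxe]; simp
  have hfSx : f ∈ Sx := by rw [hSxe]; simp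
  have hgSy : g ∈ Sy := by rw [hSye]; simp
  have hhSy : h ∈ Sy := by rw [hSye]; simp
  have hdisj' : ∀ i, i ∈ Sx → i ∉ Sy := by
    intro i h1 h2
    have : i ∈ Sx ∩ Sy := mem_inter.mpr ⟨h1, h2⟩
    rw [hdisj] at this; exact absurd this (notMem_empty i)
  have hXe : (x : Perm (Fin n)) e = f := by
    have h1 : (x : Perm (Fin n)) e ∈ Sx := (hSx e).mpr heSx
    rw [hSxe, mem_insert, mem_singleton] at h1
    rcases h1 with h1 | h1
    · exact absurd h1 (hxd e)
    · exact h1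
  have hXf : (x : Perm (Fin n)) f = e := by
    have h1 : (x : Perm (Fin n)) f ∈ Sx := (hSx f).mpr hfSx
    rw [hSxe, mem_insert, mem_singleton] at h1
    rcases h1 with h1 | h1
    · exact h1
    · exact absurd h1 (hxd f)
  have hYg : (y : Perm (Fin n)) g = h := by
    have h1 : (y : Perm (Fin n)) g ∈ Sy := (hSy g).mpr hgSy
    rw [hSye, mem_insert, mem_singleton] at h1
    rcases h1 with h1 | h1
    · exact absurd h1 (hyd g)
    · exact h1
  by_cases h6 : 6 ≤ n
  · by_cases hby : (y : Perm (Fin n)) e = f ∧ (y : Perm (Fin n)) f = e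
    · -- {e,f} is invariant under both
      have hDy : Pre (y : Perm (Fin n)) Sx := by rw [hSxe]; exact pre_pair hby.1 hby.2
      have hcompl : 3 ≤ (univ \ Sx).card := by
        rw [card_sdiff_of_subset (subset_univ _), hx2]
        simp only [card_univ, Fintype.card_fin]
        omega
      obtain ⟨s, hsS, t, htS, hst, HxP, HyP⟩ :=
        goodpair hcompl (x : Perm (Fin n)) (y : Perm (Fin n))
      have hsD : s ∉ Sx := (mem_sdiff.mp hsS).2
      have htD : t ∉ Sx := (mem_sdiff.mp htS).2
      exact buildW2 x y hn hxd hyd Sx hSx hDy e f s t heSx hfSx hsD htD hef hst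
        (fun ⟨_, _, e3, e4⟩ => HxP ⟨e3, e4⟩) (fun ⟨_, _, e3, e4⟩ => HyP ⟨e3, e4⟩)
    · -- length-3 walk
      have hP4card : 2 ≤ (univ \ (Sx ∪ Sy)).card := by
        have hdxy : Disjoint Sx Sy := Finset.disjoint_iff_inter_eq_empty.mpr hdisj
        rw [card_sdiff_of_subset (subset_univ _), card_union_of_disjoint hdxy, hx2, hy2]
        simp only [card_univ, Fintype.card_fin]
        omega
      obtain ⟨v, hvP4, hvXg⟩ := exists_avoid1 hP4card ((x : Perm (Fin n)) g)
      have hvSx : v ∉ Sx := fun hh =>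
        (mem_sdiff.mp hvP4).2 (mem_union.mpr (Or.inl hh))
      have hvSy : v ∉ Sy := fun hh =>
        (mem_sdiff.mp hvP4).2 (mem_union.mpr (Or.inr hh))
      have huA : g ∈ univ \ Sx := mem_sdiff.mpr ⟨mem_univ _, fun hh => (hdisj' g hh) hgSy⟩
      have hvA : v ∈ univ \ Sx := mem_sdiff.mpr ⟨mem_univ _, hvSx⟩
      have hsA : e ∉ univ \ Sx := fun hh => (mem_sdiff.mp hh).2 heSx
      have htA : f ∉ univ \ Sx := fun hh => (mem_sdiff.mp hh).2 hfSx
      exact buildW3 x y hn hxd hyd (univ \ Sx) Sy (pre_compl hSx) hSy g v h e f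
        huA hgSy hvA hhSy hsA (hdisj' e heSx) htA (hdisj' f hfSx)
        (fun hh => hvSy (hh ▸ hgSy)) hgh (fun hh => hvSy (hh ▸ hhSy)) hef
        (fun ⟨e1, _⟩ => hvXg e1.symm) (fun ⟨_, _, e3, e4⟩ => hby ⟨e3, e4⟩)
  · -- n = 5 : impossible by a sign argument
    have hn5 : n = 5 := by omega
    exact (sign5 (Equiv.Perm.mem_alternatingGroup.mp x.2) hxd e
      (by rw [hXe, hXf]) hn5).elim


lemma shapeC (hn : 5 ≤ n)
    (hxd : ∀ i, (x : Perm (Fin n)) i ≠ i) (hyd : ∀ i, (y : Perm (Fin n)) i ≠ i)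
    (Sx Sy : Finset (Fin n)) (hSx : Pre (x : Perm (Fin n)) Sx) (hSy : Pre (y : Perm (Fin n)) Sy)
    (h1 : 1 ≤ (Sx ∩ Sy).card)
    (h2 : 1 ≤ (Sx \ Sy).card) (h2' : (Sx \ Sy).card ≤ 2)
    (h3 : 1 ≤ (Sy \ Sx).card) (h3' : (Sy \ Sx).card ≤ 2)
    (h4 : (univ \ (Sx ∪ Sy)).card = 2) :
    ∃ p : (ncGraph (alternatingGroup (Fin n))).Walk x y, p.length ≤ 3 := by
  obtain ⟨u, hu⟩ := Finset.card_pos.mp h1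
  have huSx : u ∈ Sx := (mem_inter.mp hu).1
  have huSy : u ∈ Sy := (mem_inter.mp hu).2
  obtain ⟨s, t, hst, hP4⟩ := Finset.card_eq_two.mp h4
  have hsect : s ∈ univ \ (Sx ∪ Sy) := by rw [hP4]; simp
  have htect : t ∈ univ \ (Sx ∪ Sy) := by rw [hP4]; simp
  have hsSx : s ∉ Sx := fun hh => (mem_sdiff.mp hsect).2 (mem_union.mpr (Or.inl hh))
  have hsSy : s ∉ Sy := fun hh => (mem_sdiff.mp hsect).2 (mem_union.mpr (Or.inr hh))
  have htSx : t ∉ Sx := fun hh => (mem_sdiff.mp htect).2 (mem_union.mpr (Or.inl hh))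
  have htSy : t ∉ Sy := fun hh => (mem_sdiff.mp htect).2 (mem_union.mpr (Or.inr hh))
  -- arithmetic preliminaries
  have hcompl : #(univ \ (Sx ∪ Sy)) = n - #(Sx ∪ Sy) := by
    rw [card_sdiff_of_subset (subset_univ _), card_univ, Fintype.card_fin]
  have hle : #(Sx ∪ Sy) ≤ n := by
    have := Finset.card_le_univ (Sx ∪ Sy)
    simpa using this
  have hu1 : #(Sy \ Sx) + #Sx = #(Sx ∪ Sy) := by
    rw [union_comm]; exact card_sdiff_add_card Sy Sx
  have hu2 : #(Sx \ Sy) + #Sy = #(Sx ∪ Sy) := card_sdiff_add_card Sx Sy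
  have hpart : ∀ i : Fin n, i ∈ Sx ∨ i ∈ Sy \ Sx ∨ i = s ∨ i = t := by
    intro i
    by_cases hiSx : i ∈ Sx
    · exact Or.inl hiSx
    by_cases hiSy : i ∈ Sy
    · exact Or.inr (Or.inl (mem_sdiff.mpr ⟨hiSy, hiSx⟩))
    · have : i ∈ univ \ (Sx ∪ Sy) :=
        mem_sdiff.mpr ⟨mem_univ _, fun hh => (mem_union.mp hh).elim hiSx hiSy⟩
      rw [hP4, mem_insert, mem_singleton] at this
      exact Or.inr (Or.inr this)
  have hpart' : ∀ i : Fin n, i ∈ Sy ∨ i ∈ Sx \ Sy ∨ i = s ∨ i = t := by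
    intro i
    by_cases hiSy : i ∈ Sy
    · exact Or.inl hiSy
    by_cases hiSx : i ∈ Sx
    · exact Or.inr (Or.inl (mem_sdiff.mpr ⟨hiSx, hiSy⟩))
    · have : i ∈ univ \ (Sx ∪ Sy) :=
        mem_sdiff.mpr ⟨mem_univ _, fun hh => (mem_union.mp hh).elim hiSx hiSy⟩
      rw [hP4, mem_insert, mem_singleton] at this
      exact Or.inr (Or.inr this)
  by_cases bx : (x : Perm (Fin n)) s = t ∧ (x : Perm (Fin n)) t = s
  · by_cases byy : (y : Perm (Fin n)) s = t ∧ (y : Perm (Fin n)) t = s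
    · -- both swap {s,t}: common invariant 2-set
      have hDx : Pre (x : Perm (Fin n)) ({s, t} : Finset (Fin n)) := pre_pair bx.1 bx.2
      have hDy : Pre (y : Perm (Fin n)) ({s, t} : Finset (Fin n)) := pre_pair byy.1 byy.2
      have hstc : ({s, t} : Finset (Fin n)).card = 2 := by
        rw [card_insert_of_notMem (notMem_singleton.mpr hst), card_singleton]
      have hcompl2 : 3 ≤ (univ \ ({s, t} : Finset (Fin n))).card := by
        rw [card_sdiff_of_subset (subset_univ _), hstc, card_univ, Fintype.card_fin]
        omega
      obtain ⟨s2, hs2, t2, ht2, hst2, HxP, HyP⟩ :=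
        goodpair hcompl2 (x : Perm (Fin n)) (y : Perm (Fin n))
      exact buildW2 x y hn hxd hyd ({s, t} : Finset (Fin n)) hDx hDy s t s2 t2
        (by simp) (by simp) (mem_sdiff.mp hs2).2 (mem_sdiff.mp ht2).2 hst hst2
        (fun ⟨_, _, e3, e4⟩ => HxP ⟨e3, e4⟩) (fun ⟨_, _, e3, e4⟩ => HyP ⟨e3, e4⟩)
    · -- x swaps {s,t}, y does not
      have hXuSx : (x : Perm (Fin n)) u ∈ Sx := (hSx u).mpr huSx
      by_cases h3x : 3 ≤ Sx.card
      · obtain ⟨v', hv'⟩ := Finset.card_pos.mp h3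
        have hv'Sy : v' ∈ Sy := (mem_sdiff.mp hv').1
        have hv'nSx : v' ∉ Sx := (mem_sdiff.mp hv').2
        obtain ⟨v, hvSx, hvu, hvXu⟩ := exists_avoid2 h3x u ((x : Perm (Fin n)) u)
        exact buildW3 x y hn hxd hyd Sx Sy hSx hSy u v v' s t huSx huSy hvSx hv'Sy
          hsSx hsSy htSx htSy (Ne.symm hvu) (fun hh => hv'nSx (hh ▸ huSx))
          (fun hh => hv'nSx (hh ▸ hvSx)) hst
          (fun ⟨e1', _⟩ => hvXu e1'.symm) (fun ⟨_, _, e3, e4⟩ => byy ⟨e3, e4⟩)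
      · -- Sx = {u, x u}
        have hSx2 : Sx.card = 2 := by
          have := two_le_card hXuSx huSx (hxd u); omega
        have hpairc : ({u, (x : Perm (Fin n)) u} : Finset (Fin n)).card = 2 := by
          rw [card_insert_of_notMem (notMem_singleton.mpr (Ne.symm (hxd u))), card_singleton]
        have hSxeq : Sx = {u, (x : Perm (Fin n)) u} := by
          refine (Finset.eq_of_subset_of_card_le ?_ (by omega)).symm
          intro i hi
          rcases mem_insert.mp hi with rfl | hi
          · exact huSx
          · rw [mem_singleton.mp hi]; exact hXuSx
        have hXXu : (x : Perm (Fin n)) ((x : Perm (Fin n)) u) = u := by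
          have hmem : (x : Perm (Fin n)) ((x : Perm (Fin n)) u) ∈ Sx := (hSx _).mpr hXuSx
          rw [hSxeq, mem_insert, mem_singleton] at hmem
          rcases hmem with hmem | hmem
          · exact hmem
          · exact absurd hmem (hxd _)
        by_cases hc : (Sy \ Sx).card = 1
        · exact (sign5 (Equiv.Perm.mem_alternatingGroup.mp x.2) hxd u hXXu (by omega)).elim
        · have hc2 : (Sy \ Sx).card = 2 := by omega
          have hn6 : n = 6 := by omega
          obtain ⟨g, h', hgh, hP3⟩ := Finset.card_eq_two.mp hc2
          have hgm : g ∈ Sy \ Sx := by rw [hP3]; simp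
          have hhm : h' ∈ Sy \ Sx := by rw [hP3]; simp
          have hgSy : g ∈ Sy := (mem_sdiff.mp hgm).1
          have hgnSx : g ∉ Sx := (mem_sdiff.mp hgm).2
          have hhSy : h' ∈ Sy := (mem_sdiff.mp hhm).1
          have hhnSx : h' ∉ Sx := (mem_sdiff.mp hhm).2
          have hXmove : ∀ i, i ∈ Sy \ Sx → (x : Perm (Fin n)) i ∈ Sy \ Sx := by
            intro i hi
            have hiSy : i ∈ Sy := (mem_sdiff.mp hi).1
            have hinSx : i ∉ Sx := (mem_sdiff.mp hi).2
            have hXinSx : (x : Perm (Fin n)) i ∉ Sx := fun hh => hinSx ((hSx i).mp hh)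
            have hXins : (x : Perm (Fin n)) i ≠ s := by
              intro hh
              have : i = t := (x : Perm (Fin n)).injective (hh.trans bx.2.symm)
              exact htSy (this ▸ hiSy)
            have hXint : (x : Perm (Fin n)) i ≠ t := by
              intro hh
              have : i = s := (x : Perm (Fin n)).injective (hh.trans bx.1.symm)
              exact hsSy (this ▸ hiSy)
            rcases hpart ((x : Perm (Fin n)) i) with hh | hh | hh | hh
            · exact absurd hh hXinSx
            · exact hh
            · exact absurd hh hXins
            · exact absurd hh hXint
          have hXg : (x : Perm (Fin n)) g = h' := by
            have := hXmove g hgm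
            rw [hP3, mem_insert, mem_singleton] at this
            rcases this with hh | hh
            · exact absurd hh (hxd g)
            · exact hh
          have hXh : (x : Perm (Fin n)) h' = g := by
            have := hXmove h' hhm
            rw [hP3, mem_insert, mem_singleton] at this
            rcases this with hh | hh
            · exact hh
            · exact absurd hh (hxd h')
          have hcover : ∀ i : Fin n, i = u ∨ i = (x : Perm (Fin n)) u ∨ i = g ∨ i = h' ∨
              i = s ∨ i = t := by
            intro i
            rcases hpart i with hh | hh | hh | hh
            · rw [hSxeq, mem_insert, mem_singleton] at hh
              rcases hh with hh | hh
              · exact Or.inl hh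
              · exact Or.inr (Or.inl hh)
            · rw [hP3, mem_insert, mem_singleton] at hh
              rcases hh with hh | hh
              · exact Or.inr (Or.inr (Or.inl hh))
              · exact Or.inr (Or.inr (Or.inr (Or.inl hh)))
            · exact Or.inr (Or.inr (Or.inr (Or.inr (Or.inl hh))))
            · exact Or.inr (Or.inr (Or.inr (Or.inr (Or.inr hh))))
          have hXuSx' := hXuSx
          exact (sign6 (Equiv.Perm.mem_alternatingGroup.mp x.2)
            (Ne.symm (hxd u)) hgh hst
            (fun hh => hgnSx (hh ▸ huSx)) (fun hh => hhnSx (hh ▸ huSx))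
            (fun hh => hsSx (hh ▸ huSx)) (fun hh => htSx (hh ▸ huSx))
            (fun hh => hgnSx (hh ▸ hXuSx)) (fun hh => hhnSx (hh ▸ hXuSx))
            (fun hh => hsSx (hh ▸ hXuSx)) (fun hh => htSx (hh ▸ hXuSx))
            (fun hh => hsSy (hh ▸ hgSy)) (fun hh => htSy (hh ▸ hgSy))
            (fun hh => hsSy (hh ▸ hhSy)) (fun hh => htSy (hh ▸ hhSy))
            rfl hXXu hXg hXh bx.1 bx.2 hcover).elim
  · by_cases byy : (y : Perm (Fin n)) s = t ∧ (y : Perm (Fin n)) t = s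
    · -- y swaps {s,t}, x does not
      have hYuSy : (y : Perm (Fin n)) u ∈ Sy := (hSy u).mpr huSy
      by_cases h3y : 3 ≤ Sy.card
      · obtain ⟨v, hv⟩ := Finset.card_pos.mp h2
        have hvSx : v ∈ Sx := (mem_sdiff.mp hv).1
        have hvnSy : v ∉ Sy := (mem_sdiff.mp hv).2
        obtain ⟨v', hv'Sy, hv'u, hv'Yu⟩ := exists_avoid2 h3y u ((y : Perm (Fin n)) u)
        exact buildW3 x y hn hxd hyd Sx Sy hSx hSy u v v' s t huSx huSy hvSx hv'Sy
          hsSx hsSy htSx htSy (fun hh => hvnSy (hh ▸ huSy)) (Ne.symm hv'u)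
          (fun hh => hvnSy (by rw [hh]; exact hv'Sy)) hst
          (fun ⟨_, _, e3, e4⟩ => bx ⟨e3, e4⟩) (fun ⟨e1', _⟩ => hv'Yu e1'.symm)
      · -- Sy = {u, y u}
        have hSy2 : Sy.card = 2 := by
          have := two_le_card hYuSy huSy (hyd u); omega
        have hpairc : ({u, (y : Perm (Fin n)) u} : Finset (Fin n)).card = 2 := by
          rw [card_insert_of_notMem (notMem_singleton.mpr (Ne.symm (hyd u))), card_singleton]
        have hSyeq : Sy = {u, (y : Perm (Fin n)) u} := by
          refine (Finset.eq_of_subset_of_card_le ?_ (by omega)).symm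
          intro i hi
          rcases mem_insert.mp hi with rfl | hi
          · exact huSy
          · rw [mem_singleton.mp hi]; exact hYuSy
        have hYYu : (y : Perm (Fin n)) ((y : Perm (Fin n)) u) = u := by
          have hmem : (y : Perm (Fin n)) ((y : Perm (Fin n)) u) ∈ Sy := (hSy _).mpr hYuSy
          rw [hSyeq, mem_insert, mem_singleton] at hmem
          rcases hmem with hmem | hmem
          · exact hmem
          · exact absurd hmem (hyd _)
        by_cases hc : (Sx \ Sy).card = 1
        · exact (sign5 (Equiv.Perm.mem_alternatingGroup.mp y.2) hyd u hYYu (by omega)).elim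
        · have hc2 : (Sx \ Sy).card = 2 := by omega
          obtain ⟨g, h', hgh, hP3⟩ := Finset.card_eq_two.mp hc2
          have hgm : g ∈ Sx \ Sy := by rw [hP3]; simp
          have hhm : h' ∈ Sx \ Sy := by rw [hP3]; simp
          have hgSx : g ∈ Sx := (mem_sdiff.mp hgm).1
          have hgnSy : g ∉ Sy := (mem_sdiff.mp hgm).2
          have hhSx : h' ∈ Sx := (mem_sdiff.mp hhm).1
          have hhnSy : h' ∉ Sy := (mem_sdiff.mp hhm).2
          have hYmove : ∀ i, i ∈ Sx \ Sy → (y : Perm (Fin n)) i ∈ Sx \ Sy := by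
            intro i hi
            have hiSx : i ∈ Sx := (mem_sdiff.mp hi).1
            have hinSy : i ∉ Sy := (mem_sdiff.mp hi).2
            have hYinSy : (y : Perm (Fin n)) i ∉ Sy := fun hh => hinSy ((hSy i).mp hh)
            have hYins : (y : Perm (Fin n)) i ≠ s := by
              intro hh
              have : i = t := (y : Perm (Fin n)).injective (hh.trans byy.2.symm)
              exact htSx (this ▸ hiSx)
            have hYint : (y : Perm (Fin n)) i ≠ t := by
              intro hh
              have : i = s := (y : Perm (Fin n)).injective (hh.trans byy.1.symm)
              exact hsSx (this ▸ hiSx)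
            rcases hpart' ((y : Perm (Fin n)) i) with hh | hh | hh | hh
            · exact absurd hh hYinSy
            · exact hh
            · exact absurd hh hYins
            · exact absurd hh hYint
          have hYg : (y : Perm (Fin n)) g = h' := by
            have := hYmove g hgm
            rw [hP3, mem_insert, mem_singleton] at this
            rcases this with hh | hh
            · exact absurd hh (hyd g)
            · exact hh
          have hYh : (y : Perm (Fin n)) h' = g := by
            have := hYmove h' hhm
            rw [hP3, mem_insert, mem_singleton] at this
            rcases this with hh | hh
            · exact hh
            · exact absurd hh (hyd h')
          have hcover : ∀ i : Fin n, i = u ∨ i = (y : Perm (Fin n)) u ∨ i = g ∨ i = h' ∨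
              i = s ∨ i = t := by
            intro i
            rcases hpart' i with hh | hh | hh | hh
            · rw [hSyeq, mem_insert, mem_singleton] at hh
              rcases hh with hh | hh
              · exact Or.inl hh
              · exact Or.inr (Or.inl hh)
            · rw [hP3, mem_insert, mem_singleton] at hh
              rcases hh with hh | hh
              · exact Or.inr (Or.inr (Or.inl hh))
              · exact Or.inr (Or.inr (Or.inr (Or.inl hh)))
            · exact Or.inr (Or.inr (Or.inr (Or.inr (Or.inl hh))))
            · exact Or.inr (Or.inr (Or.inr (Or.inr (Or.inr hh))))
          exact (sign6 (Equiv.Perm.mem_alternatingGroup.mp y.2)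
            (Ne.symm (hyd u)) hgh hst
            (fun hh => hgnSy (hh ▸ huSy)) (fun hh => hhnSy (hh ▸ huSy))
            (fun hh => hsSy (hh ▸ huSy)) (fun hh => htSy (hh ▸ huSy))
            (fun hh => hgnSy (hh ▸ hYuSy)) (fun hh => hhnSy (hh ▸ hYuSy))
            (fun hh => hsSy (hh ▸ hYuSy)) (fun hh => htSy (hh ▸ hYuSy))
            (fun hh => hsSx (hh ▸ hgSx)) (fun hh => htSx (hh ▸ hgSx))
            (fun hh => hsSx (hh ▸ hhSx)) (fun hh => htSx (hh ▸ hhSx))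
            rfl hYYu hYg hYh byy.1 byy.2 hcover).elim
    · -- neither swaps {s,t}
      obtain ⟨v', hv'⟩ := Finset.card_pos.mp h3
      have hv'Sy : v' ∈ Sy := (mem_sdiff.mp hv').1
      have hv'nSx : v' ∉ Sx := (mem_sdiff.mp hv').2
      have hXuSx : (x : Perm (Fin n)) u ∈ Sx := (hSx u).mpr huSx
      obtain ⟨v, hvSx, hvu⟩ := exists_avoid1 (two_le_card hXuSx huSx (hxd u)) u
      exact buildW3 x y hn hxd hyd Sx Sy hSx hSy u v v' s t huSx huSy hvSx hv'Sy
        hsSx hsSy htSx htSy (Ne.symm hvu) (fun hh => hv'nSx (hh ▸ huSx))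
        (fun hh => hv'nSx (hh ▸ hvSx)) hst
        (fun ⟨_, _, e3, e4⟩ => bx ⟨e3, e4⟩) (fun ⟨_, _, e3, e4⟩ => byy ⟨e3, e4⟩)


lemma main_ex (hn : 5 ≤ n)
    (hxd : ∀ i, (x : Perm (Fin n)) i ≠ i) (hyd : ∀ i, (y : Perm (Fin n)) i ≠ i)
    (σx σy : Finset (Fin n)) (hPx : Pre (x : Perm (Fin n)) σx) (hPy : Pre (y : Perm (Fin n)) σy)
    (hnx : σx.Nonempty) (hpx : ∃ i, i ∉ σx) (hny : σy.Nonempty) (hpy : ∃ i, i ∉ σy) :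
    ∃ p : (ncGraph (alternatingGroup (Fin n))).Walk x y, p.length ≤ 3 := by
  classical
  -- set identities
  have I3 : (univ \ σx) ∩ (univ \ σy) = univ \ (σx ∪ σy) := by
    ext i; simp only [mem_inter, mem_sdiff, mem_union, mem_univ, true_and, not_or]
  have I4x : univ \ (univ \ σx) = σx := by ext i; simp
  have I4y : univ \ (univ \ σy) = σy := by ext i; simp
  have I5 : (univ \ σx) \ (univ \ σy) = σy \ σx := by
    ext i; simp only [mem_sdiff, mem_univ, true_and, not_and, not_not]; try tauto
  have I5' : (univ \ σy) \ (univ \ σx) = σx \ σy := by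
    ext i; simp only [mem_sdiff, mem_univ, true_and, not_and, not_not]; try tauto
  have I6 : univ \ ((univ \ σx) ∪ (univ \ σy)) = σx ∩ σy := by
    ext i; simp only [mem_sdiff, mem_union, mem_inter, mem_univ, true_and, not_or, not_and,
      not_not]; try tauto
  have I7 : (univ \ σx) ∩ σy = σy \ σx := by
    ext i; simp only [mem_inter, mem_sdiff, mem_univ, true_and]; try tauto
  have I7' : σx ∩ (univ \ σy) = σx \ σy := by
    ext i; simp only [mem_inter, mem_sdiff, mem_univ, true_and]; try tauto
  have I8 : σy \ (univ \ σx) = σx ∩ σy := by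
    ext i; simp only [mem_sdiff, mem_inter, mem_univ, true_and, not_and, not_not]; try tauto
  have I8' : σx \ (univ \ σy) = σx ∩ σy := by
    ext i; simp only [mem_sdiff, mem_inter, mem_univ, true_and, not_and, not_not]; try tauto
  have I9 : univ \ ((univ \ σx) ∪ σy) = σx \ σy := by
    ext i; simp only [mem_sdiff, mem_union, mem_univ, true_and, not_or, not_not]; try tauto
  have I9' : univ \ (σx ∪ (univ \ σy)) = σy \ σx := by
    ext i; simp only [mem_sdiff, mem_union, mem_univ, true_and, not_or, not_not]; try tauto
  have I10 : (univ \ σx) \ σy = univ \ (σx ∪ σy) := by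
    ext i; simp only [mem_sdiff, mem_union, mem_univ, true_and, not_or]; try tauto
  have I12 : (univ \ σy) \ σx = univ \ (σx ∪ σy) := by
    ext i; simp only [mem_sdiff, mem_union, mem_univ, true_and, not_or]; try tauto
  -- cardinalities
  have f1 : #(σx ∩ σy) + #(σx \ σy) = #σx := card_inter_add_card_sdiff σx σy
  have f2 : #(σx ∩ σy) + #(σy \ σx) = #σy := by
    rw [inter_comm]; exact card_inter_add_card_sdiff σy σx
  have f3 : #((univ \ σx) ∩ σy) + #((univ \ σx) \ σy) = #(univ \ σx) :=
    card_inter_add_card_sdiff _ _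
  rw [I7, I10] at f3
  have f4 : #((univ \ σy) ∩ σx) + #((univ \ σy) \ σx) = #(univ \ σy) :=
    card_inter_add_card_sdiff _ _
  have I11 : (univ \ σy) ∩ σx = σx \ σy := by
    ext i; simp only [mem_inter, mem_sdiff, mem_univ, true_and]; try tauto
  rw [I11, I12] at f4
  -- row bounds
  obtain ⟨ax, hax⟩ := hnx
  have h2x : 2 ≤ #σx := two_le_card ((hPx ax).mpr hax) hax (hxd ax)
  obtain ⟨bx, hbx⟩ := hpx
  have hbx' : bx ∈ univ \ σx := mem_sdiff.mpr ⟨mem_univ _, hbx⟩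
  have h2x' : 2 ≤ #(univ \ σx) :=
    two_le_card (((pre_compl hPx) bx).mpr hbx') hbx' (hxd bx)
  obtain ⟨ay, hay⟩ := hny
  have h2y : 2 ≤ #σy := two_le_card ((hPy ay).mpr hay) hay (hyd ay)
  obtain ⟨by', hby'⟩ := hpy
  have hby'' : by' ∈ univ \ σy := mem_sdiff.mpr ⟨mem_univ _, hby'⟩
  have h2y' : 2 ≤ #(univ \ σy) :=
    two_le_card (((pre_compl hPy) by').mpr hby'') hby'' (hyd by')
  have htot : #σx + #(univ \ σx) = n := by
    have h := card_sdiff_of_subset (subset_univ σx)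
    have h2 := Finset.card_le_univ σx
    simp only [card_univ, Fintype.card_fin] at h h2
    omega
  -- the four-part decision
  by_cases c1 : 1 ≤ #(σx ∩ σy) ∧ 3 ≤ #(univ \ (σx ∪ σy))
  · refine step1 x y hn hxd hyd σx σy hPx hPy (Finset.card_pos.mp c1.1) ?_
    rw [I3]; exact c1.2
  by_cases c2 : 1 ≤ #(univ \ (σx ∪ σy)) ∧ 3 ≤ #(σx ∩ σy)
  · refine step1 x y hn hxd hyd (univ \ σx) (univ \ σy) (pre_compl hPx) (pre_compl hPy) ?_ ?_
    · rw [I3]; exact Finset.card_pos.mp c2.1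
    · rw [I4x, I4y]; exact c2.2
  by_cases c3 : 1 ≤ #(σx \ σy) ∧ 3 ≤ #(σy \ σx)
  · refine step1 x y hn hxd hyd σx (univ \ σy) hPx (pre_compl hPy) ?_ ?_
    · rw [I7']; exact Finset.card_pos.mp c3.1
    · rw [I4y, I7]; exact c3.2
  by_cases c4 : 1 ≤ #(σy \ σx) ∧ 3 ≤ #(σx \ σy)
  · refine step1 x y hn hxd hyd (univ \ σx) σy (pre_compl hPx) hPy ?_ ?_
    · rw [I7]; exact Finset.card_pos.mp c4.1
    · rw [I4x, I7']; exact c4.2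
  -- now all four diagonal options fail
  push_neg at c1 c2 c3 c4
  by_cases a0 : #(σx ∩ σy) = 0
  · exact shapeA x y hn hxd hyd σx σy hPx hPy (card_eq_zero.mp a0) (by omega) (by omega)
  by_cases d0 : #(univ \ (σx ∪ σy)) = 0
  · refine shapeA x y hn hxd hyd (univ \ σx) (univ \ σy) (pre_compl hPx) (pre_compl hPy)
      ?_ (by omega) (by omega)
    rw [I3]; exact card_eq_zero.mp d0
  by_cases b0 : #(σx \ σy) = 0
  · refine shapeA x y hn hxd hyd σx (univ \ σy) hPx (pre_compl hPy) ?_ (by omega) (by omega)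
    rw [I7']; exact card_eq_zero.mp b0
  by_cases c0 : #(σy \ σx) = 0
  · refine shapeA x y hn hxd hyd (univ \ σx) σy (pre_compl hPx) hPy ?_ (by omega) (by omega)
    rw [I7]; exact card_eq_zero.mp c0
  -- all parts have size 1 or 2
  by_cases d2 : #(univ \ (σx ∪ σy)) = 2
  · exact shapeC x y hn hxd hyd σx σy hPx hPy (by omega) (by omega) (by omega) (by omega)
      (by omega) d2
  by_cases a2 : #(σx ∩ σy) = 2
  · refine shapeC x y hn hxd hyd (univ \ σx) (univ \ σy) (pre_compl hPx) (pre_compl hPy)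
      ?_ ?_ ?_ ?_ ?_ ?_
    · rw [I3]; omega
    · rw [I5]; omega
    · rw [I5]; omega
    · rw [I5']; omega
    · rw [I5']; omega
    · rw [I6]; omega
  by_cases b2 : #(σx \ σy) = 2
  · refine shapeC x y hn hxd hyd (univ \ σx) σy (pre_compl hPx) hPy ?_ ?_ ?_ ?_ ?_ ?_
    · rw [I7]; omega
    · rw [I10]; omega
    · rw [I10]; omega
    · rw [I8]; omega
    · rw [I8]; omega
    · rw [I9]; omega
  · refine shapeC x y hn hxd hyd σx (univ \ σy) hPx (pre_compl hPy) ?_ ?_ ?_ ?_ ?_ ?_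
    · rw [I7']; omega
    · rw [I8']; omega
    · rw [I8']; omega
    · rw [I12]; omega
    · rw [I12]; omega
    · rw [I9']; omega

end Build

lemma orbit_set (X : Perm (Fin n)) (a b : Fin n) (hab : ∀ k : ℤ, (X ^ k) a ≠ b) :
    ∃ σ : Finset (Fin n), Pre X σ ∧ a ∈ σ ∧ b ∉ σ := by
  classical
  set S : Set (Fin n) := {c | ∃ k : ℤ, (X ^ k) a = c} with hS
  refine ⟨(Set.toFinite S).toFinset, ?_, ?_, ?_⟩
  · intro i
    simp only [Set.Finite.mem_toFinset, hS, Set.mem_setOf_eq]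
    constructor
    · rintro ⟨k, hk⟩
      refine ⟨k - 1, ?_⟩
      have hzp : X ^ (k - 1) = X⁻¹ * X ^ k := by
        rw [sub_eq_neg_add, zpow_add, zpow_neg_one]
      rw [hzp, Equiv.Perm.mul_apply, hk]; exact Equiv.Perm.inv_eq_iff_eq.mpr rfl
    · rintro ⟨k, hk⟩
      refine ⟨k + 1, ?_⟩
      have hzp : X ^ (k + 1) = X * X ^ k := by
        rw [add_comm, zpow_add, zpow_one]
      rw [hzp, Equiv.Perm.mul_apply, hk]
  · simp only [Set.Finite.mem_toFinset, hS, Set.mem_setOf_eq]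
    exact ⟨0, by simp⟩
  · simp only [Set.Finite.mem_toFinset, hS, Set.mem_setOf_eq]
    rintro ⟨k, hk⟩
    exact hab k hk

end NCAux

/-- Let `n ≥ 5` and let `x` and `y` be derangements of `Aₙ` each generating a cyclic
subgroup acting intransitively on `{1, …, n}`.  Then `d(x, y) ≤ 3` in `nc(Aₙ)`. -/
theorem nc_alternating_intransitive_derangements (n : ℕ) (hn : 5 ≤ n)
    (x y : alternatingGroup (Fin n))
    (hxd : ∀ i : Fin n, (x : Equiv.Perm (Fin n)) i ≠ i)
    (hyd : ∀ i : Fin n, (y : Equiv.Perm (Fin n)) i ≠ i)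
    (hxt : ¬ ∀ a b : Fin n, ∃ k : ℤ, ((x : Equiv.Perm (Fin n)) ^ k) a = b)
    (hyt : ¬ ∀ a b : Fin n, ∃ k : ℤ, ((y : Equiv.Perm (Fin n)) ^ k) a = b) :
    ∃ p : (ncGraph (alternatingGroup (Fin n))).Walk x y, p.length ≤ 3 := by
  classical
  push_neg at hxt hyt
  obtain ⟨a1, b1, hab1⟩ := hxt
  obtain ⟨a2, b2, hab2⟩ := hyt
  obtain ⟨σx, hPx, haσ, hbσ⟩ := NCAux.orbit_set (x : Equiv.Perm (Fin n)) a1 b1 hab1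
  obtain ⟨σy, hPy, haσ2, hbσ2⟩ := NCAux.orbit_set (y : Equiv.Perm (Fin n)) a2 b2 hab2
  exact NCAux.main_ex x y hn hxd hyd σx σy hPx hPy ⟨a1, haσ⟩ ⟨b1, hbσ⟩ ⟨a2, haσ2⟩ ⟨b2, hbσ2⟩
end

section
/- Let F be a finite field with q elements, let a be a nonzero element of F, and let r be the multiplicative order of a. Then the monic irreducible factors in F[x] of the binomial x^{q-1} − a are exactly the polynomials x^r − b with b a nonzero element of F satisfying b^{(q-1)/r} = a. That is: (1) for every nonzero b ∈ F with b^{(q-1)/r} = a, the polynomial x^r − b is irreducible over F and divides x^{q-1} − a; and (2) every monic irreducible polynomial f ∈ F[x] dividing x^{q-1} − a equals x^r − b for some nonzero b ∈ F with b^{(q-1)/r} = a. -/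
open Polynomial

private lemma pow_q_pow {F K : Type*} [Field F] [Fintype F] [Field K] [Algebra F K]
    {a : F} {α : K} (hα : α ^ (Fintype.card F - 1) = algebraMap F K a) (d : ℕ) :
    α ^ (Fintype.card F ^ d) = α * (algebraMap F K a) ^ d := by
  induction d with
  | zero => simp
  | succ d ih =>
    have hq : (Fintype.card F - 1) + 1 = Fintype.card F :=
      Nat.succ_pred_eq_of_pos Fintype.card_pos
    have hαq : α ^ Fintype.card F = algebraMap F K a * α := by
      rw [← hq, pow_succ, hα]
    have haq : (algebraMap F K a) ^ Fintype.card F = algebraMap F K a := by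
      rw [← map_pow, FiniteField.pow_card]
    calc α ^ (Fintype.card F ^ (d+1)) = (α ^ (Fintype.card F ^ d)) ^ Fintype.card F := by
          rw [← pow_mul, pow_succ]
      _ = (α * (algebraMap F K a)^d) ^ Fintype.card F := by rw [ih]
      _ = (α ^ Fintype.card F) * ((algebraMap F K a) ^ Fintype.card F) ^ d := by ring
      _ = α * algebraMap F K a ^ (d+1) := by rw [hαq, haq]; ring

private lemma exists_preimage {F K : Type*} [Field F] [Fintype F] [Field K] [Algebra F K]
    (x : K) (hx : x ^ (Fintype.card F) = x) : ∃ c : F, algebraMap F K c = x := by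
  classical
  by_contra h
  push_neg at h
  set q := Fintype.card F with hq
  have hq1 : 1 < q := Fintype.one_lt_card
  set P : K[X] := X ^ q - X with hP
  have hP0 : P ≠ 0 := FiniteField.X_pow_card_sub_X_ne_zero K hq1
  have hPdeg : P.natDegree = q := FiniteField.X_pow_card_sub_X_natDegree_eq K hq1
  set T : Finset K := Finset.univ.image (algebraMap F K) with hT
  have hTcard : T.card = q := by
    rw [hT, Finset.card_image_of_injective _ (algebraMap F K).injective, Finset.card_univ]
  have hsub : insert x T ⊆ P.roots.toFinset := by
    intro y hy
    rw [Multiset.mem_toFinset, mem_roots hP0]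
    rcases Finset.mem_insert.mp hy with rfl | hy
    · simp [hP, IsRoot, hx]
    · obtain ⟨c, _, rfl⟩ := Finset.mem_image.mp hy
      simp only [hP, IsRoot, eval_sub, eval_pow, eval_X]
      rw [← map_pow, FiniteField.pow_card, sub_self]
  have hxT : x ∉ T := by
    intro hxT
    obtain ⟨c, _, hc⟩ := Finset.mem_image.mp hxT
    exact h c hc
  have h1 : q + 1 ≤ (insert x T).card := by
    rw [Finset.card_insert_of_notMem hxT, hTcard]
  have h2 : (insert x T).card ≤ P.roots.toFinset.card := Finset.card_le_card hsub
  have h3 : P.roots.toFinset.card ≤ Multiset.card P.roots := Multiset.toFinset_card_le _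
  have h4 : Multiset.card P.roots ≤ P.natDegree := P.card_roots'
  omega

private lemma key_irred {F : Type*} [Field F] [Fintype F]
    {a b : F} (ha : a ≠ 0) (hb : b ≠ 0)
    (hbm : b ^ ((Fintype.card F - 1) / orderOf a) = a) :
    Irreducible (X ^ orderOf a - C b : F[X]) := by
  classical
  set q := Fintype.card F with hq
  set n := q - 1 with hn
  set r := orderOf a with hr
  have hn0 : 0 < n := Nat.sub_pos_of_lt Fintype.one_lt_card
  have han : a ^ n = 1 := FiniteField.pow_card_sub_one_eq_one a ha
  have hr0 : 0 < r := (isOfFinOrder_iff_pow_eq_one.mpr ⟨n, hn0, han⟩).orderOf_pos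
  have hrn : r ∣ n := orderOf_dvd_of_pow_eq_one han
  set m := n / r with hm
  have hrm : r * m = n := Nat.mul_div_cancel' hrn
  set p : F[X] := X ^ r - C b with hp
  have hpm : p.Monic := monic_X_pow_sub_C b hr0.ne'
  have hpdeg : p.natDegree = r := by rw [hp]; exact natDegree_X_pow_sub_C
  have hpu : ¬ IsUnit p := not_isUnit_of_natDegree_pos p (by omega)
  obtain ⟨g, hgm, hgi, hgd⟩ := p.exists_monic_irreducible_factor hpu
  haveI : Fact (Irreducible g) := ⟨hgi⟩
  set K := AdjoinRoot g with hK
  haveI : Fintype K := Module.fintypeOfFintype (AdjoinRoot.powerBasis hgi.ne_zero).basis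
  set α : K := AdjoinRoot.root g with hα
  have hroot : (aeval α) p = 0 := by
    obtain ⟨c, hc⟩ := hgd
    rw [hc, map_mul, hα, AdjoinRoot.aeval_eq, AdjoinRoot.mk_self, zero_mul]
  have hαr : α ^ r = algebraMap F K b := by
    rw [hp] at hroot
    simp only [map_sub, map_pow, aeval_X, aeval_C] at hroot
    exact sub_eq_zero.mp hroot
  have hαn : α ^ n = algebraMap F K a := by
    rw [← hrm, pow_mul, hαr, ← map_pow, hbm]
  have hα0 : α ≠ 0 := by
    intro h0
    rw [h0, zero_pow hr0.ne'] at hαr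
    exact hb ((map_eq_zero_iff _ (algebraMap F K).injective).mp hαr.symm)
  have hcard : Fintype.card K = q ^ (Module.finrank F K) := Module.card_eq_pow_finrank
  set d := Module.finrank F K with hd
  have hdeg : d = g.natDegree := by
    rw [hd, (AdjoinRoot.powerBasis hgi.ne_zero).finrank, AdjoinRoot.powerBasis]
  have had : a ^ d = 1 := by
    have h1 : α ^ (q ^ d) = α := by rw [← hcard, FiniteField.pow_card]
    have h2 := pow_q_pow hαn d
    rw [h1] at h2
    have h3 : (algebraMap F K a) ^ d = 1 :=
      mul_left_cancel₀ hα0 (by rw [mul_one, ← h2])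
    rw [← map_pow, ← map_one (algebraMap F K)] at h3
    exact (algebraMap F K).injective h3
  have hrd : r ∣ d := orderOf_dvd_of_pow_eq_one had
  have hd_le : g.natDegree ≤ r := hpdeg ▸ natDegree_le_of_dvd hgd hpm.ne_zero
  have hd_pos : 0 < g.natDegree := hgi.natDegree_pos
  have hdr : g.natDegree = r := le_antisymm hd_le (Nat.le_of_dvd hd_pos (hdeg ▸ hrd))
  have hassoc : Associated g p := associated_of_dvd_of_natDegree_le hgd hpm.ne_zero (by omega)
  rw [← eq_of_monic_of_associated hgm hpm hassoc]
  exact hgi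

/-- Let `F` be a finite field with `q` elements, `a ∈ Fˣ` of multiplicative order `r`.
The monic irreducible factors of `x^(q-1) - a` in `F[x]` are exactly the binomials
`x^r - b` with `b ∈ Fˣ` and `b^((q-1)/r) = a`. -/
theorem irreducible_factors_of_binomial (F : Type*) [Field F] [Fintype F]
    (q : ℕ) (hq : q = Fintype.card F)
    (a : F) (ha : a ≠ 0) (r : ℕ) (hr : r = orderOf a) :
    (∀ b : F, b ≠ 0 → b ^ ((q - 1) / r) = a →
      Irreducible (X ^ r - C b : F[X]) ∧
        (X ^ r - C b : F[X]) ∣ (X ^ (q - 1) - C a)) ∧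
    (∀ f : F[X], f.Monic → Irreducible f → f ∣ (X ^ (q - 1) - C a) →
      ∃ b : F, b ≠ 0 ∧ b ^ ((q - 1) / r) = a ∧ f = X ^ r - C b) := by
  subst hq hr
  classical
  set q := Fintype.card F with hq
  set n := q - 1 with hn
  set r := orderOf a with hr
  have hn0 : 0 < n := Nat.sub_pos_of_lt Fintype.one_lt_card
  have hn1 : n + 1 = q := Nat.succ_pred_eq_of_pos Fintype.card_pos
  have han : a ^ n = 1 := FiniteField.pow_card_sub_one_eq_one a ha
  have hr0 : 0 < r := (isOfFinOrder_iff_pow_eq_one.mpr ⟨n, hn0, han⟩).orderOf_pos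
  have hrn : r ∣ n := orderOf_dvd_of_pow_eq_one han
  set m := n / r with hm
  have hrm : r * m = n := Nat.mul_div_cancel' hrn
  constructor
  · intro b hb hbm
    refine ⟨key_irred ha hb hbm, ?_⟩
    have hdvd : (X ^ r - C b : F[X]) ∣ (X ^ r) ^ m - (C b) ^ m :=
      sub_dvd_pow_sub_pow _ _ m
    rwa [← pow_mul, hrm, ← C_pow, hbm] at hdvd
  · intro f hfm hfi hfd
    haveI : Fact (Irreducible f) := ⟨hfi⟩
    set K := AdjoinRoot f with hK
    haveI : Fintype K := Module.fintypeOfFintype (AdjoinRoot.powerBasis hfi.ne_zero).basis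
    set α : K := AdjoinRoot.root f with hα
    have hroot : (aeval α) f = 0 := by
      rw [hα, AdjoinRoot.aeval_eq, AdjoinRoot.mk_self]
    have hαn : α ^ n = algebraMap F K a := by
      obtain ⟨c, hc⟩ := hfd
      have : (aeval α) (X ^ n - C a : F[X]) = 0 := by
        rw [hc, map_mul, hroot, zero_mul]
      simp only [map_sub, map_pow, aeval_X, aeval_C] at this
      exact sub_eq_zero.mp this
    have hα0 : α ≠ 0 := by
      intro h0
      rw [h0, zero_pow hn0.ne'] at hαn
      exact ha ((map_eq_zero_iff _ (algebraMap F K).injective).mp hαn.symm)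
    have hqx : (α ^ r) ^ q = α ^ r := by
      have h1 : (α ^ r) ^ n = 1 := by
        rw [← pow_mul, mul_comm, pow_mul, hαn, ← map_pow, hr, pow_orderOf_eq_one, map_one]
      rw [← hn1, pow_succ, h1, one_mul]
    obtain ⟨b, hb⟩ := exists_preimage (α ^ r) hqx
    have hb0 : b ≠ 0 := by
      intro h0
      rw [h0, map_zero] at hb
      exact hα0 (pow_eq_zero_iff hr0.ne' |>.mp hb.symm)
    have hbm : b ^ m = a := by
      apply (algebraMap F K).injective
      rw [map_pow, hb, ← pow_mul, hrm, hαn]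
    refine ⟨b, hb0, hbm, ?_⟩
    have h1 : f = minpoly F α := minpoly.eq_of_irreducible_of_monic hfi hroot hfm
    have h2 : (X ^ r - C b : F[X]) = minpoly F α := by
      refine minpoly.eq_of_irreducible_of_monic (key_irred ha hb0 hbm) ?_
        (monic_X_pow_sub_C b hr0.ne')
      simp only [map_sub, map_pow, aeval_X, aeval_C]
      rw [hb, sub_self]
    rw [h1, h2]
end

section
/- Let F be a finite field with q elements, let n be a positive integer, and let A be an element of SL(n,F) such that A^{q²−1} is a scalar matrix (i.e., lies in the center of SL(n,F)) and such that the cyclic group generated by A acts irreducibly on F^n, meaning the only F-subspaces W of F^n with A·W ⊆ W are the zero subspace and F^n itself. Then n ∈ {1, 2}. If, in addition, n = 2 and A^{q−1} lies in the center of SL(2,F), then q ≡ 3 (mod 4). -/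
lemma geom_nat (q : ℕ) (hq : 1 ≤ q) (n : ℕ) :
    (q - 1) * (∑ i ∈ Finset.range n, q ^ i) = q ^ n - 1 := by
  induction n with
  | zero => simp
  | succ n ih =>
    rw [Finset.sum_range_succ, Nat.mul_add, ih]
    have h1 : q ^ (n+1) = q * q ^ n := by ring
    have h2 : (q - 1) * q ^ n = q * q ^ n - q ^ n := by
      rw [Nat.sub_one_mul]
    have h3 : 1 ≤ q ^ n := Nat.one_le_pow _ _ (by omega)
    have h4 : q ^ n ≤ q * q ^ n := Nat.le_mul_of_pos_left _ (by omega)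
    omega

lemma sq_sub_one (q : ℕ) (hq : 1 ≤ q) : (q + 1) * (q - 1) = q * q - 1 := by
  obtain ⟨a, rfl⟩ : ∃ a, q = a + 1 := ⟨q - 1, by omega⟩
  have hs : a + 1 - 1 = a := rfl
  rw [hs]
  have : (a + 1 + 1) * a + 1 = (a + 1) * (a + 1) := by ring
  omega

lemma sum_pow_mod_two (q n : ℕ) (hq : q % 2 = 1) :
    (∑ i ∈ Finset.range n, q ^ i) % 2 = n % 2 := by
  induction n with
  | zero => simp
  | succ n ih =>
    rw [Finset.sum_range_succ]
    have h : q ^ n % 2 = 1 := Nat.odd_iff.mp ((Nat.odd_iff.mpr hq).pow)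
    omega

lemma partB {q n d : ℕ} (hq : 2 ≤ q) (hd : 0 < d)
    (h1 : d ∣ (q * q - 1) * (q - 1))
    (h2 : d ∣ ∑ i ∈ Finset.range n, q ^ i)
    (h3 : ∀ e, 0 < e → d ∣ q ^ e - 1 → n ≤ e) : n ≤ 2 := by
  by_contra hcon
  push_neg at hcon
  set E := ∑ i ∈ Finset.range n, q ^ i with hE
  have hnpos : 0 < n := by omega
  have hEpos : 0 < E := by
    apply Finset.sum_pos (fun i _ => pow_pos (by omega) i)
    exact Finset.nonempty_range_iff.mpr (by omega)
  have hgeom : (q - 1) * E = q ^ n - 1 := geom_nat q (by omega) n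
  have hdn : d ∣ q ^ n - 1 := h2.trans ⟨q - 1, by rw [mul_comm]; exact hgeom.symm⟩
  obtain ⟨ℓ, n₀, hℓ, hfac, hn₀pos, hn₀lt, hoddimp⟩ :
      ∃ ℓ n₀, ℓ.Prime ∧ n = ℓ * n₀ ∧ 0 < n₀ ∧ n₀ < n ∧ (Odd n₀ → Odd n) := by
    by_cases hodd : ∃ ℓ, ℓ.Prime ∧ Odd ℓ ∧ ℓ ∣ n
    · obtain ⟨ℓ, hℓ, hℓodd, n₀, rfl⟩ := hodd
      have hn₀pos : 0 < n₀ := by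
        rcases Nat.eq_zero_or_pos n₀ with h | h
        · subst h; simp at hnpos
        · exact h
      exact ⟨ℓ, n₀, hℓ, rfl, hn₀pos, lt_mul_iff_one_lt_left hn₀pos |>.mpr hℓ.one_lt,
        fun h => hℓodd.mul h⟩
    · push_neg at hodd
      have hall : ∀ p, p.Prime → p ∣ n → p = 2 := by
        intro p hp hpd
        rcases hp.eq_two_or_odd' with h | h
        · exact h
        · exact absurd hpd (hodd p hp h)
      have h2n : 2 ∣ n := by
        obtain ⟨p, hp, hpd⟩ := Nat.exists_prime_and_dvd (show n ≠ 1 by omega)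
        rw [← hall p hp hpd]; exact hpd
      obtain ⟨m, rfl⟩ := h2n
      have hmpos : 0 < m := by omega
      have hmeven : Even m := by
        rcases Nat.even_or_odd m with h | h
        · exact h
        · exfalso
          obtain ⟨p, hp, hpd⟩ := Nat.exists_prime_and_dvd (show m ≠ 1 by omega)
          have hp2 : p = 2 := hall p hp (hpd.mul_left 2)
          subst hp2
          exact (Nat.not_even_iff_odd.mpr h) (even_iff_two_dvd.mpr hpd)
      exact ⟨2, m, Nat.prime_two, rfl, hmpos, by omega,
        fun h => absurd hmeven (Nat.not_even_iff_odd.mpr h)⟩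
  have hqn₀ : 1 < q ^ n₀ := Nat.one_lt_pow (by omega) (by omega)
  have hne0 : q ^ n₀ - 1 ≠ 0 := by omega
  have hnd0 : ¬ d ∣ q ^ n₀ - 1 := fun h => by have := h3 n₀ hn₀pos h; omega
  obtain ⟨r, hrlt⟩ : ∃ r, (q ^ n₀ - 1).factorization r < d.factorization r := by
    by_contra hcl; push_neg at hcl
    exact hnd0 ((Nat.factorization_le_iff_dvd (by omega) hne0).mp (Finsupp.le_def.mpr fun r => hcl r))
  set k := d.factorization r with hk
  have hk1 : 0 < k := by omega
  have hrp : r.Prime := by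
    have hmem : r ∈ d.factorization.support := by
      rw [Finsupp.mem_support_iff]; omega
    rw [Nat.support_factorization] at hmem
    exact Nat.prime_of_mem_primeFactors hmem
  have hrkd : r ^ k ∣ d := Nat.ordProj_dvd d r
  have hnotdvd : ¬ r ^ k ∣ q ^ n₀ - 1 := by
    rw [Nat.Prime.pow_dvd_iff_le_factorization hrp hne0]; omega
  have hrq : ¬ r ∣ q := by
    intro hrq
    have h1' : r ∣ q ^ n - 1 := ((dvd_pow_self r hk1.ne').trans hrkd).trans hdn
    have h2' : r ∣ q ^ n := dvd_pow hrq hnpos.ne'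
    have h3' : r ∣ q ^ n - (q ^ n - 1) := Nat.dvd_sub h2' h1'
    have he : q ^ n - (q ^ n - 1) = 1 := by
      have : 1 ≤ q ^ n := Nat.one_le_pow _ _ (by omega)
      omega
    rw [he] at h3'
    have := Nat.le_of_dvd one_pos h3'
    have := hrp.two_le
    omega
  have hEne : E ≠ 0 := by omega
  have hkE : k ≤ E.factorization r := (Nat.Prime.pow_dvd_iff_le_factorization hrp hEne).mp (hrkd.trans h2)
  have hfacmul : (q ^ n - 1).factorization r = (q - 1).factorization r + E.factorization r := by
    rw [← hgeom, Nat.factorization_mul (by omega) hEne]; simp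
  by_cases hr2 : r = 2
  · subst hr2
    have hqodd : ¬ 2 ∣ q := by
      intro h
      have h2qq : 2 ∣ q * q := Dvd.dvd.mul_left h q
      have h2d : 2 ∣ d := (dvd_pow_self 2 hk1.ne').trans hrkd
      have h2prod : 2 ∣ (q * q - 1) * (q - 1) := h2d.trans h1
      have hoddprod : Odd ((q * q - 1) * (q - 1)) := by
        refine (Nat.odd_iff.mpr ?_).mul (Nat.odd_iff.mpr ?_) <;> omega
      have := Nat.odd_iff.mp hoddprod
      omega
    rcases Nat.even_or_odd n₀ with hpar | hpar
    · haveI : Fact (Nat.Prime 2) := ⟨Nat.prime_two⟩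
      have hq12 : 2 ∣ q - 1 := by omega
      have hlte : ∀ m : ℕ, 0 < m → Even m →
          padicValNat 2 (q ^ m - 1) + 1
            = padicValNat 2 (q + 1) + padicValNat 2 (q - 1) + padicValNat 2 m := by
        intro m hm hem
        have := padicValNat.pow_two_sub_pow (x := q) (y := 1) (by omega)
          (by simpa using hq12) (by simpa using hqodd) hm.ne' hem
        simpa using this
      have hnev : Even n := by rw [hfac]; exact hpar.mul_left ℓ
      have e1 := hlte n hnpos hnev
      have e2 := hlte n₀ hn₀pos hpar
      have e3 : padicValNat 2 n = padicValNat 2 ℓ + padicValNat 2 n₀ := by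
        rw [hfac, padicValNat.mul hℓ.ne_zero (by omega)]
      have e4 : padicValNat 2 ℓ ≤ 1 := by
        rcases hℓ.eq_two_or_odd' with h | h
        · subst h; simp [padicValNat.self]
        · rw [padicValNat.eq_zero_of_not_dvd (by simpa [Nat.two_dvd_ne_zero, Nat.odd_iff] using h)]
          omega
      have e5 : 1 ≤ padicValNat 2 (q - 1) := by
        have : 1 ≤ (q - 1).factorization 2 :=
          (Nat.Prime.pow_dvd_iff_le_factorization Nat.prime_two (by omega)).mp (by simpa using hq12)
        simpa [Nat.factorization_def _ Nat.prime_two] using this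
      have hfd : ∀ m : ℕ, m.factorization 2 = padicValNat 2 m :=
        fun m => Nat.factorization_def m Nat.prime_two
      simp only [hfd] at hrlt hkE hfacmul
      omega
    · have hnodd : Odd n := hoddimp hpar
      have hEodd : E % 2 = 1 := by
        rw [hE, sum_pow_mod_two q n (by omega)]
        exact Nat.odd_iff.mp hnodd
      have h2E : 2 ∣ E := (dvd_pow_self 2 hk1.ne').trans (hrkd.trans h2)
      omega
  · have hrodd : Odd r := hrp.odd_of_ne_two hr2
    by_cases hrq1 : r ∣ q - 1
    · haveI : Fact r.Prime := ⟨hrp⟩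
      have hlte : ∀ m : ℕ, 0 < m →
          padicValNat r (q ^ m - 1) = padicValNat r (q - 1) + padicValNat r m := by
        intro m hm
        have := padicValNat.pow_sub_pow (y := 1) hrodd (by omega)
          (by simpa using hrq1) hrq hm.ne'
        simpa using this
      have e1 := hlte n hnpos
      have e2 := hlte n₀ hn₀pos
      have e3 : padicValNat r n = padicValNat r ℓ + padicValNat r n₀ := by
        rw [hfac, padicValNat.mul hℓ.ne_zero (by omega)]
      have e4 : padicValNat r ℓ ≤ 1 := by
        rcases eq_or_ne ℓ r with h | h
        · subst h; simp [padicValNat.self hrp.one_lt]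
        · rw [padicValNat.eq_zero_of_not_dvd]
          · omega
          · intro hdvd
            exact h ((Nat.prime_dvd_prime_iff_eq hrp hℓ).mp hdvd).symm
      have e5 : 1 ≤ padicValNat r (q - 1) := by
        have : 1 ≤ (q - 1).factorization r :=
          (Nat.Prime.pow_dvd_iff_le_factorization hrp (by omega)).mp (by simpa using hrq1)
        simpa [Nat.factorization_def _ hrp] using this
      have hfd : ∀ m : ℕ, m.factorization r = padicValNat r m :=
        fun m => Nat.factorization_def m hrp
      simp only [hfd] at hrlt hkE hfacmul
      omega
    · have hcop : Nat.Coprime (r ^ k) ((q - 1) * (q - 1)) := by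
        have hc1 : Nat.Coprime r (q - 1) := (Nat.Prime.coprime_iff_not_dvd hrp).mpr hrq1
        exact (hc1.mul_right hc1).pow_left k
      have hq1dvd : r ^ k ∣ q + 1 := by
        have hdd : r ^ k ∣ (q + 1) * ((q - 1) * (q - 1)) := by
          have heq : (q * q - 1) * (q - 1) = (q + 1) * ((q - 1) * (q - 1)) := by
            rw [← sq_sub_one q (by omega)]; ring
          have := hrkd.trans h1
          rwa [heq] at this
        exact hcop.dvd_of_dvd_mul_right hdd
      rcases Nat.even_or_odd n₀ with hpar | hpar
      · obtain ⟨t, ht⟩ := hpar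
        have hdvd1 : q + 1 ∣ q ^ n₀ - 1 := by
          have h21 : q + 1 ∣ q * q - 1 := ⟨q - 1, (sq_sub_one q (by omega)).symm⟩
          have h22 : q * q - 1 ∣ q ^ n₀ - 1 := by
            have hpow : q ^ n₀ = (q * q) ^ t := by rw [ht]; ring
            rw [hpow]
            simpa using Nat.sub_dvd_pow_sub_pow (q * q) 1 t
          exact h21.trans h22
        exact hnotdvd (hq1dvd.trans hdvd1)
      · have hnodd : Odd n := hoddimp hpar
        have hb1 : r ^ k ∣ q ^ n + 1 := by
          have := Odd.nat_add_dvd_pow_add_pow q 1 hnodd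
          simpa using hq1dvd.trans this
        have hb2 : r ^ k ∣ q ^ n - 1 := hrkd.trans hdn
        have hb3 : r ^ k ∣ 2 := by
          have hsub := Nat.dvd_sub hb1 hb2
          have he : (q ^ n + 1) - (q ^ n - 1) = 2 := by
            have : 1 ≤ q ^ n := Nat.one_le_pow _ _ (by omega)
            omega
          rwa [he] at hsub
        have hle2 : r ^ k ≤ 2 := Nat.le_of_dvd (by norm_num) hb3
        have hr3 : 3 ≤ r := by
          have := hrp.two_le
          have := Nat.odd_iff.mp hrodd
          omega
        have hrk : r ≤ r ^ k := Nat.le_self_pow hk1.ne' r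
        omega

lemma partB2 {q d : ℕ} (hq : 2 ≤ q) (hd : 0 < d) (h1 : d ∣ (q - 1) * 2)
    (h2 : d ∣ q + 1) (h3 : ¬ d ∣ q - 1) : q % 4 = 3 := by
  have h4 : d ∣ 4 := by
    have ha : d ∣ 2 * (q + 1) := Dvd.dvd.mul_left h2 2
    have hb : d ∣ 2 * (q + 1) - (q - 1) * 2 := Nat.dvd_sub ha h1
    have he : 2 * (q + 1) - (q - 1) * 2 = 4 := by omega
    rwa [he] at hb
  have hle : d ≤ 4 := Nat.le_of_dvd (by norm_num) h4
  interval_cases d <;> omega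

set_option maxHeartbeats 1000000 in

open Polynomial in
theorem partA {F : Type*} [Field F] [Fintype F] {n : ℕ} (hn : 0 < n)
    (M : Matrix (Fin n) (Fin n) F) (hdet : M.det = 1)
    (hirr : ∀ W : Submodule F (Fin n → F), (∀ w ∈ W, M.mulVec w ∈ W) → W = ⊥ ∨ W = ⊤) :
    (M ^ (∑ i ∈ Finset.range n, (Fintype.card F) ^ i) = 1) ∧
    (∀ e, 0 < e → M ^ (Fintype.card F ^ e) = M → n ≤ e) := by
  classical
  set q := Fintype.card F with hq
  have hq2 : 2 ≤ q := Fintype.one_lt_card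
  haveI : Nonempty (Fin n) := ⟨⟨0, hn⟩⟩
  have h10 : (1 : Matrix (Fin n) (Fin n) F) ≠ 0 := by
    intro h
    have := congrFun (congrFun h ⟨0, hn⟩) ⟨0, hn⟩
    simp [Matrix.one_apply] at this
  haveI : Nontrivial (Matrix (Fin n) (Fin n) F) := nontrivial_of_ne 1 0 h10
  -- basic matrix tools
  have hzeroM : ∀ x : Matrix (Fin n) (Fin n) F, (∀ w, x.mulVec w = 0) → x = 0 := by
    intro x hx
    ext i j
    have h := congrFun (hx (Pi.single j 1)) i
    simpa using h
  have hkerM : ∀ x : Matrix (Fin n) (Fin n) F, M * x = x * M → x ≠ 0 →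
      ∀ w : Fin n → F, x.mulVec w = 0 → w = 0 := by
    intro x hcomm hx w hw
    have hinv : ∀ u ∈ LinearMap.ker x.mulVecLin, M.mulVec u ∈ LinearMap.ker x.mulVecLin := by
      intro u hu
      rw [LinearMap.mem_ker, Matrix.mulVecLin_apply] at hu ⊢
      rw [Matrix.mulVec_mulVec, ← hcomm, ← Matrix.mulVec_mulVec, hu, Matrix.mulVec_zero]
    rcases hirr _ hinv with h | h
    · have hwW : w ∈ LinearMap.ker x.mulVecLin := by
        rw [LinearMap.mem_ker, Matrix.mulVecLin_apply]; exact hw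
      rw [h] at hwW; simpa using hwW
    · exfalso; apply hx; apply hzeroM
      intro u
      have hu : u ∈ LinearMap.ker x.mulVecLin := h ▸ Submodule.mem_top
      rwa [LinearMap.mem_ker, Matrix.mulVecLin_apply] at hu
  have hcommP : ∀ f : Polynomial F, M * (aeval M f) = (aeval M f) * M := by
    intro f
    have h1 : M * aeval M f = aeval M (X * f) := by rw [map_mul, aeval_X]
    have h2 : aeval M f * M = aeval M (f * X) := by rw [map_mul, aeval_X]
    rw [h1, h2, mul_comm]
  -- minpoly irreducible
  have hint : IsIntegral F M := ⟨M.charpoly, M.charpoly_monic, M.aeval_self_charpoly⟩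
  set m := minpoly F M with hm
  have hm0 : m ≠ 0 := minpoly.ne_zero hint
  have hmdeg : 0 < m.natDegree := minpoly.natDegree_pos hint
  have hunit_iff : ∀ a : Polynomial F, a ≠ 0 → a.natDegree = 0 → IsUnit a := by
    intro a ha hd
    rw [Polynomial.eq_C_of_natDegree_eq_zero hd]
    refine Polynomial.isUnit_C.mpr (isUnit_iff_ne_zero.mpr ?_)
    intro h0
    apply ha
    rw [Polynomial.eq_C_of_natDegree_eq_zero hd, h0, map_zero]
  have haev_ne : ∀ a : Polynomial F, a ≠ 0 → a.natDegree < m.natDegree → aeval M a ≠ 0 := by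
    intro a ha hd h0
    have h1 := minpoly.degree_le_of_ne_zero F M ha h0
    have h2 := Polynomial.natDegree_le_natDegree h1
    rw [← hm] at h2
    omega
  have hmul_ne : ∀ x y : Matrix (Fin n) (Fin n) F, M * x = x * M → x ≠ 0 → y ≠ 0 →
      x * y ≠ 0 := by
    intro x y hcx hx hy hxy
    apply hy
    apply hzeroM
    intro w
    by_contra hw
    have h0 : x.mulVec (y.mulVec w) = 0 := by
      rw [Matrix.mulVec_mulVec, hxy, Matrix.zero_mulVec]
    exact hw (hkerM x hcx hx _ h0)
  have hirrm : Irreducible m := by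
    constructor
    · intro h
      have := Polynomial.natDegree_eq_zero_of_isUnit h
      omega
    · intro a b hab
      by_contra hcontra
      push_neg at hcontra
      obtain ⟨ha, hb⟩ := hcontra
      have ha0 : a ≠ 0 := fun h => hm0 (by rw [hab, h, zero_mul])
      have hb0 : b ≠ 0 := fun h => hm0 (by rw [hab, h, mul_zero])
      have hadeg : 0 < a.natDegree := by
        rcases Nat.eq_zero_or_pos a.natDegree with h | h
        · exact absurd (hunit_iff a ha0 h) ha
        · exact h
      have hbdeg : 0 < b.natDegree := by
        rcases Nat.eq_zero_or_pos b.natDegree with h | h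
        · exact absurd (hunit_iff b hb0 h) hb
        · exact h
      have hdegs : a.natDegree + b.natDegree = m.natDegree := by
        rw [hab, Polynomial.natDegree_mul ha0 hb0]
      have hane := haev_ne a ha0 (by omega)
      have hbne := haev_ne b hb0 (by omega)
      have : aeval M a * aeval M b = 0 := by
        rw [← map_mul, ← hab, hm]
        exact minpoly.aeval F M
      exact hmul_ne _ _ (hcommP a) hane hbne this
  haveI : Fact (Irreducible m) := ⟨hirrm⟩
  set L := AdjoinRoot m with hL
  have hideal : ∀ g ∈ Ideal.span ({m} : Set (Polynomial F)), (aeval M).toRingHom g = 0 := by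
    intro g hg
    rcases Ideal.mem_span_singleton.1 hg with ⟨y, rfl⟩
    show aeval M (m * y) = 0
    rw [map_mul, minpoly.aeval, zero_mul]
  set θ : L →+* Matrix (Fin n) (Fin n) F :=
    Ideal.Quotient.lift (Ideal.span ({m} : Set (Polynomial F))) (aeval M).toRingHom hideal with hθ
  have hθmk : ∀ g : Polynomial F, θ (AdjoinRoot.mk m g) = aeval M g := fun g =>
    Ideal.Quotient.lift_mk _ _ _
  have hθinj : Function.Injective θ := RingHom.injective θ
  have hθcomm : ∀ z : L, M * θ z = θ z * M := by
    intro z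
    induction z using AdjoinRoot.induction_on with
    | ih f => rw [hθmk]; exact hcommP f
  set α : L := AdjoinRoot.root m with hα
  have hθα : θ α = M := by
    rw [hα, AdjoinRoot.root, hθmk, aeval_X]
  -- the linear map φ
  set v : Fin n → F := Pi.single ⟨0, hn⟩ 1 with hv
  have hvne : v ≠ 0 := by
    intro h
    have h2 := congrFun h ⟨0, hn⟩
    rw [hv] at h2
    simp at h2
  set φ : L →ₗ[F] (Fin n → F) :=
    { toFun := fun z => (θ z).mulVec v
      map_add' := fun x y => by
        show (θ (x + y)).mulVec v = (θ x).mulVec v + (θ y).mulVec v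
        rw [map_add, Matrix.add_mulVec]
      map_smul' := fun c x => by
        obtain ⟨f, rfl⟩ := AdjoinRoot.mk_surjective x
        show (θ (c • AdjoinRoot.mk m f)).mulVec v = c • (θ (AdjoinRoot.mk m f)).mulVec v
        rw [AdjoinRoot.smul_mk, hθmk, hθmk, map_smul, Matrix.smul_mulVec] } with hφ
  have hφinj : Function.Injective φ := by
    rw [← LinearMap.ker_eq_bot, LinearMap.ker_eq_bot']
    intro z hz0
    by_contra hz
    have hθz : θ z ≠ 0 := fun h => hz (hθinj (by rw [h, map_zero]))
    exact hvne (hkerM (θ z) (hθcomm z) hθz v hz0)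
  have hφsur : Function.Surjective φ := by
    have hinv : ∀ w ∈ LinearMap.range φ, M.mulVec w ∈ LinearMap.range φ := by
      rintro w ⟨z, rfl⟩
      refine ⟨α * z, ?_⟩
      show (θ (α * z)).mulVec v = M.mulVec ((θ z).mulVec v)
      rw [map_mul, hθα, Matrix.mulVec_mulVec]
    rcases hirr _ hinv with h | h
    · exfalso
      have h1 : φ 1 ∈ LinearMap.range φ := ⟨1, rfl⟩
      rw [h] at h1
      have hφ1 : φ 1 = v := by
        show (θ 1).mulVec v = v
        rw [map_one, Matrix.one_mulVec]
      exact hvne (by rw [← hφ1]; simpa using h1)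
    · intro w
      have : w ∈ LinearMap.range φ := h ▸ Submodule.mem_top
      exact this
  haveI : Finite L := Finite.of_injective φ hφinj
  haveI : Fintype L := Fintype.ofFinite L
  have hcardL : Fintype.card L = q ^ n := by
    rw [Fintype.card_congr (LinearEquiv.ofBijective φ ⟨hφinj, hφsur⟩).toEquiv]
    simp [hq]
  -- characteristic
  set p := ringChar F with hp
  haveI : CharP F p := ringChar.charP F
  obtain ⟨s, hpprime, hcardF⟩ := FiniteField.card F p
  have hqps : q = p ^ (s : ℕ) := hcardF
  haveI : Fact p.Prime := ⟨hpprime⟩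
  haveI : CharP L p := charP_of_injective_algebraMap (algebraMap F L).injective p
  haveI : ExpChar L p := ExpChar.prime hpprime
  have hfixF : ∀ (c : F) (e : ℕ), c ^ q ^ e = c := by
    intro c e
    induction e with
    | zero => simp
    | succ e ih =>
      rw [pow_succ, pow_mul, ih, hq]
      exact FiniteField.pow_card c
  have hΨcom : ∀ (e : ℕ) (c : F),
      (iterateFrobenius L p (s * e)) (algebraMap F L c) = algebraMap F L c := by
    intro e c
    rw [iterateFrobenius_def, ← map_pow]
    congr 1
    rw [pow_mul, ← hqps]
    exact hfixF c e
  set Ψ : ℕ → (L →ₐ[F] L) := fun e =>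
    { toRingHom := iterateFrobenius L p (s * e), commutes' := hΨcom e } with hΨdef
  have hΨ : ∀ (e : ℕ) (x : L), Ψ e x = x ^ q ^ e := by
    intro e x
    show iterateFrobenius L p (s * e) x = x ^ q ^ e
    rw [iterateFrobenius_def, pow_mul, ← hqps]
  have hallfix : ∀ e : ℕ, α ^ q ^ e = α → ∀ x : L, x ^ q ^ e = x := by
    intro e hαe x
    obtain ⟨f, rfl⟩ := AdjoinRoot.mk_surjective x
    have hxf : AdjoinRoot.mk m f = aeval α f := (AdjoinRoot.aeval_eq f).symm
    rw [hxf, ← hΨ e, ← Polynomial.aeval_algHom_apply, hΨ e α, hαe]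
  have hfact1 : ∀ e, 0 < e → α ^ q ^ e = α → n ≤ e := by
    intro e he hαe
    set P : Polynomial L := X ^ q ^ e - X with hP
    have hPne : P ≠ 0 := by
      intro h
      rw [hP, sub_eq_zero] at h
      have h2 := congrArg natDegree h
      rw [natDegree_X_pow, natDegree_X] at h2
      have h3 : 2 ≤ q ^ e := le_trans hq2 (Nat.le_self_pow he.ne' q)
      omega
    have hroots : ∀ x : L, x ∈ P.roots := by
      intro x
      rw [mem_roots hPne]
      show P.IsRoot x
      rw [hP, IsRoot, eval_sub, eval_pow, eval_X, hallfix e hαe x, sub_self]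
    have hcard1 : (Finset.univ : Finset L).val ≤ P.roots := by
      rw [Multiset.le_iff_count]
      intro x
      rw [Multiset.count_eq_one_of_mem Finset.univ.nodup (Finset.mem_univ x)]
      exact Multiset.one_le_count_iff_mem.mpr (hroots x)
    have hcard2 : Fintype.card L ≤ q ^ e := by
      have hc1 := Multiset.card_le_card hcard1
      have hc2 := P.card_roots'
      have hc3 : P.natDegree ≤ q ^ e := by
        rw [hP]
        refine le_trans (Polynomial.natDegree_sub_le _ _) ?_
        rw [natDegree_X_pow, natDegree_X]
        have h4 : 1 ≤ q ^ e := Nat.one_le_pow _ _ (by omega)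
        omega
      have hc4 : Multiset.card (Finset.univ : Finset L).val = Fintype.card L := rfl
      omega
    rw [hcardL] at hcard2
    exact (Nat.pow_le_pow_iff_right (by omega)).mp hcard2
  have hα0 : α ≠ 0 := by
    intro h
    have hM0 : M = 0 := by rw [← hθα, h, map_zero]
    rw [hM0, Matrix.det_zero] at hdet
    exact one_ne_zero hdet.symm
  have hdistinct : ∀ i j : ℕ, i < j → j < n → α ^ q ^ i ≠ α ^ q ^ j := by
    intro i j hij hjn hEq
    have hpow : q ^ (j - i) * q ^ i = q ^ j := by
      rw [← pow_add]
      congr 1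
      omega
    have h1 : (α ^ q ^ (j - i)) ^ q ^ i = α ^ q ^ j := by
      rw [← pow_mul, hpow]
    have h2 : iterateFrobenius L p (s * i) (α ^ q ^ (j - i))
        = iterateFrobenius L p (s * i) α := by
      rw [iterateFrobenius_def, iterateFrobenius_def, pow_mul, ← hqps, h1, ← hEq]
    have h3 : α ^ q ^ (j - i) = α := iterateFrobenius_inj L p (s * i) h2
    have h4 := hfact1 (j - i) (by omega) h3
    omega
  set cp := M.charpoly with hcp
  have hmonic : cp.Monic := M.charpoly_monic
  have hdegcp : cp.natDegree = n := by rw [hcp, M.charpoly_natDegree_eq_dim, Fintype.card_fin]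
  set P : Polynomial L := cp.map (algebraMap F L) with hP
  have hPmonic : P.Monic := hmonic.map _
  have hPdeg : P.natDegree = n := by rw [hP, hmonic.natDegree_map, hdegcp]
  have hPne : P ≠ 0 := hPmonic.ne_zero
  have hαroot : aeval α cp = 0 := by
    rw [hα, AdjoinRoot.aeval_eq, AdjoinRoot.mk_eq_zero]
    exact minpoly.dvd F M M.aeval_self_charpoly
  have hProot : ∀ i : ℕ, (α ^ q ^ i) ∈ P.roots := by
    intro i
    rw [mem_roots hPne]
    show P.IsRoot (α ^ q ^ i)
    rw [IsRoot, hP, eval_map, ← aeval_def, ← hΨ i α, Polynomial.aeval_algHom_apply, hαroot,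
      map_zero]
  set ms : Multiset L := (Multiset.range n).map (fun i => α ^ q ^ i) with hms
  have hmsnodup : ms.Nodup := by
    rw [hms]
    refine Multiset.Nodup.map_on ?_ (Multiset.nodup_range n)
    intro i hi j hj hEq
    rw [Multiset.mem_range] at hi hj
    rcases lt_trichotomy i j with h | h | h
    · exact absurd hEq (hdistinct i j h hj)
    · exact h
    · exact absurd hEq.symm (hdistinct j i h hi)
  have hle : ms ≤ P.roots := by
    rw [Multiset.le_iff_count]
    intro x
    by_cases hx : x ∈ ms
    · rw [Multiset.count_eq_one_of_mem hmsnodup hx]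
      obtain ⟨i, hi, rfl⟩ := Multiset.mem_map.mp hx
      exact Multiset.one_le_count_iff_mem.mpr (hProot i)
    · rw [Multiset.count_eq_zero_of_notMem hx]
      exact Nat.zero_le _
  have hmscard : Multiset.card ms = n := by rw [hms]; simp
  have hrootseq : ms = P.roots := by
    refine Multiset.eq_of_le_of_card_le hle ?_
    rw [hmscard]
    exact hPdeg ▸ P.card_roots'
  have hprodP : (P.roots.map (fun a => X - C a)).prod = P :=
    Polynomial.prod_multiset_X_sub_C_of_monic_of_roots_card_eq hPmonic
      (by rw [← hrootseq, hmscard, hPdeg])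
  have hevalP : P.eval 0 = (-1 : L) ^ n * α ^ (∑ i ∈ Finset.range n, q ^ i) := by
    rw [← hprodP, ← hrootseq, hms, Multiset.map_map, Polynomial.eval_multiset_prod,
      Multiset.map_map]
    have hfun : ∀ i ∈ Multiset.range n,
        (Polynomial.eval 0 ∘ (fun a => X - C a) ∘ fun i => α ^ q ^ i) i
          = (-1) * (α ^ q ^ i) := by
      intro i _
      simp [neg_one_mul]
    rw [Multiset.map_congr rfl hfun]
    have hstep : ((Multiset.range n).map (fun i => (-1) * (α ^ q ^ i))).prod
        = ∏ i ∈ Finset.range n, ((-1) * (α ^ q ^ i)) := by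
      rw [Finset.prod_eq_multiset_prod, Finset.range_val]
    rw [hstep, Finset.prod_mul_distrib, Finset.prod_const, Finset.card_range,
      Finset.prod_pow_eq_pow_sum]
  have hcoeff : cp.coeff 0 = (-1 : F) ^ n := by
    have h := M.det_eq_sign_charpoly_coeff
    rw [hdet, Fintype.card_fin] at h
    have h2 : ((-1 : F) ^ n) * ((-1 : F) ^ n) = 1 := by
      rw [← pow_add]
      exact Even.neg_one_pow ⟨n, rfl⟩
    calc cp.coeff 0 = ((-1 : F) ^ n * (-1 : F) ^ n) * cp.coeff 0 := by rw [h2, one_mul]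
      _ = (-1 : F) ^ n * ((-1 : F) ^ n * cp.coeff 0) := by ring
      _ = (-1 : F) ^ n := by rw [← h, mul_one]
  have hevalP2 : P.eval 0 = (-1 : L) ^ n := by
    rw [← Polynomial.coeff_zero_eq_eval_zero, hP, Polynomial.coeff_map, hcoeff, map_pow,
      map_neg, map_one]
  have hnorm : α ^ (∑ i ∈ Finset.range n, q ^ i) = 1 := by
    have h := hevalP.symm.trans hevalP2
    have hu : ((-1 : L)) ^ n ≠ 0 := pow_ne_zero n (neg_ne_zero.mpr one_ne_zero)
    exact mul_left_cancel₀ hu (by rw [h, mul_one])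
  constructor
  · have h := congrArg θ hnorm
    rw [map_pow, hθα, map_one] at h
    exact h
  · intro e he hMe
    apply hfact1 e he
    apply hθinj
    rw [map_pow, hθα]
    exact hMe


/-- Let `F` be a finite field with `q` elements and `A ∈ SL(n, F)` such that
`A^(q²-1)` is scalar and `⟨A⟩` acts irreducibly on `Fⁿ`.  Then `n ∈ {1, 2}`; and if
moreover `n = 2` and `A^(q-1)` is scalar, then `q ≡ 3 (mod 4)`. -/
theorem irreducible_matrix_low_dimension (F : Type*) [Field F] [Fintype F]
    (q : ℕ) (hq : q = Fintype.card F) (n : ℕ) (hn : 0 < n)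
    (A : Matrix.SpecialLinearGroup (Fin n) F)
    (hcen : A ^ (q ^ 2 - 1) ∈ Subgroup.center (Matrix.SpecialLinearGroup (Fin n) F))
    (hirr : ∀ W : Submodule F (Fin n → F),
      (∀ w ∈ W, (A : Matrix (Fin n) (Fin n) F).mulVec w ∈ W) → W = ⊥ ∨ W = ⊤) :
    (n = 1 ∨ n = 2) ∧
    (n = 2 → A ^ (q - 1) ∈ Subgroup.center (Matrix.SpecialLinearGroup (Fin n) F) →
      q % 4 = 3) := by
  classical
  have hq2 : 2 ≤ q := by rw [hq]; exact Fintype.one_lt_card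
  obtain ⟨hnorm, hfix⟩ := partA hn (A : Matrix (Fin n) (Fin n) F) A.property hirr
  rw [← hq] at hnorm hfix
  set d := orderOf A with hd
  have hdpos : 0 < d := orderOf_pos A
  have hpow : ∀ m : ℕ, A ^ m = 1 ↔ (A : Matrix (Fin n) (Fin n) F) ^ m = 1 := by
    intro m
    constructor
    · intro h
      have h2 := congrArg (fun B : Matrix.SpecialLinearGroup (Fin n) F =>
        (B : Matrix (Fin n) (Fin n) F)) h
      simpa [Matrix.SpecialLinearGroup.coe_pow] using h2
    · intro h
      apply Subtype.ext
      simpa [Matrix.SpecialLinearGroup.coe_pow] using h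
  have h2 : d ∣ ∑ i ∈ Finset.range n, q ^ i := orderOf_dvd_of_pow_eq_one ((hpow _).mpr hnorm)
  have h3 : ∀ e, 0 < e → d ∣ q ^ e - 1 → n ≤ e := by
    intro e he hdvd
    apply hfix e he
    have hM : (A : Matrix (Fin n) (Fin n) F) ^ (q ^ e - 1) = 1 :=
      (hpow _).mp (orderOf_dvd_iff_pow_eq_one.mp hdvd)
    have hqe : q ^ e - 1 + 1 = q ^ e := by
      have h4 : 1 ≤ q ^ e := Nat.one_le_pow _ _ (by omega)
      omega
    rw [← hqe, pow_succ, hM, one_mul]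
  have hcen_pow : ∀ (k : ℕ) (r : F), Matrix.scalar (Fin n) r = (A ^ k : Matrix.SpecialLinearGroup (Fin n) F) →
      r ^ (q - 1) = 1 → A ^ (k * (q - 1)) = 1 := by
    intro k r hrA hr
    rw [hpow, pow_mul]
    have hMc : ((A ^ k : Matrix.SpecialLinearGroup (Fin n) F) : Matrix (Fin n) (Fin n) F)
        = Matrix.scalar (Fin n) r := hrA.symm
    rw [← Matrix.SpecialLinearGroup.coe_pow, hMc, ← map_pow, hr, map_one]
  have h1 : d ∣ (q * q - 1) * (q - 1) := by
    obtain ⟨r, hrn, hrA⟩ := Matrix.SpecialLinearGroup.mem_center_iff.mp hcen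
    have hr0 : r ≠ 0 := by
      intro h0
      rw [h0, Fintype.card_fin] at hrn
      rw [zero_pow hn.ne'] at hrn
      exact zero_ne_one hrn
    have hrq : r ^ (q - 1) = 1 := by
      have h := FiniteField.pow_card_sub_one_eq_one r hr0
      rwa [← hq] at h
    have hA1 : A ^ ((q ^ 2 - 1) * (q - 1)) = 1 := hcen_pow _ r hrA hrq
    have := orderOf_dvd_of_pow_eq_one hA1
    rwa [pow_two] at this
  have hn2 : n ≤ 2 := partB hq2 hdpos h1 h2 h3
  constructor
  · omega
  · intro hne2 hcen2
    subst hne2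
    obtain ⟨r, hrn, hrA⟩ := Matrix.SpecialLinearGroup.mem_center_iff.mp hcen2
    have hr2 : r ^ 2 = 1 := by rwa [Fintype.card_fin] at hrn
    have hA1 : A ^ ((q - 1) * 2) = 1 := by
      rw [hpow, pow_mul, ← Matrix.SpecialLinearGroup.coe_pow, ← hrA, ← map_pow, hr2, map_one]
    have hb1 : d ∣ (q - 1) * 2 := orderOf_dvd_of_pow_eq_one hA1
    have hb2 : d ∣ q + 1 := by
      have hsum : (∑ i ∈ Finset.range 2, q ^ i) = 1 + q := by
        simp [Finset.sum_range_succ]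
      rw [hsum] at h2
      rwa [Nat.add_comm] at h2
    have hb3 : ¬ d ∣ q - 1 := by
      intro hdd
      have := h3 1 one_pos (by simpa using hdd)
      omega
    exact partB2 hq2 hdpos hb1 hb2 hb3
end

section
/- Let F be a finite field with q elements, let n ≥ 2, with q ≥ 4 if n = 2, let H = SL(n,F), and let X be a one-dimensional F-subspace of F^n. Let H_X denote the stabiliser of X in H, i.e., the subgroup of all A ∈ H with A·X = X. Then the centraliser of H_X in H equals the center Z(H) of H: every element of H commuting with all elements of H_X is a scalar matrix. -/
open Matrix Submodule

namespace SLCentralizerAux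

variable {F : Type*} [Field F] {n : ℕ}

lemma vecMulVec_mulVec' (w u x : Fin n → F) :
    vecMulVec w u *ᵥ x = (u ⬝ᵥ x) • w := by
  ext i
  simp [vecMulVec_apply, mulVec, dotProduct, Finset.mul_sum, mul_comm, mul_assoc, mul_left_comm]

lemma mul_vecMulVec (M : Matrix (Fin n) (Fin n) F) (w u : Fin n → F) :
    M * vecMulVec w u = vecMulVec (M *ᵥ w) u := by
  ext i j
  simp [mul_apply, vecMulVec_apply, mulVec, dotProduct, Finset.sum_mul, mul_assoc]

lemma vecMulVec_mul (M : Matrix (Fin n) (Fin n) F) (w u : Fin n → F) :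
    vecMulVec w u * M = vecMulVec w (u ᵥ* M) := by
  ext i j
  simp [mul_apply, vecMulVec_apply, vecMul, dotProduct, Finset.mul_sum, mul_assoc]

lemma det_transvection (w u : Fin n → F) (h : u ⬝ᵥ w = 0) :
    (1 + vecMulVec w u).det = 1 := by
  rw [vecMulVec_eq (Fin 1), det_one_add_replicateCol_mul_replicateRow, h, add_zero]

lemma exists_eigen {M : Matrix (Fin n) (Fin n) F} {w u : Fin n → F} (hu : u ≠ 0)
    (hc : vecMulVec (M *ᵥ w) u = vecMulVec w (u ᵥ* M)) :
    ∃ c : F, M *ᵥ w = c • w := by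
  obtain ⟨j, hj⟩ := Function.ne_iff.mp hu
  simp only [Pi.zero_apply] at hj
  refine ⟨(u ᵥ* M) j * (u j)⁻¹, funext fun i => ?_⟩
  have h1 : (M *ᵥ w) i * u j = w i * (u ᵥ* M) j := by
    simpa [vecMulVec_apply] using congrFun (congrFun hc i) j
  have h2 : (M *ᵥ w) i = w i * ((u ᵥ* M) j * (u j)⁻¹) := by
    field_simp
    linear_combination h1
  simpa [mul_comm, mul_left_comm] using h2

lemma eq_smul_one {M : Matrix (Fin n) (Fin n) F} (hn : 0 < n)
    (h : ∀ w, ∃ c : F, M *ᵥ w = c • w) : ∃ c : F, M = c • (1 : Matrix (Fin n) (Fin n) F) := by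
  have : NeZero n := ⟨hn.ne'⟩
  choose c hc using fun j : Fin n => h (Pi.single j 1)
  have hd : ∀ i j, M i j = if i = j then c j else 0 := by
    intro i j
    have h1 := congrFun (hc j) i
    rw [mulVec_single_one] at h1
    rcases eq_or_ne i j with rfl | hij
    · simpa using h1
    · simpa [Pi.single_apply, (Ne.symm hij), hij] using h1
  have hcc : ∀ i j : Fin n, c i = c j := by
    intro i j
    rcases eq_or_ne i j with rfl | hij
    · rfl
    obtain ⟨d, hd2⟩ := h (Pi.single i 1 + Pi.single j 1)
    rw [mulVec_add] at hd2
    have hi := congrFun hd2 i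
    have hjv := congrFun hd2 j
    simp [hc i, hc j, Pi.single_apply, hij, Ne.symm hij] at hi hjv
    rw [hi, hjv]
  refine ⟨c 0, ?_⟩
  ext i j
  rw [hd i j]
  rcases eq_or_ne i j with rfl | hij
  · simp [one_apply, hcc i 0]
  · simp [one_apply, hij]

lemma exists_perp₂ (hn : 3 ≤ n) (v w : Fin n → F) :
    ∃ u : Fin n → F, u ≠ 0 ∧ u ⬝ᵥ v = 0 ∧ u ⬝ᵥ w = 0 := by
  let f : (Fin n → F) →ₗ[F] F × F :=
    { toFun := fun u => (u ⬝ᵥ v, u ⬝ᵥ w)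
      map_add' := fun x y => by simp [add_dotProduct, Prod.ext_iff]
      map_smul' := fun c x => by simp [smul_dotProduct, Prod.ext_iff, smul_eq_mul] }
  have hninj : ¬ Function.Injective f := by
    intro hinj
    have h1 := LinearMap.finrank_le_finrank_of_injective hinj
    simp only [Module.finrank_pi, Fintype.card_fin] at h1
    rw [Module.finrank_prod, Module.finrank_self] at h1
    omega
  rw [← LinearMap.ker_eq_bot] at hninj
  obtain ⟨u, hu, hu0⟩ := Submodule.exists_mem_ne_zero_of_ne_bot hninj
  rw [LinearMap.mem_ker] at hu
  have h1 : u ⬝ᵥ v = 0 ∧ u ⬝ᵥ w = 0 := by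
    have := hu
    simpa [f, Prod.ext_iff] using this
  exact ⟨u, hu0, h1.1, h1.2⟩

lemma exists_perp₁ (hn : 2 ≤ n) (v : Fin n → F) :
    ∃ u : Fin n → F, u ≠ 0 ∧ u ⬝ᵥ v = 0 := by
  let f : (Fin n → F) →ₗ[F] F :=
    { toFun := fun u => u ⬝ᵥ v
      map_add' := fun x y => by simp [add_dotProduct]
      map_smul' := fun c x => by simp [smul_dotProduct, smul_eq_mul] }
  have hninj : ¬ Function.Injective f := by
    intro hinj
    have h1 := LinearMap.finrank_le_finrank_of_injective hinj
    simp only [Module.finrank_pi, Fintype.card_fin, Module.finrank_self] at h1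
    omega
  rw [← LinearMap.ker_eq_bot] at hninj
  obtain ⟨u, hu, hu0⟩ := Submodule.exists_mem_ne_zero_of_ne_bot hninj
  rw [LinearMap.mem_ker] at hu
  exact ⟨u, hu0, hu⟩

lemma mem_center_of_eigen (hn : 0 < n) (B : Matrix.SpecialLinearGroup (Fin n) F)
    (h : ∀ w, ∃ c : F, (B : Matrix (Fin n) (Fin n) F) *ᵥ w = c • w) :
    B ∈ Subgroup.center (Matrix.SpecialLinearGroup (Fin n) F) := by
  obtain ⟨c, hc⟩ := eq_smul_one hn h
  rw [Matrix.SpecialLinearGroup.mem_center_iff]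
  refine ⟨c, ?_, ?_⟩
  · have hdet := B.property
    rw [hc, det_smul, det_one, mul_one, Fintype.card_fin] at hdet
    simpa [Fintype.card_fin] using hdet
  · rw [hc, scalar_apply, smul_one_eq_diagonal]

end SLCentralizerAux

open SLCentralizerAux Matrix Submodule in
/-- Let `F` be a finite field with `q` elements, `n ≥ 2` with `q ≥ 4` if `n = 2`,
`H = SL(n, F)`, and `X` a one-dimensional subspace of `Fⁿ`.  Then the centraliser in
`H` of the setwise stabiliser `H_X` of `X` is exactly the centre of `H`. -/
theorem centralizer_of_line_stabilizer_eq_center (F : Type*) [Field F] [Fintype F]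
    (n : ℕ) (hn : 2 ≤ n) (hq : n = 2 → 4 ≤ Fintype.card F)
    (X : Submodule F (Fin n → F)) (hX : Module.finrank F X = 1)
    (B : Matrix.SpecialLinearGroup (Fin n) F) :
    (∀ A : Matrix.SpecialLinearGroup (Fin n) F,
        X.map (Matrix.mulVecLin (A : Matrix (Fin n) (Fin n) F)) = X → B * A = A * B) ↔
      B ∈ Subgroup.center (Matrix.SpecialLinearGroup (Fin n) F) := by
  constructor
  · intro h
    -- find a spanning vector of X
    obtain ⟨v', hv'0, hv'⟩ := finrank_eq_one_iff'.mp hX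
    set v : Fin n → F := (v' : Fin n → F) with hvdef
    have hv0 : v ≠ 0 := fun hc => hv'0 (Subtype.ext hc)
    have hv : X = span F {v} := by
      apply le_antisymm
      · intro x hx
        obtain ⟨c, hc⟩ := hv' ⟨x, hx⟩
        have : c • v = x := congrArg Subtype.val hc
        rw [← this]
        exact smul_mem _ _ (subset_span rfl)
      · rw [span_le, Set.singleton_subset_iff]
        exact v'.2
    set M : Matrix (Fin n) (Fin n) F := (B : Matrix (Fin n) (Fin n) F) with hM
    -- commutation with transvections stabilising X
    have hVstab : ∀ (w u : Fin n → F), u ⬝ᵥ v = 0 → u ⬝ᵥ w = 0 →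
        M * vecMulVec w u = vecMulVec w u * M := by
      intro w u huv huw
      have hA := h ⟨1 + vecMulVec w u, det_transvection w u huw⟩ ?_
      · have h2 := congrArg Subtype.val hA
        change (B : Matrix (Fin n) (Fin n) F) * (1 + vecMulVec w u) = (1 + vecMulVec w u) * (B : Matrix (Fin n) (Fin n) F) at h2
        rw [mul_add, add_mul, mul_one, one_mul] at h2
        rw [hM]
        exact add_left_cancel h2
      · rw [hv, Submodule.map_span, Set.image_singleton]
        have hfix : Matrix.mulVecLin ((⟨1 + vecMulVec w u, det_transvection w u huw⟩ :
            Matrix.SpecialLinearGroup (Fin n) F) : Matrix (Fin n) (Fin n) F) v = v := by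
          show Matrix.mulVecLin (1 + vecMulVec w u) v = v
          rw [mulVecLin_apply, add_mulVec, one_mulVec, vecMulVec_mulVec', huv]
          simp
        rw [hfix]
    by_cases h3 : 3 ≤ n
    · -- case n ≥ 3
      apply mem_center_of_eigen (by omega)
      intro w
      obtain ⟨u, hu0, huv, huw⟩ := exists_perp₂ h3 v w
      have hc := hVstab w u huv huw
      rw [SLCentralizerAux.mul_vecMulVec, SLCentralizerAux.vecMulVec_mul] at hc
      exact exists_eigen hu0 hc
    · -- case n = 2
      have hn2 : n = 2 := by omega
      subst hn2
      have hcard := hq rfl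
      obtain ⟨u, hu0, huv⟩ := exists_perp₁ (le_refl 2) v
      -- B fixes the line spanned by v
      obtain ⟨lam, hMv⟩ : ∃ c : F, M *ᵥ v = c • v := by
        have hc := hVstab v u huv huv
        rw [SLCentralizerAux.mul_vecMulVec, SLCentralizerAux.vecMulVec_mul] at hc
        exact exists_eigen hu0 hc
      -- u is a left eigenvector
      have hcomm := hVstab v u huv huv
      rw [SLCentralizerAux.mul_vecMulVec, SLCentralizerAux.vecMulVec_mul, hMv] at hcomm
      obtain ⟨i0, hi0⟩ := Function.ne_iff.mp hv0
      simp only [Pi.zero_apply] at hi0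
      have hUB : u ᵥ* M = lam • u := by
        funext j
        have h1 := congrFun (congrFun hcomm i0) j
        simp only [vecMulVec_apply, Pi.smul_apply, smul_eq_mul] at h1 ⊢
        have h2 : v i0 * (u ᵥ* M) j = v i0 * (lam * u j) := by linear_combination -h1
        exact mul_left_cancel₀ hi0 h2
      -- a vector outside X
      obtain ⟨w₀, hw₀⟩ : ∃ w₀, w₀ ∉ X := by
        by_contra hc
        push_neg at hc
        have hX2 : X = ⊤ := eq_top_iff'.mpr hc
        rw [hX2, finrank_top] at hX
        simp [Module.finrank_pi] at hX
      have li : LinearIndependent F ![w₀, v] := by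
        rw [linearIndependent_fin2]
        refine ⟨by simpa using hv0, fun a ha => ?_⟩
        apply hw₀
        rw [hv]
        simp only [Matrix.cons_val_one, Matrix.head_cons, Matrix.cons_val_zero] at ha
        rw [← ha]
        exact smul_mem _ _ (subset_span rfl)
      have hcardeq : Fintype.card (Fin 2) = Module.finrank F (Fin 2 → F) := by
        simp [Module.finrank_pi]
      set b : Module.Basis (Fin 2) F (Fin 2 → F) :=
        basisOfLinearIndependentOfCardEqFinrank li hcardeq with hbdef
      have hb : ⇑b = ![w₀, v] := coe_basisOfLinearIndependentOfCardEqFinrank li hcardeq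
      have hb0 : b 0 = w₀ := by rw [hb]; rfl
      have hb1 : b 1 = v := by rw [hb]; rfl
      -- a scalar with a ≠ 0, a² ≠ 1
      letI : DecidableEq F := Classical.decEq F
      obtain ⟨a, ha0, haa⟩ : ∃ a : F, a ≠ 0 ∧ a * a ≠ 1 := by
        have h3 : ({0, 1, -1} : Finset F).card ≤ 3 := by
          refine le_trans (Finset.card_insert_le _ _) ?_
          refine Nat.succ_le_succ (le_trans (Finset.card_insert_le _ _) ?_)
          simp
        have hne : (({0, 1, -1} : Finset F)ᶜ).Nonempty := by
          rw [← Finset.card_pos, Finset.card_compl]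
          omega
        obtain ⟨a, ha⟩ := hne
        simp only [Finset.mem_compl, Finset.mem_insert, Finset.mem_singleton, not_or] at ha
        refine ⟨a, ha.1, fun h1 => ?_⟩
        rcases mul_self_eq_one_iff.mp h1 with h | h
        · exact ha.2.1 h
        · exact ha.2.2 h
      -- the diagonal-type element D
      set D_lin : (Fin 2 → F) →ₗ[F] (Fin 2 → F) := b.constr F ![a⁻¹ • w₀, a • v] with hDdef
      have hDb : ∀ j, D_lin (b j) = ![a⁻¹, a] j • b j := by
        intro j
        rw [hDdef, Module.Basis.constr_basis]
        fin_cases j <;> simp [hb]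
      set D_mat : Matrix (Fin 2) (Fin 2) F := LinearMap.toMatrix' D_lin with hDmatdef
      have hmat : LinearMap.toMatrix b b D_lin = Matrix.diagonal ![a⁻¹, a] := by
        ext i j
        rw [LinearMap.toMatrix_apply, hDb j, _root_.map_smul, b.repr_self]
        fin_cases i <;> fin_cases j <;>
          simp [Matrix.diagonal]
      have hDdet : D_mat.det = 1 := by
        rw [hDmatdef, LinearMap.det_toMatrix']
        rw [← LinearMap.det_toMatrix b, hmat, det_diagonal]
        simp [inv_mul_cancel₀ ha0]
      have hDapp : ∀ x, D_mat *ᵥ x = D_lin x := by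
        intro x
        rw [← mulVecLin_apply, hDmatdef, ← Matrix.toLin'_apply', Matrix.toLin'_toMatrix']
      have hAD := h ⟨D_mat, hDdet⟩ ?_
      swap
      · rw [hv, Submodule.map_span, Set.image_singleton]
        have : Matrix.mulVecLin ((⟨D_mat, hDdet⟩ :
            Matrix.SpecialLinearGroup (Fin 2) F) : Matrix (Fin 2) (Fin 2) F) v = a • v := by
          show Matrix.mulVecLin D_mat v = a • v
          rw [mulVecLin_apply, hDapp, ← hb1, hDb]
          simp [hb1]
        rw [this]
        exact span_singleton_smul_eq (isUnit_iff_ne_zero.mpr ha0) v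
      -- extract matrix commutation with D
      have hADm : M * D_mat = D_mat * M := by
        have h2 := congrArg Subtype.val hAD
        exact h2
      -- decompose M *ᵥ w₀ in the basis
      set α : F := b.repr (M *ᵥ w₀) 0 with hαdef
      set β : F := b.repr (M *ᵥ w₀) 1 with hβdef
      have hMw : M *ᵥ w₀ = α • b 0 + β • b 1 := by
        have hs := b.sum_repr (M *ᵥ w₀)
        rw [Fin.sum_univ_two] at hs
        exact hs.symm
      -- apply commutation to w₀
      have heq : M *ᵥ (D_mat *ᵥ w₀) = D_mat *ᵥ (M *ᵥ w₀) := by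
        rw [mulVec_mulVec, mulVec_mulVec, hADm]
      have hD0' : D_lin w₀ = a⁻¹ • w₀ := by
        rw [← hb0, hDb 0]
        simp
      have hL' : M *ᵥ (D_mat *ᵥ w₀) = (a⁻¹ * α) • b 0 + (a⁻¹ * β) • b 1 := by
        rw [hDapp, hD0', mulVec_smul, hMw]
        simp [smul_add, smul_smul]
      have hR : D_mat *ᵥ (M *ᵥ w₀) = (a⁻¹ * α) • b 0 + (a * β) • b 1 := by
        rw [hDapp, hMw, map_add, _root_.map_smul, _root_.map_smul, hDb 0, hDb 1]
        simp [smul_smul, mul_comm]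
      have h5 : (a⁻¹ * α) • b 0 + (a⁻¹ * β) • b 1 = (a⁻¹ * α) • b 0 + (a * β) • b 1 := by
        rw [← hL', ← hR, heq]
      have hfin : a⁻¹ * β = a * β := by
        have h6 := congrArg (fun x => b.repr x 1) h5
        simpa [b.repr_self, Finsupp.single_apply] using h6
      have hβ0 : β = 0 := by
        by_contra hβ
        apply haa
        have h2 : β = a * (a * β) := by
          calc β = a * (a⁻¹ * β) := by field_simp
          _ = a * (a * β) := by rw [hfin]
        have h7 : β * 1 = β * (a * a) := by linear_combination h2
        exact (mul_left_cancel₀ hβ h7).symm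
      have hMw0 : M *ᵥ w₀ = α • w₀ := by
        rw [hMw, hβ0, hb0]
        simp
      -- show α = lam
      have hne : u ⬝ᵥ w₀ ≠ 0 := by
        intro h0
        apply hu0
        funext k
        have hdec := b.sum_repr (Pi.single k 1)
        rw [Fin.sum_univ_two, hb0, hb1] at hdec
        have : u ⬝ᵥ (Pi.single k (1:F)) = 0 := by
          rw [← hdec]
          simp [dotProduct_add, dotProduct_smul, huv, h0, smul_eq_mul]
        simpa [dotProduct_single] using this
      have hαlam : α = lam := by
        have h1 : u ⬝ᵥ (M *ᵥ w₀) = lam * (u ⬝ᵥ w₀) := by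
          rw [dotProduct_mulVec, hUB]
          simp [smul_dotProduct, smul_eq_mul]
        rw [hMw0] at h1
        simp only [dotProduct_smul, smul_eq_mul] at h1
        exact mul_right_cancel₀ hne h1
      -- conclude: every vector is an eigenvector with eigenvalue lam
      apply mem_center_of_eigen (by norm_num)
      intro w
      refine ⟨lam, ?_⟩
      rw [hM] at hMw0 hMv
      have hdec := b.sum_repr w
      rw [Fin.sum_univ_two, hb0, hb1] at hdec
      rw [← hdec]
      rw [mulVec_add, mulVec_smul, mulVec_smul, hMw0, hMv, hαlam]
      rw [smul_add]
      rw [smul_smul, smul_smul, smul_smul, smul_smul]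
      ring_nf
  · intro hB A _
    exact (Subgroup.mem_center_iff.mp hB A).symm
end
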